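/- arXiv:2206.05084 — 7 statements merged into one kernel-verified Lean document; each statement's English description precedes it below -/
import Mathlib

section
/- Let π: X → Y be a surjective continuous map between two compact metrizable spaces and let π̃: M(X) → M(Y) be the induced map (pushforward of measures). Then π is open if and only if π̃ is open. -/
open MeasureTheory Topology Filter Set
open scoped ENNReal NNReal

/-- The pushforward map `M(X) → M(Y)` induced by a measurable map `f : X → Y`,
`(pushPM f hf μ)(B) = μ(f⁻¹ B)`. -/
noncomputable def pushPM {X Y : Type*} [MeasurableSpace X] [MeasurableSpace Y]
    (f : X → Y) (hf : Measurable f) (μ : ProbabilityMeasure X) : ProbabilityMeasure Y :=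
  ⟨μ.toMeasure.map f, Measure.isProbabilityMeasure_map hf.aemeasurable⟩


section AuxOpenMapMeasures
open Metric

section Sec
variable {Z Y : Type*} [MetricSpace Z] [CompactSpace Z]
  [MeasurableSpace Z] [BorelSpace Z]
  [MetricSpace Y] [MeasurableSpace Y] [BorelSpace Y]

open scoped Classical in
/-- auxiliary digit choice -/
noncomputable def digOf (f : Z → Y) (u : ℕ → Z) (S : Set Z) (r : ℝ) (y : Y) : ℕ :=
  if h : ∃ m, (f ⁻¹' {y} ∩ S ∩ closedBall (u m) r).Nonempty then Nat.find h else 0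

/-- the nested constraint sets -/
noncomputable def FFaux (f : Z → Y) (u : ℕ → Z) (y : Y) : ℕ → Set Z
  | 0 => univ
  | k+1 => FFaux f u y k ∩
      closedBall (u (digOf f u (FFaux f u y k) ((1/2)^k) y)) ((1/2)^k)

lemma nonemptySet_eq_image (f : Z → Y) (W : Set Z) :
    {y | (f ⁻¹' {y} ∩ W).Nonempty} = f '' W := by
  ext y
  constructor
  · rintro ⟨z, hz1, hz2⟩; exact ⟨z, hz2, hz1⟩
  · rintro ⟨z, hz2, hz1⟩; exact ⟨z, hz1, hz2⟩

lemma measurable_digOf {f : Z → Y} (hf : Continuous f) (u : ℕ → Z) {S : Set Z}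
    (hS : IsClosed S) (r : ℝ) : Measurable (digOf f u S r) := by
  have key : ∀ m : ℕ, MeasurableSet {y | (f ⁻¹' {y} ∩ S ∩ closedBall (u m) r).Nonempty} := by
    intro m
    simp only [inter_assoc, nonemptySet_eq_image]
    exact (((hS.inter isClosed_closedBall).isCompact).image hf).isClosed.measurableSet
  classical
  apply measurable_to_countable'
  intro m
  by_cases hm : m = 0
  · subst hm
    have hrw : digOf f u S r ⁻¹' {0}
        = {y | (f ⁻¹' {y} ∩ S ∩ closedBall (u 0) r).Nonempty}
          ∪ ⋂ j, {y | (f ⁻¹' {y} ∩ S ∩ closedBall (u j) r).Nonempty}ᶜ := by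
      ext y
      simp only [mem_preimage, mem_singleton_iff, digOf, mem_union, mem_iInter, mem_compl_iff,
        mem_setOf_eq]
      constructor
      · intro h
        by_cases hex : ∃ m, (f ⁻¹' {y} ∩ S ∩ closedBall (u m) r).Nonempty
        · rw [dif_pos hex] at h
          left
          have := Nat.find_spec hex
          rwa [h] at this
        · right
          exact fun j hj => hex ⟨j, hj⟩
      · intro h
        rcases h with h | h
        · rw [dif_pos ⟨0, h⟩]
          exact Nat.le_zero.mp (Nat.find_le h)
        · rw [dif_neg (fun hex => hex.elim fun j hj => h j hj)]
    rw [hrw]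
    exact (key 0).union (MeasurableSet.iInter (fun j => (key j).compl))
  · have hrw : digOf f u S r ⁻¹' {m}
        = {y | (f ⁻¹' {y} ∩ S ∩ closedBall (u m) r).Nonempty}
          ∩ ⋂ j, ⋂ (_ : j < m), {y | (f ⁻¹' {y} ∩ S ∩ closedBall (u j) r).Nonempty}ᶜ := by
      ext y
      simp only [mem_preimage, mem_singleton_iff, digOf, mem_inter_iff, mem_iInter,
        mem_compl_iff, mem_setOf_eq]
      constructor
      · intro h
        by_cases hex : ∃ m, (f ⁻¹' {y} ∩ S ∩ closedBall (u m) r).Nonempty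
        · rw [dif_pos hex] at h
          subst h
          exact ⟨Nat.find_spec hex, fun j hj => Nat.find_min hex hj⟩
        · rw [dif_neg hex] at h
          exact absurd h.symm hm
      · rintro ⟨h1, h2⟩
        rw [dif_pos ⟨m, h1⟩]
        exact (Nat.find_eq_iff _).mpr ⟨h1, fun j hj => h2 j hj⟩
    rw [hrw]
    exact (key m).inter
      (MeasurableSet.iInter fun j => MeasurableSet.iInter fun _ => (key j).compl)

end Sec

section Sec2
variable {Z Y : Type*} [MetricSpace Z] [CompactSpace Z]
  [MeasurableSpace Z] [BorelSpace Z]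
  [MetricSpace Y] [MeasurableSpace Y] [BorelSpace Y]

noncomputable def digSeq (f : Z → Y) (u : ℕ → Z) (y : Y) (k : ℕ) : ℕ :=
  digOf f u (FFaux f u y k) ((1/2)^k) y

lemma digSeq_def (f : Z → Y) (u : ℕ → Z) (y : Y) (k : ℕ) :
    digSeq f u y k = digOf f u (FFaux f u y k) ((1/2)^k) y := rfl

lemma FFaux_succ (f : Z → Y) (u : ℕ → Z) (y : Y) (k : ℕ) :
    FFaux f u y (k+1) = FFaux f u y k ∩ closedBall (u (digSeq f u y k)) ((1/2)^k) := rfl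

/-- explicit candidate sets -/
def Ecl (u : ℕ → Z) (k : ℕ) (v : Fin k → ℕ) : Set Z :=
  ⋂ i : Fin k, closedBall (u (v i)) ((1/2)^(i : ℕ))

lemma isClosed_Ecl (u : ℕ → Z) (k : ℕ) (v : Fin k → ℕ) : IsClosed (Ecl u k v) :=
  isClosed_iInter fun _ => isClosed_closedBall

lemma iInter_fin_succ' {W : Type*} {n : ℕ} (A : Fin (n+1) → Set W) :
    ⋂ i, A i = (⋂ i : Fin n, A i.castSucc) ∩ A (Fin.last n) := by
  ext z
  simp only [mem_iInter, mem_inter_iff]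
  constructor
  · exact fun h => ⟨fun i => h _, h _⟩
  · rintro ⟨h1, h2⟩ i
    induction i using Fin.lastCases with
    | last => exact h2
    | cast i => exact h1 i

lemma Ecl_succ (u : ℕ → Z) (k : ℕ) (v : Fin (k+1) → ℕ) :
    Ecl u (k+1) v = Ecl u k (fun i => v i.castSucc) ∩
      closedBall (u (v (Fin.last k))) ((1/2)^k) := by
  rw [Ecl, iInter_fin_succ' (fun i : Fin (k+1) => closedBall (u (v i)) ((1/2)^(i : ℕ)))]
  simp [Ecl, Fin.coe_castSucc, Fin.val_last]

lemma FFaux_eq_Ecl (f : Z → Y) (u : ℕ → Z) :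
    ∀ (k : ℕ) (v : Fin k → ℕ) (y : Y), (∀ i : Fin k, digSeq f u y (i : ℕ) = v i) →
      FFaux f u y k = Ecl u k v := by
  intro k
  induction k with
  | zero => intro v y _; simp [FFaux, Ecl]
  | succ k ih =>
    intro v y hv
    rw [FFaux_succ, Ecl_succ]
    have h1 : FFaux f u y k = Ecl u k (fun i => v i.castSucc) := by
      apply ih
      intro i
      have := hv i.castSucc
      simpa using this
    have h2 : digSeq f u y k = v (Fin.last k) := by
      have := hv (Fin.last k)
      simpa using this
    rw [h1, h2]

lemma measurableSet_digSeq_cylinder {f : Z → Y} (hf : Continuous f) (u : ℕ → Z) :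
    ∀ (k : ℕ) (v : Fin k → ℕ),
      MeasurableSet {y | ∀ i : Fin k, digSeq f u y (i : ℕ) = v i} := by
  intro k
  induction k with
  | zero =>
    intro v
    have : {y : Y | ∀ i : Fin 0, digSeq f u y (i : ℕ) = v i} = univ :=
      eq_univ_of_forall fun y => fun i => i.elim0
    rw [this]; exact MeasurableSet.univ
  | succ k ih =>
    intro v
    have hrw : {y | ∀ i : Fin (k+1), digSeq f u y (i : ℕ) = v i}
        = {y | ∀ i : Fin k, digSeq f u y (i : ℕ) = v i.castSucc}
          ∩ (digOf f u (Ecl u k (fun i => v i.castSucc)) ((1/2)^k)) ⁻¹' {v (Fin.last k)} := by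
      ext y
      simp only [mem_setOf_eq, mem_inter_iff, mem_preimage, mem_singleton_iff]
      constructor
      · intro h
        have h1 : ∀ i : Fin k, digSeq f u y (i : ℕ) = v i.castSucc := by
          intro i; have := h i.castSucc; simpa using this
        refine ⟨h1, ?_⟩
        have hF : FFaux f u y k = Ecl u k (fun i => v i.castSucc) :=
          FFaux_eq_Ecl f u k _ y h1
        have := h (Fin.last k)
        simp only [Fin.val_last] at this
        rw [← this, digSeq_def, hF]
      · rintro ⟨h1, h2⟩ i
        have hF : FFaux f u y k = Ecl u k (fun i => v i.castSucc) :=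
          FFaux_eq_Ecl f u k _ y h1
        induction i using Fin.lastCases with
        | last =>
          simp only [Fin.val_last]
          rw [digSeq_def, hF]
          exact h2
        | cast i =>
          have := h1 i; simpa using this
    rw [hrw]
    exact (ih _).inter ((measurable_digOf hf u (isClosed_Ecl u k _) _)
      (measurableSet_singleton _))

lemma measurable_digSeq {f : Z → Y} (hf : Continuous f) (u : ℕ → Z) (k : ℕ) :
    Measurable (fun y => digSeq f u y k) := by
  apply measurable_to_countable'
  intro m
  have hrw : (fun y => digSeq f u y k) ⁻¹' {m}
      = ⋃ v : Fin k → ℕ, ({y | ∀ i : Fin k, digSeq f u y (i : ℕ) = v i}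
          ∩ (digOf f u (Ecl u k v) ((1/2)^k)) ⁻¹' {m}) := by
    ext y
    simp only [mem_preimage, mem_singleton_iff, mem_iUnion, mem_inter_iff, mem_setOf_eq]
    constructor
    · intro h
      refine ⟨fun i => digSeq f u y (i : ℕ), fun i => rfl, ?_⟩
      have hF : FFaux f u y k = Ecl u k (fun i => digSeq f u y (i : ℕ)) :=
        FFaux_eq_Ecl f u k _ y (fun i => rfl)
      rw [← h, digSeq_def, hF]
    · rintro ⟨v, h1, h2⟩
      have hF : FFaux f u y k = Ecl u k v := FFaux_eq_Ecl f u k v y h1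
      rw [digSeq_def, hF]
      exact h2
  rw [hrw]
  exact MeasurableSet.iUnion fun v => (measurableSet_digSeq_cylinder hf u k v).inter
    ((measurable_digOf hf u (isClosed_Ecl u k v) _) (measurableSet_singleton _))

theorem exists_measurable_section [Nonempty Z] {f : Z → Y} (hf : Continuous f) :
    ∃ s : Y → Z, Measurable s ∧ ∀ y ∈ range f, f (s y) = y := by
  classical
  set u := TopologicalSpace.denseSeq Z with hu_def
  have hu : DenseRange u := TopologicalSpace.denseRange_denseSeq Z
  set c : ℕ → Y → Z := fun k y => u (digSeq f u y k) with hc_def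
  have hpow : ∀ k : ℕ, (0:ℝ) < (1/2)^k := fun k => pow_pos (by norm_num) k
  have hPex : ∀ (y : Y) (k : ℕ), (f ⁻¹' {y} ∩ FFaux f u y k).Nonempty →
      ∃ m, (f ⁻¹' {y} ∩ FFaux f u y k ∩ closedBall (u m) ((1/2)^k)).Nonempty := by
    rintro y k ⟨z, hz⟩
    rcases Metric.denseRange_iff.mp hu z ((1/2)^k) (hpow k) with ⟨m, hm⟩
    exact ⟨m, z, hz, mem_closedBall.mpr hm.le⟩
  have hstep : ∀ (y : Y) (k : ℕ), (f ⁻¹' {y} ∩ FFaux f u y k).Nonempty →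
      (f ⁻¹' {y} ∩ FFaux f u y (k+1)).Nonempty := by
    intro y k h
    obtain hex := hPex y k h
    have hspec := Nat.find_spec hex
    have hdig : digSeq f u y k = Nat.find hex := by
      rw [digSeq_def]; unfold digOf; rw [dif_pos hex]
    rcases hspec with ⟨z, ⟨hz1, hz2⟩, hz3⟩
    refine ⟨z, hz1, ?_⟩
    rw [FFaux_succ]
    exact ⟨hz2, by rw [hdig]; exact hz3⟩
  have hchain : ∀ y ∈ range f, ∀ k, (f ⁻¹' {y} ∩ FFaux f u y k).Nonempty := by
    rintro y ⟨z, rfl⟩ k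
    induction k with
    | zero => exact ⟨z, rfl, mem_univ z⟩
    | succ k ih => exact hstep _ _ ih
  have conv : ∀ y : Y, ∃ z : Z,
      Tendsto (fun k => c k y) atTop (𝓝 z) ∧ (y ∈ range f → f z = y) := by
    intro y
    by_cases hy : ∀ k, (f ⁻¹' {y} ∩ FFaux f u y k).Nonempty
    · -- choose witnesses
      have hw : ∀ k, ∃ z, z ∈ f ⁻¹' {y} ∩ FFaux f u y (k+1) := fun k => hy (k+1)
      choose w hw using hw
      have hwball : ∀ k, w k ∈ closedBall (c k y) ((1/2)^k) := by
        intro k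
        have := (hw k).2
        rw [FFaux_succ] at this
        exact this.2
      have hwball' : ∀ k, w (k+1) ∈ closedBall (c k y) ((1/2)^k) := by
        intro k
        have := (hw (k+1)).2
        rw [FFaux_succ] at this
        have h2 : w (k+1) ∈ FFaux f u y (k+1) := this.1
        rw [FFaux_succ] at h2
        exact h2.2
      have hcauchy : CauchySeq w := by
        apply cauchySeq_of_le_geometric (1/2) 2 (by norm_num)
        intro n
        calc dist (w n) (w (n+1)) ≤ dist (w n) (c n y) + dist (w (n+1)) (c n y) :=
              dist_triangle_right _ _ _
          _ ≤ (1/2)^n + (1/2)^n := add_le_add (hwball n) (hwball' n)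
          _ = 2 * (1/2)^n := by ring
      obtain ⟨z, hz⟩ := cauchySeq_tendsto_of_complete hcauchy
      refine ⟨z, ?_, ?_⟩
      · rw [tendsto_iff_dist_tendsto_zero]
        apply squeeze_zero (fun k => dist_nonneg)
          (g := fun k => (1/2)^k + dist (w k) z)
        · intro k
          calc dist (c k y) z ≤ dist (c k y) (w k) + dist (w k) z := dist_triangle _ _ _
            _ ≤ (1/2)^k + dist (w k) z := by
                have := hwball k
                rw [mem_closedBall] at this
                rw [dist_comm]
                exact add_le_add_left this _
        · have h1 : Tendsto (fun k : ℕ => ((1:ℝ)/2)^k) atTop (𝓝 0) :=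
            tendsto_pow_atTop_nhds_zero_of_lt_one (by norm_num) (by norm_num)
          have h2 : Tendsto (fun k => dist (w k) z) atTop (𝓝 0) :=
            tendsto_iff_dist_tendsto_zero.mp hz
          simpa using h1.add h2
      · intro _
        have hcl : IsClosed (f ⁻¹' {y}) := isClosed_singleton.preimage hf
        have : z ∈ f ⁻¹' {y} :=
          hcl.mem_of_tendsto hz (Eventually.of_forall fun k => (hw k).1)
        exact this
    · push_neg at hy
      obtain ⟨k0, hk0⟩ := hy
      have hk0' : ¬ (f ⁻¹' {y} ∩ FFaux f u y k0).Nonempty := by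
        rw [not_nonempty_iff_eq_empty]; exact hk0
      have hempty : ∀ j, ¬ (f ⁻¹' {y} ∩ FFaux f u y (k0 + j)).Nonempty := by
        intro j
        induction j with
        | zero => exact hk0'
        | succ j ih =>
          intro hne
          apply ih
          rcases hne with ⟨z, hz1, hz2⟩
          rw [show k0 + (j+1) = (k0 + j) + 1 from rfl, FFaux_succ] at hz2
          exact ⟨z, hz1, hz2.1⟩
      have hdig0 : ∀ j, digSeq f u y (k0 + j) = 0 := by
        intro j
        rw [digSeq_def]; unfold digOf
        rw [dif_neg]
        rintro ⟨m, z, ⟨hz1, hz2⟩, _⟩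
        exact hempty j ⟨z, hz1, hz2⟩
      refine ⟨u 0, ?_, ?_⟩
      · apply tendsto_atTop_of_eventually_const (i₀ := k0)
        intro k hk
        obtain ⟨j, rfl⟩ := Nat.exists_eq_add_of_le hk
        simp only [hc_def]
        rw [hdig0 j]
      · intro hyr
        exact absurd (hchain y hyr k0) hk0'
  choose s hs1 hs2 using conv
  refine ⟨s, ?_, fun y hy => hs2 y hy⟩
  apply measurable_of_tendsto_metrizable
    (f := fun k => c k) (fun k => (measurable_of_countable u).comp (measurable_digSeq hf u k))
  rw [tendsto_pi_nhds]
  exact hs1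

end Sec2

section Lift
variable {X Y : Type*} [MetricSpace X] [CompactSpace X] [MeasurableSpace X] [BorelSpace X]
  [MetricSpace Y] [MeasurableSpace Y] [BorelSpace Y]

/-- Lifting a measure concentrated on the image of a compact set through a continuous map. -/
theorem exists_lift_measure {π : X → Y} (hπc : Continuous π) {K : Set X} (hK : IsCompact K)
    (hKne : K.Nonempty) (ρ : Measure Y) (hρ : ρ ((π '' K)ᶜ) = 0) :
    ∃ θ : Measure X, θ.map π = ρ ∧ θ Kᶜ = 0 := by
  haveI : CompactSpace K := isCompact_iff_compactSpace.mp hK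
  haveI : Nonempty K := hKne.to_subtype
  have hfc : Continuous (fun z : K => π (z : X)) := hπc.comp continuous_subtype_val
  obtain ⟨s, hs1, hs2⟩ := exists_measurable_section hfc
  set g : Y → X := fun y => (s y : X) with hg_def
  have hgm : Measurable g := measurable_subtype_coe.comp hs1
  refine ⟨ρ.map g, ?_, ?_⟩
  · rw [Measure.map_map hπc.measurable hgm]
    have hae : (fun y => π (g y)) =ᵐ[ρ] id := by
      rw [Filter.eventuallyEq_iff_exists_mem]
      refine ⟨π '' K, ?_, ?_⟩
      · rw [mem_ae_iff]
        exact hρ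
      · intro y hy
        have hyr : y ∈ range (fun z : K => π (z : X)) := by
          rcases hy with ⟨x, hxK, rfl⟩
          exact ⟨⟨x, hxK⟩, rfl⟩
        exact hs2 y hyr
    calc Measure.map (π ∘ g) ρ = Measure.map id ρ := Measure.map_congr hae
      _ = ρ := Measure.map_id
  · rw [Measure.map_apply hgm (hK.isClosed.measurableSet.compl)]
    have : g ⁻¹' Kᶜ = ∅ := by
      apply eq_empty_of_forall_notMem
      intro y hy
      exact hy (s y).2
    rw [this, measure_empty]

end Lift

section Unif

/-- Uniform openness on compact spaces. -/
theorem uniform_of_isOpenMap {X Y : Type*} [MetricSpace X] [CompactSpace X] [MetricSpace Y]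
    {π : X → Y} (hπc : Continuous π) (hopen : IsOpenMap π) {ε : ℝ} (hε : 0 < ε) :
    ∃ δ > 0, ∀ x y', dist (π x) y' < δ → ∃ x', π x' = y' ∧ dist x x' < ε := by
  by_contra hcon
  push_neg at hcon
  have key : ∀ n : ℕ, ∃ (x : X) (y' : Y), dist (π x) y' < 1/(n+1) ∧
      ∀ x', π x' = y' → ε ≤ dist x x' := by
    intro n
    obtain ⟨x, y', h1, h2⟩ := hcon (1/(n+1)) (by positivity)
    exact ⟨x, y', h1, fun x' hx' => (h2 x' hx')⟩
  choose xs ys hd hno using key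
  obtain ⟨x, -, φ, hφ, hx⟩ := isCompact_univ.tendsto_subseq (fun n => mem_univ (xs n))
  have hys : Tendsto (fun n => ys (φ n)) atTop (𝓝 (π x)) := by
    have h1 : Tendsto (fun n => π (xs (φ n))) atTop (𝓝 (π x)) := (hπc.tendsto x).comp hx
    rw [tendsto_iff_dist_tendsto_zero] at h1 ⊢
    apply squeeze_zero (fun n => dist_nonneg)
      (g := fun n => 1/((φ n : ℝ)+1) + dist (π (xs (φ n))) (π x))
    · intro n
      calc dist (ys (φ n)) (π x) ≤ dist (ys (φ n)) (π (xs (φ n))) + dist (π (xs (φ n))) (π x) :=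
            dist_triangle _ _ _
        _ ≤ 1/((φ n : ℝ)+1) + dist (π (xs (φ n))) (π x) := by
            rw [dist_comm]
            exact add_le_add_left (hd (φ n)).le _
    · have : Tendsto (fun n : ℕ => 1/((φ n : ℝ)+1)) atTop (𝓝 0) := by
        apply Tendsto.comp (f := fun n => φ n) (g := fun m : ℕ => 1/((m : ℝ)+1))
        · exact tendsto_one_div_add_atTop_nhds_zero_nat
        · exact hφ.tendsto_atTop
      simpa using this.add h1
  have hWopen : IsOpen (π '' (Metric.ball x (ε/2))) := hopen _ Metric.isOpen_ball
  have hWmem : π x ∈ π '' (Metric.ball x (ε/2)) :=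
    ⟨x, Metric.mem_ball_self (by linarith), rfl⟩
  have hev1 : ∀ᶠ n in atTop, ys (φ n) ∈ π '' (Metric.ball x (ε/2)) :=
    hys (hWopen.mem_nhds hWmem)
  have hev2 : ∀ᶠ n in atTop, dist (xs (φ n)) x < ε/2 := by
    rw [tendsto_iff_dist_tendsto_zero] at hx
    have := hx (eventually_lt_nhds (by linarith : (0:ℝ) < ε/2))
    exact this
  obtain ⟨n, h1, h2⟩ := (hev1.and hev2).exists
  obtain ⟨x', hx', hpx'⟩ := h1
  have : ε ≤ dist (xs (φ n)) x' := hno (φ n) x' hpx'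
  have : dist (xs (φ n)) x' < ε := by
    calc dist (xs (φ n)) x' ≤ dist (xs (φ n)) x + dist x x' := dist_triangle _ _ _
      _ < ε/2 + ε/2 := by
          apply add_lt_add h2
          rw [dist_comm]
          exact Metric.mem_ball.mp hx'
      _ = ε := by ring
  linarith

end Unif

section Part
variable {W : Type*} [MetricSpace W] [CompactSpace W] [MeasurableSpace W] [BorelSpace W]

lemma frontier_inter_subset'' (s t : Set W) :
    frontier (s ∩ t) ⊆ frontier s ∪ frontier t :=
  (frontier_inter_subset s t).trans
    (union_subset_union inter_subset_left inter_subset_right)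

lemma frontier_biInter_subset {ι : Type*} (s : Finset ι) (f : ι → Set W) :
    frontier (⋂ i ∈ s, f i) ⊆ ⋃ i ∈ s, frontier (f i) := by
  classical
  induction s using Finset.induction with
  | empty => simp
  | @insert a s ha ih =>
    rw [Finset.set_biInter_insert]
    refine (frontier_inter_subset'' _ _).trans ?_
    intro x hx
    rcases hx with hx | hx
    · exact mem_biUnion (Finset.mem_insert_self _ _) hx
    · obtain ⟨i, hi, hxi⟩ := mem_iUnion₂.mp (ih hx)
      exact mem_biUnion (Finset.mem_insert_of_mem hi) hxi

/-- Finite measurable partition of a compact metric space into small pieces with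
null frontiers. -/
theorem exists_fine_partition (ρ : Measure W) [IsFiniteMeasure ρ] {δ : ℝ} (hδ : 0 < δ) :
    ∃ (k : ℕ) (B : Fin k → Set W),
      (∀ j, MeasurableSet (B j)) ∧ Pairwise (Function.onFun Disjoint B) ∧
      (⋃ j, B j) = univ ∧ (∀ j, Metric.diam (B j) ≤ δ) ∧
      ∀ j, ρ (frontier (B j)) = 0 := by
  classical
  have hr : ∀ w : W, ∃ r ∈ Set.Ioo (δ/4) (δ/3), ρ (frontier (Metric.ball w r)) = 0 := by
    intro w
    obtain ⟨r, hr1, hr2⟩ := exists_null_frontier_thickening ρ {w} (by linarith : δ/4 < δ/3)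
    refine ⟨r, hr1, ?_⟩
    rwa [Metric.thickening_singleton] at hr2
  choose r hr1 hr2 using hr
  have hcover : univ ⊆ ⋃ w : W, Metric.ball w (r w) := by
    intro x _
    exact mem_iUnion.mpr ⟨x, Metric.mem_ball_self (lt_trans (by linarith) (hr1 x).1)⟩
  obtain ⟨t, ht⟩ := isCompact_univ.elim_finite_subcover
    (fun w : W => Metric.ball w (r w)) (fun w => Metric.isOpen_ball) hcover
  set k := t.card with hk
  set e : Fin k → W := fun j => (t.equivFin.symm j : W) with he
  set b : Fin k → Set W := fun j => Metric.ball (e j) (r (e j)) with hb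
  have hcover' : ∀ x : W, ∃ j, x ∈ b j := by
    intro x
    obtain ⟨w, hw, hx⟩ := mem_iUnion₂.mp (ht (mem_univ x))
    exact ⟨t.equivFin ⟨w, hw⟩, by simpa [hb, he] using hx⟩
  set B : Fin k → Set W := fun j => b j ∩ ⋂ i ∈ Finset.univ.filter (· < j), (b i)ᶜ with hB
  have hBsub : ∀ j, B j ⊆ b j := fun j => inter_subset_left
  have hmemB : ∀ (x : W) (j : Fin k), x ∈ B j ↔ x ∈ b j ∧ ∀ i, i < j → x ∉ b i := by
    intro x j
    simp only [hB, mem_inter_iff, mem_iInter, Finset.mem_filter, Finset.mem_univ, true_and,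
      mem_compl_iff]
  refine ⟨k, B, ?_, ?_, ?_, ?_, ?_⟩
  · intro j
    exact (Metric.isOpen_ball.measurableSet).inter
      (Finset.measurableSet_biInter _ fun i _ => Metric.isOpen_ball.measurableSet.compl)
  · intro i j hij
    rcases lt_or_gt_of_ne hij with h | h
    · rw [Function.onFun, disjoint_left]
      intro x hxi hxj
      exact ((hmemB x j).mp hxj).2 i h (hBsub i hxi)
    · rw [Function.onFun, disjoint_left]
      intro x hxi hxj
      exact ((hmemB x i).mp hxi).2 j h (hBsub j hxj)
  · apply eq_univ_of_forall
    intro x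
    have hex : ∃ n : ℕ, ∃ h : n < k, x ∈ b ⟨n, h⟩ := by
      obtain ⟨j, hj⟩ := hcover' x
      exact ⟨j, j.2, by simpa using hj⟩
    obtain ⟨hn, hbn⟩ := Nat.find_spec hex
    refine mem_iUnion.mpr ⟨⟨Nat.find hex, hn⟩, (hmemB _ _).mpr ⟨hbn, ?_⟩⟩
    intro i hi hxi
    have : ∃ h : (i : ℕ) < k, x ∈ b ⟨(i : ℕ), h⟩ := ⟨i.2, by simpa using hxi⟩
    exact absurd (Nat.find_le this) (not_le.mpr hi)
  · intro j
    refine (Metric.diam_mono (hBsub j) Metric.isBounded_ball).trans ?_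
    refine (Metric.diam_ball (by linarith [(hr1 (e j)).1] : 0 ≤ r (e j))).trans ?_
    have := (hr1 (e j)).2
    linarith
  · intro j
    have hsub : frontier (B j) ⊆
        frontier (b j) ∪ ⋃ i ∈ Finset.univ.filter (· < j), frontier ((b i)ᶜ) := by
      refine (frontier_inter_subset'' _ _).trans ?_
      exact union_subset_union Subset.rfl (frontier_biInter_subset _ _)
    refine measure_mono_null hsub ?_
    apply measure_union_null
    · exact hr2 (e j)
    · apply (measure_biUnion_null_iff (Finset.countable_toSet _)).mpr
      intro i _
      rw [frontier_compl]
      exact hr2 (e i)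

end Part

section PerPiece
open Metric ENNReal

lemma meas_partition {W : Type*} [MeasurableSpace W] (μ : Measure W) {m : ℕ}
    {C : Fin m → Set W} (hCm : ∀ i, MeasurableSet (C i))
    (hCd : Pairwise (Function.onFun Disjoint C)) (hCu : (⋃ i, C i) = univ)
    (T : Set W) (hT : MeasurableSet T) : μ T = ∑ i, μ (T ∩ C i) := by
  have hTeq : T = ⋃ i, T ∩ C i := by rw [← inter_iUnion, hCu, inter_univ]
  have hd : Pairwise (Function.onFun Disjoint (fun i => T ∩ C i)) :=
    fun i j h => ((hCd h).mono inter_subset_right inter_subset_right)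
  calc μ T = μ (⋃ i, T ∩ C i) := by rw [← hTeq]
    _ = ∑' i, μ (T ∩ C i) := measure_iUnion hd (fun i => hT.inter (hCm i))
    _ = ∑ i, μ (T ∩ C i) := tsum_fintype _

lemma map_finsetSum_aux {W V : Type*} [MeasurableSpace W] [MeasurableSpace V] {ι : Type*}
    (s : Finset ι) (μs : ι → Measure W) {f : W → V} (hf : Measurable f) :
    (∑ i ∈ s, μs i).map f = ∑ i ∈ s, (μs i).map f := by
  classical
  induction s using Finset.induction with
  | empty => simp [Measure.map_zero]
  | @insert a s ha ih =>
    rw [Finset.sum_insert ha, Finset.sum_insert ha, Measure.map_add _ _ hf, ih]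

variable {X Y : Type*} [MetricSpace X] [CompactSpace X] [MeasurableSpace X] [BorelSpace X]
  [MetricSpace Y] [CompactSpace Y] [MeasurableSpace Y] [BorelSpace Y]

lemma per_piece {π : X → Y} (hπc : Continuous π) (hπs : Function.Surjective π)
    {δ ε1 : ℝ} (hε1 : 0 < ε1)
    (hδ : ∀ x y', dist (π x) y' < δ → ∃ x', π x' = y' ∧ dist x x' < ε1)
    (μ : Measure X) [IsFiniteMeasure μ]
    (ρ : Measure Y) [IsFiniteMeasure ρ]
    {Bj : Set Y} (hBm : MeasurableSet Bj) (hBdiam : Metric.diam Bj < δ)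
    {m : ℕ} {C : Fin m → Set X} (hCm : ∀ i, MeasurableSet (C i))
    (hCd : Pairwise (Function.onFun Disjoint C)) (hCu : (⋃ i, C i) = univ)
    (hCdiam : ∀ i, Metric.diam (C i) ≤ ε1) :
    ∃ τ : Measure X, τ.map π = ρ.restrict Bj ∧
      (∀ S : Set X, MeasurableSet S →
        μ (S ∩ π ⁻¹' Bj) ≤ τ (Metric.thickening (3*ε1) S) + (μ (π ⁻¹' Bj) - ρ Bj)) ∧
      (∀ S : Set X, MeasurableSet S →
        τ S ≤ μ (Metric.thickening (3*ε1) S ∩ π ⁻¹' Bj) + (ρ Bj - μ (π ⁻¹' Bj))) := by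
  classical
  by_cases hBne : Bj.Nonempty
  swap
  · rw [not_nonempty_iff_eq_empty] at hBne
    subst hBne
    refine ⟨0, by simp [Measure.restrict_empty], ?_, ?_⟩
    · intro S _; simp
    · intro S _; simp
  set AB : Set X := π ⁻¹' Bj with hAB
  have hABm : MeasurableSet AB := hBm.preimage hπc.measurable
  by_cases hA0 : μ AB = 0
  · -- degenerate case : lift anywhere above the closure of Bj
    obtain ⟨y0, hy0⟩ := hBne
    obtain ⟨x0, hx0⟩ := hπs y0
    have hKc : IsCompact (π ⁻¹' (closure Bj)) :=
      (isClosed_closure.preimage hπc).isCompact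
    have hKne : (π ⁻¹' (closure Bj)).Nonempty :=
      ⟨x0, by simp [hx0, subset_closure hy0]⟩
    have hconc : (ρ.restrict Bj) ((π '' (π ⁻¹' (closure Bj)))ᶜ) = 0 := by
      rw [Measure.restrict_apply (by
        exact (hKc.image hπc).isClosed.measurableSet.compl)]
      have : (π '' (π ⁻¹' (closure Bj)))ᶜ ∩ Bj = ∅ := by
        apply eq_empty_of_forall_notMem
        rintro y ⟨hyc, hyB⟩
        obtain ⟨x, hx⟩ := hπs y
        exact hyc ⟨x, by simp [hx, subset_closure hyB], hx⟩
      rw [this, measure_empty]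
    obtain ⟨τ, hτ1, hτ2⟩ := exists_lift_measure hπc hKc hKne (ρ.restrict Bj) hconc
    refine ⟨τ, hτ1, ?_, ?_⟩
    · intro S _
      have : μ (S ∩ AB) = 0 :=
        measure_mono_null inter_subset_right hA0
      rw [this]; exact zero_le
    · intro S _
      have hτuniv : τ univ = ρ Bj := by
        have := congrArg (fun ν : Measure Y => ν univ) hτ1
        simpa [Measure.map_apply hπc.measurable MeasurableSet.univ,
          Measure.restrict_apply MeasurableSet.univ] using this
      calc τ S ≤ τ univ := measure_mono (subset_univ S)
        _ = ρ Bj := hτuniv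
        _ = ρ Bj - μ AB := by rw [hA0, tsub_zero]
        _ ≤ _ := le_add_self
  · -- main case
    set D : Fin m → Set X := fun i => C i ∩ AB with hD
    have hDm : ∀ i, MeasurableSet (D i) := fun i => (hCm i).inter hABm
    set c : Fin m → ℝ≥0∞ := fun i => μ (D i) / μ AB with hc
    set Kset : Fin m → Set X := fun i =>
      {x : X | Metric.infDist x (D i) ≤ ε1} ∩ π ⁻¹' (closure Bj) with hKset
    have hKclosed : ∀ i, IsClosed (Kset i) := fun i =>
      ((isClosed_le (Metric.continuous_infDist_pt (D i)) continuous_const)).inter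
        (isClosed_closure.preimage hπc)
    have hKcomp : ∀ i, IsCompact (Kset i) := fun i => (hKclosed i).isCompact
    -- surjectivity of π from Kset i onto Bj, for i with μ (D i) ≠ 0
    have hBK : ∀ i, μ (D i) ≠ 0 → Bj ⊆ π '' (Kset i) := by
      intro i hi y' hy'
      obtain ⟨x, hxD⟩ := nonempty_of_measure_ne_zero hi
      have hπx : π x ∈ Bj := hxD.2
      have hdist : dist (π x) y' < δ :=
        lt_of_le_of_lt (Metric.dist_le_diam_of_mem (Metric.isBounded_of_compactSpace) hπx hy') hBdiam
      obtain ⟨x', hx'1, hx'2⟩ := hδ x y' hdist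
      refine ⟨x', ⟨?_, ?_⟩, hx'1⟩
      · exact le_of_lt (lt_of_le_of_lt (Metric.infDist_le_dist_of_mem hxD) (by rwa [dist_comm]))
      · simp [hx'1, subset_closure hy']
    have hKne : ∀ i, μ (D i) ≠ 0 → (Kset i).Nonempty := by
      intro i hi
      obtain ⟨x, hxD⟩ := nonempty_of_measure_ne_zero hi
      exact ⟨x, by simpa [hKset] using Metric.infDist_zero_of_mem hxD |>.le.trans hε1.le,
        subset_closure hxD.2⟩
    have hθ : ∀ i, μ (D i) ≠ 0 → ∃ θ : Measure X,
        θ.map π = c i • ρ.restrict Bj ∧ θ (Kset i)ᶜ = 0 := by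
      intro i hi
      have hconc : (c i • ρ.restrict Bj) ((π '' (Kset i))ᶜ) = 0 := by
        rw [Measure.smul_apply, Measure.restrict_apply (by
          exact ((hKcomp i).image hπc).isClosed.measurableSet.compl)]
        have : (π '' (Kset i))ᶜ ∩ Bj = ∅ := by
          apply eq_empty_of_forall_notMem
          rintro y ⟨hyc, hyB⟩
          exact hyc (hBK i hi hyB)
        rw [this, measure_empty, smul_zero]
      exact exists_lift_measure hπc (hKcomp i) (hKne i hi) _ hconc
    set θ : Fin m → Measure X := fun i =>
      if h : μ (D i) ≠ 0 then (hθ i h).choose else 0 with hθdef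
    have hθmap : ∀ i, (θ i).map π = c i • ρ.restrict Bj := by
      intro i
      by_cases h : μ (D i) ≠ 0
      · rw [hθdef]; simp only [dif_pos h]; exact (hθ i h).choose_spec.1
      · rw [hθdef]; simp only [dif_neg h]
        push_neg at h
        have : c i = 0 := by rw [hc]; simp [h]
        rw [this, zero_smul, Measure.map_zero]
    have hθconc : ∀ i, μ (D i) ≠ 0 → (θ i) (Kset i)ᶜ = 0 := by
      intro i h
      rw [hθdef]; simp only [dif_pos h]; exact (hθ i h).choose_spec.2
    have hθuniv : ∀ i, (θ i) univ = c i * ρ Bj := by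
      intro i
      have := congrArg (fun ν : Measure Y => ν univ) (hθmap i)
      simpa [Measure.map_apply hπc.measurable MeasurableSet.univ,
        Measure.restrict_apply MeasurableSet.univ] using this
    have hsumD : ∑ i, μ (D i) = μ AB := by
      have := meas_partition μ hCm hCd hCu AB hABm
      rw [this]
      congr 1
      ext i
      rw [inter_comm]
    have hsumc : ∑ i, c i = 1 := by
      simp only [hc, div_eq_mul_inv]
      rw [← Finset.sum_mul, hsumD, ENNReal.mul_inv_cancel hA0 (measure_ne_top μ AB)]
    have hKsub1 : ∀ i (S : Set X), (S ∩ D i).Nonempty → Kset i ⊆ Metric.thickening (3*ε1) S := by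
      rintro i S ⟨a, haS, haD⟩ x hx
      obtain ⟨hx1, -⟩ := hx
      have hne : (D i).Nonempty := ⟨a, haD⟩
      have hlt : Metric.infDist x (D i) < ε1 + ε1/2 := lt_of_le_of_lt hx1 (by linarith)
      obtain ⟨z, hzD, hz⟩ := (Metric.infDist_lt_iff hne).mp hlt
      have hza : dist z a ≤ ε1 :=
        le_trans (Metric.dist_le_diam_of_mem Metric.isBounded_of_compactSpace hzD.1 haD.1)
          (hCdiam i)
      rw [Metric.mem_thickening_iff]
      refine ⟨a, haS, ?_⟩
      calc dist x a ≤ dist x z + dist z a := dist_triangle _ _ _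
        _ < ε1 + ε1/2 + ε1 := by linarith
        _ ≤ 3*ε1 := by linarith
    have hKsub2 : ∀ i (S : Set X), (S ∩ Kset i).Nonempty →
        D i ⊆ Metric.thickening (3*ε1) S := by
      rintro i S ⟨w, hwS, hwK⟩ a haD
      obtain ⟨hw1, -⟩ := hwK
      have hne : (D i).Nonempty := ⟨a, haD⟩
      have hlt : Metric.infDist w (D i) < ε1 + ε1/2 := lt_of_le_of_lt hw1 (by linarith)
      obtain ⟨z, hzD, hz⟩ := (Metric.infDist_lt_iff hne).mp hlt
      have hza : dist a z ≤ ε1 :=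
        le_trans (Metric.dist_le_diam_of_mem Metric.isBounded_of_compactSpace haD.1 hzD.1)
          (hCdiam i)
      rw [Metric.mem_thickening_iff]
      refine ⟨w, hwS, ?_⟩
      calc dist a w ≤ dist a z + dist z w := dist_triangle _ _ _
        _ < ε1 + ε1/2 + ε1 := by linarith [dist_comm z w ▸ hz]
        _ ≤ 3*ε1 := by linarith
    have hDc : ∀ i, μ (D i) = c i * μ AB := by
      intro i
      rw [hc]
      rw [ENNReal.div_mul_cancel hA0 (measure_ne_top μ AB)]
    refine ⟨∑ i, θ i, ?_, ?_, ?_⟩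
    · rw [map_finsetSum_aux _ _ hπc.measurable]
      rw [Finset.sum_congr rfl (fun i _ => hθmap i), ← Finset.sum_smul, hsumc, one_smul]
    · -- bound 1
      intro S hS
      have hpart : μ (S ∩ AB) = ∑ i, μ ((S ∩ AB) ∩ C i) :=
        meas_partition μ hCm hCd hCu _ (hS.inter hABm)
      have hterm : ∀ i, μ ((S ∩ AB) ∩ C i) ≤
          (θ i) (Metric.thickening (3*ε1) S) + c i * (μ AB - ρ Bj) := by
        intro i
        by_cases hi : μ (D i) = 0
        · have : μ ((S ∩ AB) ∩ C i) = 0 :=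
            measure_mono_null (fun x hx => show x ∈ C i ∩ AB from ⟨hx.2, hx.1.2⟩) hi
          rw [this]; exact zero_le
        by_cases hSD : (S ∩ D i).Nonempty
        swap
        · rw [not_nonempty_iff_eq_empty] at hSD
          have hempt : (S ∩ AB) ∩ C i = ∅ := by
            rw [← subset_empty_iff, ← hSD]
            rintro x ⟨⟨h1, h2⟩, h3⟩
            exact ⟨h1, h3, h2⟩
          rw [hempt, measure_empty]; exact zero_le
        · have hθthick : c i * ρ Bj ≤ (θ i) (Metric.thickening (3*ε1) S) := by
            rw [← hθuniv i]
            calc (θ i) univ ≤ (θ i) (Metric.thickening (3*ε1) S ∪ (Kset i)ᶜ) :=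
                  measure_mono (fun x _ => by
                    by_cases hxK : x ∈ Kset i
                    · exact Or.inl (hKsub1 i S hSD hxK)
                    · exact Or.inr hxK)
              _ ≤ (θ i) (Metric.thickening (3*ε1) S) + (θ i) (Kset i)ᶜ := measure_union_le _ _
              _ = (θ i) (Metric.thickening (3*ε1) S) := by rw [hθconc i hi, add_zero]
          calc μ ((S ∩ AB) ∩ C i) ≤ μ (D i) :=
                measure_mono (fun x hx => show x ∈ C i ∩ AB from ⟨hx.2, hx.1.2⟩)
            _ = c i * μ AB := hDc i
            _ ≤ c i * (ρ Bj + (μ AB - ρ Bj)) := mul_le_mul_right le_add_tsub _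
            _ = c i * ρ Bj + c i * (μ AB - ρ Bj) := by rw [mul_add]
            _ ≤ (θ i) (Metric.thickening (3*ε1) S) + c i * (μ AB - ρ Bj) :=
                add_le_add_left hθthick _
      calc μ (S ∩ AB) = ∑ i, μ ((S ∩ AB) ∩ C i) := hpart
        _ ≤ ∑ i, ((θ i) (Metric.thickening (3*ε1) S) + c i * (μ AB - ρ Bj)) :=
            Finset.sum_le_sum (fun i _ => hterm i)
        _ = (∑ i, (θ i) (Metric.thickening (3*ε1) S)) + (∑ i, c i) * (μ AB - ρ Bj) := by
            rw [Finset.sum_add_distrib, Finset.sum_mul]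
        _ = (∑ i, θ i) (Metric.thickening (3*ε1) S) + (μ AB - ρ Bj) := by
            rw [hsumc, one_mul, Measure.finset_sum_apply]
    · -- bound 2
      intro S hS
      have hTm : MeasurableSet (Metric.thickening (3*ε1) S ∩ AB) :=
        Metric.isOpen_thickening.measurableSet.inter hABm
      have hpart : μ (Metric.thickening (3*ε1) S ∩ AB)
          = ∑ i, μ ((Metric.thickening (3*ε1) S ∩ AB) ∩ C i) :=
        meas_partition μ hCm hCd hCu _ hTm
      have hterm : ∀ i, (θ i) S ≤
          μ ((Metric.thickening (3*ε1) S ∩ AB) ∩ C i) + c i * (ρ Bj - μ AB) := by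
        intro i
        by_cases hi : μ (D i) = 0
        · have hz : θ i = 0 := by rw [hθdef]; simp [hi]
          rw [hz]; simp
        by_cases hSK : (S ∩ Kset i).Nonempty
        swap
        · rw [not_nonempty_iff_eq_empty] at hSK
          have hsub : S ⊆ (Kset i)ᶜ := by
            intro x hx hxK
            have hmem : x ∈ S ∩ Kset i := ⟨hx, hxK⟩
            rw [hSK] at hmem
            exact hmem
          have : (θ i) S = 0 := measure_mono_null hsub (hθconc i hi)
          rw [this]; exact zero_le
        · have hDsub : D i ⊆ Metric.thickening (3*ε1) S := hKsub2 i S hSK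
          have hDsub2 : D i ⊆ (Metric.thickening (3*ε1) S ∩ AB) ∩ C i := by
            intro x hx
            exact ⟨⟨hDsub hx, hx.2⟩, hx.1⟩
          calc (θ i) S ≤ (θ i) univ := measure_mono (subset_univ _)
            _ = c i * ρ Bj := hθuniv i
            _ ≤ c i * (μ AB + (ρ Bj - μ AB)) := mul_le_mul_right le_add_tsub _
            _ = c i * μ AB + c i * (ρ Bj - μ AB) := by rw [mul_add]
            _ = μ (D i) + c i * (ρ Bj - μ AB) := by rw [hDc i]
            _ ≤ μ ((Metric.thickening (3*ε1) S ∩ AB) ∩ C i) + c i * (ρ Bj - μ AB) :=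
                add_le_add_left (measure_mono hDsub2) _
      calc (∑ i, θ i) S = ∑ i, (θ i) S := Measure.finset_sum_apply _ _ _
        _ ≤ ∑ i, (μ ((Metric.thickening (3*ε1) S ∩ AB) ∩ C i) + c i * (ρ Bj - μ AB)) :=
            Finset.sum_le_sum (fun i _ => hterm i)
        _ = μ (Metric.thickening (3*ε1) S ∩ AB) + (ρ Bj - μ AB) := by
            rw [Finset.sum_add_distrib, ← hpart, ← Finset.sum_mul, hsumc, one_mul]
end PerPiece

section Forward
open Metric ENNReal

lemma tsub_le_ofReal_of_dist_lt {a b : ℝ≥0} {c : ℝ} (h : dist a b < c) :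
    ((a : ℝ≥0∞) - b) ≤ ENNReal.ofReal c := by
  have hc : 0 ≤ c := dist_nonneg.trans h.le
  rw [tsub_le_iff_right]
  have habs : |(a : ℝ) - b| < c := by rw [← NNReal.dist_eq]; exact h
  have hle : (a : ℝ) ≤ c + (b : ℝ) := by
    have := le_abs_self ((a : ℝ) - b)
    linarith
  calc (a : ℝ≥0∞) = ENNReal.ofReal (a : ℝ) := (ENNReal.ofReal_coe_nnreal (p := a)).symm
    _ ≤ ENNReal.ofReal (c + (b : ℝ)) := ENNReal.ofReal_le_ofReal hle
    _ = ENNReal.ofReal c + ENNReal.ofReal (b : ℝ) := ENNReal.ofReal_add hc b.coe_nonneg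
    _ = ENNReal.ofReal c + (b : ℝ≥0∞) := by rw [ENNReal.ofReal_coe_nnreal]

variable {X Y : Type*} [MetricSpace X] [CompactSpace X] [MeasurableSpace X] [BorelSpace X]
  [MetricSpace Y] [CompactSpace Y] [MeasurableSpace Y] [BorelSpace Y]

lemma key_eventually {π : X → Y} (hπc : Continuous π) (hπs : Function.Surjective π)
    (hopen : IsOpenMap π) (μ : ProbabilityMeasure X) (ν' : ℕ → ProbabilityMeasure Y)
    (hν' : Tendsto ν' atTop (𝓝 (pushPM π hπc.measurable μ)))
    {ε : ℝ} (hε : 0 < ε) :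
    ∀ᶠ n in atTop, ∃ μ' : ProbabilityMeasure X,
      pushPM π hπc.measurable μ' = ν' n ∧
      levyProkhorovEDist μ.toMeasure μ'.toMeasure ≤ ENNReal.ofReal ε := by
  classical
  set ν := pushPM π hπc.measurable μ with hν
  have hν_eq : ν.toMeasure = μ.toMeasure.map π := rfl
  set ε1 := ε/8 with hε1_def
  have hε1 : 0 < ε1 := by positivity
  obtain ⟨δ, hδpos, hδ⟩ := uniform_of_isOpenMap hπc hopen hε1
  obtain ⟨k, B, hBm, hBd, hBu, hBdiam, hBnull⟩ :=
    exists_fine_partition ν.toMeasure (show (0:ℝ) < δ/2 by positivity)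
  obtain ⟨m, C, hCm, hCd, hCu, hCdiam, -⟩ := exists_fine_partition μ.toMeasure hε1
  set ε2 := ε1 / (k+1) with hε2_def
  have hε2 : 0 < ε2 := by positivity
  have hjev : ∀ j : Fin k, ∀ᶠ n in atTop, dist (ν' n (B j)) (ν (B j)) < ε2 := by
    intro j
    have hnull : ν (frontier (B j)) = 0 := by
      have h1 : (ν (frontier (B j)) : ℝ≥0∞) = 0 := by
        rw [ProbabilityMeasure.ennreal_coeFn_eq_coeFn_toMeasure]
        exact hBnull j
      exact_mod_cast h1
    have htd := ProbabilityMeasure.tendsto_measure_of_null_frontier_of_tendsto hν' hnull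
    have := htd (Metric.ball_mem_nhds _ hε2)
    filter_upwards [this] with n hn
    exact Metric.mem_ball.mp hn
  filter_upwards [eventually_all.mpr hjev] with n hn
  -- build the lift for this n
  have hper : ∀ j : Fin k, ∃ τ : Measure X,
      τ.map π = (ν' n).toMeasure.restrict (B j) ∧
      (∀ S : Set X, MeasurableSet S →
        μ.toMeasure (S ∩ π ⁻¹' (B j)) ≤ τ (Metric.thickening (3*ε1) S)
          + (μ.toMeasure (π ⁻¹' (B j)) - (ν' n).toMeasure (B j))) ∧
      (∀ S : Set X, MeasurableSet S →
        τ S ≤ μ.toMeasure (Metric.thickening (3*ε1) S ∩ π ⁻¹' (B j))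
          + ((ν' n).toMeasure (B j) - μ.toMeasure (π ⁻¹' (B j)))) := by
    intro j
    exact per_piece hπc hπs hε1 hδ μ.toMeasure (ν' n).toMeasure (hBm j)
      (lt_of_le_of_lt (hBdiam j) (by linarith)) hCm hCd hCu hCdiam
  choose τ hτmap hτ1 hτ2 using hper
  -- the preimage partition of X
  have hAm : ∀ j, MeasurableSet (π ⁻¹' (B j)) := fun j => (hBm j).preimage hπc.measurable
  have hAd : Pairwise (Function.onFun Disjoint (fun j => π ⁻¹' (B j))) :=
    fun i j h => Disjoint.preimage π (hBd h)
  have hAu : (⋃ j, π ⁻¹' (B j)) = univ := by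
    rw [← preimage_iUnion, hBu, preimage_univ]
  -- the map identity
  have hAB_eq : ∀ j, ν.toMeasure (B j) = μ.toMeasure (π ⁻¹' (B j)) := fun j => by
    rw [hν_eq, Measure.map_apply hπc.measurable (hBm j)]
  set μm : Measure X := ∑ j, τ j with hμm
  have hmap : μm.map π = (ν' n).toMeasure := by
    rw [hμm, map_finsetSum_aux _ _ hπc.measurable, Finset.sum_congr rfl (fun j _ => hτmap j)]
    apply Measure.ext
    intro S hS
    rw [Measure.finset_sum_apply]
    have := meas_partition (ν' n).toMeasure hBm hBd hBu S hS
    rw [this]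
    congr 1
    ext j
    rw [Measure.restrict_apply hS]
  have hprob : IsProbabilityMeasure μm := by
    constructor
    have h1 : μm univ = (μm.map π) univ := by
      rw [Measure.map_apply hπc.measurable MeasurableSet.univ, preimage_univ]
    rw [h1, hmap]
    exact measure_univ
  -- error bounds
  have herr1 : (∑ j, (μ.toMeasure (π ⁻¹' (B j)) - (ν' n).toMeasure (B j)))
      ≤ ENNReal.ofReal ε1 := by
    have hjb : ∀ j : Fin k, μ.toMeasure (π ⁻¹' (B j)) - (ν' n).toMeasure (B j)
        ≤ ENNReal.ofReal ε2 := by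
      intro j
      rw [← hAB_eq j, ← ProbabilityMeasure.ennreal_coeFn_eq_coeFn_toMeasure,
        ← ProbabilityMeasure.ennreal_coeFn_eq_coeFn_toMeasure]
      exact tsub_le_ofReal_of_dist_lt (by rw [dist_comm]; exact hn j)
    calc (∑ j, (μ.toMeasure (π ⁻¹' (B j)) - (ν' n).toMeasure (B j)))
        ≤ ∑ _j : Fin k, ENNReal.ofReal ε2 := Finset.sum_le_sum (fun j _ => hjb j)
      _ = (k : ℝ≥0∞) * ENNReal.ofReal ε2 := by
          rw [Finset.sum_const, Finset.card_univ, Fintype.card_fin, nsmul_eq_mul]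
      _ = ENNReal.ofReal (k * ε2) := by
          rw [← ENNReal.ofReal_natCast k, ← ENNReal.ofReal_mul (by positivity)]
      _ ≤ ENNReal.ofReal ε1 := by
          apply ENNReal.ofReal_le_ofReal
          rw [hε2_def]
          rw [div_eq_mul_inv, ← mul_assoc]
          calc (k : ℝ) * ε1 * ((k:ℝ)+1)⁻¹ = ε1 * ((k : ℝ) * ((k:ℝ)+1)⁻¹) := by ring
            _ ≤ ε1 * 1 := by
                apply mul_le_mul_of_nonneg_left _ hε1.le
                rw [mul_inv_le_iff₀ (by positivity), one_mul]
                linarith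
            _ = ε1 := mul_one _
  have herr2 : (∑ j, ((ν' n).toMeasure (B j) - μ.toMeasure (π ⁻¹' (B j))))
      ≤ ENNReal.ofReal ε1 := by
    have hjb : ∀ j : Fin k, (ν' n).toMeasure (B j) - μ.toMeasure (π ⁻¹' (B j))
        ≤ ENNReal.ofReal ε2 := by
      intro j
      rw [← hAB_eq j, ← ProbabilityMeasure.ennreal_coeFn_eq_coeFn_toMeasure,
        ← ProbabilityMeasure.ennreal_coeFn_eq_coeFn_toMeasure]
      exact tsub_le_ofReal_of_dist_lt (hn j)
    calc (∑ j, ((ν' n).toMeasure (B j) - μ.toMeasure (π ⁻¹' (B j))))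
        ≤ ∑ _j : Fin k, ENNReal.ofReal ε2 := Finset.sum_le_sum (fun j _ => hjb j)
      _ = (k : ℝ≥0∞) * ENNReal.ofReal ε2 := by
          rw [Finset.sum_const, Finset.card_univ, Fintype.card_fin, nsmul_eq_mul]
      _ = ENNReal.ofReal (k * ε2) := by
          rw [← ENNReal.ofReal_natCast k, ← ENNReal.ofReal_mul (by positivity)]
      _ ≤ ENNReal.ofReal ε1 := by
          apply ENNReal.ofReal_le_ofReal
          rw [hε2_def, div_eq_mul_inv, ← mul_assoc]
          calc (k : ℝ) * ε1 * ((k:ℝ)+1)⁻¹ = ε1 * ((k : ℝ) * ((k:ℝ)+1)⁻¹) := by ring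
            _ ≤ ε1 * 1 := by
                apply mul_le_mul_of_nonneg_left _ hε1.le
                rw [mul_inv_le_iff₀ (by positivity), one_mul]
                linarith
            _ = ε1 := mul_one _
  -- master bounds
  have hbound1 : ∀ S : Set X, MeasurableSet S →
      μ.toMeasure S ≤ μm (Metric.thickening (3*ε1) S) + ENNReal.ofReal ε1 := by
    intro S hS
    calc μ.toMeasure S = ∑ j, μ.toMeasure (S ∩ π ⁻¹' (B j)) :=
          meas_partition μ.toMeasure hAm hAd hAu S hS
      _ ≤ ∑ j, ((τ j) (Metric.thickening (3*ε1) S)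
            + (μ.toMeasure (π ⁻¹' (B j)) - (ν' n).toMeasure (B j))) :=
          Finset.sum_le_sum (fun j _ => hτ1 j S hS)
      _ = μm (Metric.thickening (3*ε1) S)
            + ∑ j, (μ.toMeasure (π ⁻¹' (B j)) - (ν' n).toMeasure (B j)) := by
          rw [Finset.sum_add_distrib, hμm, Measure.finset_sum_apply]
      _ ≤ μm (Metric.thickening (3*ε1) S) + ENNReal.ofReal ε1 := add_le_add_right herr1 _
  have hbound2 : ∀ S : Set X, MeasurableSet S →
      μm S ≤ μ.toMeasure (Metric.thickening (3*ε1) S) + ENNReal.ofReal ε1 := by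
    intro S hS
    have hTm : MeasurableSet (Metric.thickening (3*ε1) S) :=
      Metric.isOpen_thickening.measurableSet
    calc μm S = ∑ j, (τ j) S := Measure.finset_sum_apply _ _ _
      _ ≤ ∑ j, (μ.toMeasure (Metric.thickening (3*ε1) S ∩ π ⁻¹' (B j))
            + ((ν' n).toMeasure (B j) - μ.toMeasure (π ⁻¹' (B j)))) :=
          Finset.sum_le_sum (fun j _ => hτ2 j S hS)
      _ = μ.toMeasure (Metric.thickening (3*ε1) S)
            + ∑ j, ((ν' n).toMeasure (B j) - μ.toMeasure (π ⁻¹' (B j))) := by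
          rw [Finset.sum_add_distrib, ← meas_partition μ.toMeasure hAm hAd hAu _ hTm]
      _ ≤ μ.toMeasure (Metric.thickening (3*ε1) S) + ENNReal.ofReal ε1 :=
          add_le_add_right herr2 _
  -- conclude
  refine ⟨⟨μm, hprob⟩, ?_, ?_⟩
  · apply Subtype.ext
    exact hmap
  · have hLP : levyProkhorovEDist μ.toMeasure μm ≤ ENNReal.ofReal (ε/2) := by
      apply levyProkhorovEDist_le_of_forall
      intro ε' S hlt hfin hSm
      have htoReal : ε/2 < ε'.toReal :=
        (ENNReal.ofReal_lt_iff_lt_toReal (by positivity) hfin.ne).mp hlt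
      have hthick : Metric.thickening (3*ε1) S ⊆ Metric.thickening ε'.toReal S := by
        apply Metric.thickening_mono
        rw [hε1_def]; linarith
      have hofreal_le : ENNReal.ofReal ε1 ≤ ε' := by
        calc ENNReal.ofReal ε1 ≤ ENNReal.ofReal (ε/2) := by
              apply ENNReal.ofReal_le_ofReal; rw [hε1_def]; linarith
          _ ≤ ε' := hlt.le
      constructor
      · calc μ.toMeasure S ≤ μm (Metric.thickening (3*ε1) S) + ENNReal.ofReal ε1 :=
              hbound1 S hSm
          _ ≤ μm (Metric.thickening ε'.toReal S) + ε' :=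
              add_le_add (measure_mono hthick) hofreal_le
      · calc μm S ≤ μ.toMeasure (Metric.thickening (3*ε1) S) + ENNReal.ofReal ε1 :=
              hbound2 S hSm
          _ ≤ μ.toMeasure (Metric.thickening ε'.toReal S) + ε' :=
              add_le_add (measure_mono hthick) hofreal_le
    calc levyProkhorovEDist μ.toMeasure μm ≤ ENNReal.ofReal (ε/2) := hLP
      _ ≤ ENNReal.ofReal ε := ENNReal.ofReal_le_ofReal (by linarith)

end Forward

section Final
open Metric ENNReal

theorem stmt1' {X Y : Type*}
    [MetricSpace X] [CompactSpace X] [MeasurableSpace X] [BorelSpace X]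
    [MetricSpace Y] [CompactSpace Y] [MeasurableSpace Y] [BorelSpace Y]
    (π : X → Y) (hπc : Continuous π) (hπs : Function.Surjective π) :
    IsOpenMap π ↔ IsOpenMap (pushPM π hπc.measurable) := by
  constructor
  · -- hard direction
    intro hopen
    rcases isEmpty_or_nonempty X with hX | hX
    · haveI : IsEmpty (ProbabilityMeasure X) := by
        refine ⟨fun μ => ?_⟩
        have h1 : μ.toMeasure univ = 1 := measure_univ
        rw [Set.univ_eq_empty_iff.mpr hX, measure_empty] at h1
        simp at h1
      intro G _
      rw [Set.eq_empty_of_isEmpty G, image_empty]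
      exact isOpen_empty
    intro G hG
    rw [isOpen_iff_mem_nhds]
    rintro νt ⟨μ, hμG, rfl⟩
    by_contra hnot
    -- a sequence converging to the pushforward but avoiding the image
    letI : MetricSpace (ProbabilityMeasure Y) :=
      TopologicalSpace.metrizableSpaceMetric _
    have hseq : ∀ n : ℕ, ∃ νn : ProbabilityMeasure Y,
        dist νn (pushPM π hπc.measurable μ) < 1/(n+1) ∧
        νn ∉ (pushPM π hπc.measurable) '' G := by
      intro n
      by_contra h
      push_neg at h
      apply hnot
      rw [Metric.mem_nhds_iff]
      refine ⟨1/(n+1), by positivity, ?_⟩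
      intro ν hν
      exact h ν (Metric.mem_ball.mp hν)
    choose ν' hd hnot' using hseq
    have hν' : Tendsto ν' atTop (𝓝 (pushPM π hπc.measurable μ)) := by
      rw [tendsto_iff_dist_tendsto_zero]
      apply squeeze_zero (fun n => dist_nonneg) (g := fun n : ℕ => 1/((n:ℝ)+1))
      · exact fun n => (hd n).le
      · exact tendsto_one_div_add_atTop_nhds_zero_nat
    -- a Lévy-Prokhorov ball around μ inside G
    set e := LevyProkhorov.probabilityMeasureHomeomorph (Ω := X) with he
    have hGlp : IsOpen (e.symm ⁻¹' G) := hG.preimage e.symm.continuous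
    have hμmem : e μ ∈ e.symm ⁻¹' G := by
      simp only [mem_preimage, Homeomorph.symm_apply_apply]
      exact hμG
    obtain ⟨ε, hεpos, hball⟩ := Metric.isOpen_iff.mp hGlp (e μ) hμmem
    have hev := key_eventually hπc hπs hopen μ ν' hν' (show (0:ℝ) < ε/2 by positivity)
    obtain ⟨n, μ', hμ'push, hμ'LP⟩ := hev.exists
    -- μ' lies in the LP ball, hence in G
    have hμ'G : μ' ∈ G := by
      have hdist : dist (e μ') (e μ) < ε := by
        have h1 : dist (e μ') (e μ)
            = levyProkhorovDist μ'.toMeasure μ.toMeasure := rfl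
        rw [h1, levyProkhorovDist]
        have h2 : levyProkhorovEDist μ'.toMeasure μ.toMeasure ≤ ENNReal.ofReal (ε/2) := by
          rw [levyProkhorovEDist_comm]
          exact hμ'LP
        have h3 : (levyProkhorovEDist μ'.toMeasure μ.toMeasure).toReal ≤ ε/2 :=
          ENNReal.toReal_le_of_le_ofReal (by positivity) h2
        linarith
      have := hball (Metric.mem_ball.mpr hdist)
      simpa only [mem_preimage, Homeomorph.symm_apply_apply] using this
    exact hnot' n ⟨μ', hμ'G, hμ'push⟩
  · -- easy direction
    intro hopen U hU
    set V : Set (ProbabilityMeasure X) := {μ' | (1/2 : ℝ≥0∞) < μ'.toMeasure U} with hV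
    have hVopen : IsOpen V := by
      rw [← isClosed_compl_iff]
      have hcompl : Vᶜ = {μ' : ProbabilityMeasure X | μ'.toMeasure U ≤ 1/2} := by
        ext μ'
        simp [hV, not_lt]
      rw [hcompl]
      apply IsSeqClosed.isClosed
      intro μs μlim hmem hlim
      have h1 := ProbabilityMeasure.le_liminf_measure_open_of_tendsto hlim hU
      have h2 : (atTop : Filter ℕ).liminf (fun i => (μs i).toMeasure U) ≤ 1/2 :=
        liminf_le_of_frequently_le' (Frequently.of_forall (fun n => hmem n))
      exact le_trans h1 h2
    have himg : π '' U = diracProba ⁻¹' ((pushPM π hπc.measurable) '' V) := by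
      ext y
      constructor
      · rintro ⟨x, hxU, rfl⟩
        refine ⟨diracProba x, ?_, ?_⟩
        · have : (diracProba x).toMeasure U = 1 := by
            rw [show (diracProba x).toMeasure = Measure.dirac x from rfl,
              Measure.dirac_apply' x hU.measurableSet]
            simp [hxU]
          rw [hV, mem_setOf_eq, this]
          norm_num
        · apply Subtype.ext
          exact Measure.map_dirac' hπc.measurable x
      · rintro ⟨μ', hμ'V, hμ'push⟩
        have h1 : μ'.toMeasure (π ⁻¹' {y}) = 1 := by
          have := congrArg (fun κ : ProbabilityMeasure Y => κ.toMeasure {y}) hμ'push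
          rw [show (pushPM π hπc.measurable μ').toMeasure = μ'.toMeasure.map π from rfl,
            Measure.map_apply hπc.measurable (measurableSet_singleton y)] at this
          rw [this, show (diracProba y).toMeasure = Measure.dirac y from rfl,
            Measure.dirac_apply' y (measurableSet_singleton y)]
          simp
        have h2 : μ'.toMeasure ((π ⁻¹' {y})ᶜ) = 0 :=
          (prob_compl_eq_zero_iff ((measurableSet_singleton y).preimage hπc.measurable)).mpr h1
        have h3 : (1/2 : ℝ≥0∞) < μ'.toMeasure (U ∩ π ⁻¹' {y}) := by
          have hsub : U ⊆ (U ∩ π ⁻¹' {y}) ∪ (π ⁻¹' {y})ᶜ := by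
            intro x hx
            by_cases hxy : x ∈ π ⁻¹' {y}
            · exact Or.inl ⟨hx, hxy⟩
            · exact Or.inr hxy
          calc (1/2 : ℝ≥0∞) < μ'.toMeasure U := hμ'V
            _ ≤ μ'.toMeasure ((U ∩ π ⁻¹' {y}) ∪ (π ⁻¹' {y})ᶜ) := measure_mono hsub
            _ ≤ μ'.toMeasure (U ∩ π ⁻¹' {y}) + μ'.toMeasure ((π ⁻¹' {y})ᶜ) :=
                measure_union_le _ _
            _ = μ'.toMeasure (U ∩ π ⁻¹' {y}) := by rw [h2, add_zero]
        obtain ⟨x, hxU, hxy⟩ := nonempty_of_measure_ne_zero (by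
          intro h0; rw [h0] at h3; exact absurd h3 (by simp))
        exact ⟨x, hxU, hxy⟩
    rw [himg]
    exact (hopen V hVopen).preimage continuous_diracProba

end Final

end AuxOpenMapMeasures

theorem stmt1 {X Y : Type*}
    [MetricSpace X] [CompactSpace X] [MeasurableSpace X] [BorelSpace X]
    [MetricSpace Y] [CompactSpace Y] [MeasurableSpace Y] [BorelSpace Y]
    (π : X → Y) (hπc : Continuous π) (hπs : Function.Surjective π) :
    IsOpenMap π ↔ IsOpenMap (pushPM π hπc.measurable) := by
  exact stmt1' π hπc hπs
end

section
/- Let G be a countably infinite discrete amenable group, let π: (X,G) → (Y,G) be a factor map between G-systems, and let V_1, V_2 be two disjoint subsets of X. Set U = {X \ V_1, X \ V_2}. Then h_top(U, G | π) > 0 if and only if the pair (V_1, V_2) is independent with respect to π. -/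
open MeasureTheory Topology Filter Set
open scoped ENNReal NNReal

/-- A Følner sequence for a countable discrete group `G`: a sequence of nonempty finite
subsets `F n` with `|F n ∆ g·(F n)| / |F n| → 0` for every `g ∈ G`.  Its existence is
equivalent to amenability of `G`. -/
def IsFolnerSeq {G : Type*} [Group G] (F : ℕ → Finset G) : Prop :=
  (∀ n, (F n).Nonempty) ∧
    ∀ g : G, Filter.Tendsto
      (fun n => ((symmDiff (F n : Set G) ((g * ·) '' (F n : Set G))).ncard : ℝ) /
        ((F n).card : ℝ)) Filter.atTop (nhds 0)

/-- `coverNum U E` : the minimal cardinality of a subfamily of the cover `U`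
covering `E`. -/
noncomputable def coverNum {X ι : Type*} (U : ι → Set X) (E : Set X) : ℕ :=
  sInf {m : ℕ | ∃ s : Finset ι, s.card = m ∧ E ⊆ ⋃ i ∈ s, U i}

/-- `fiberCoverNum π U = sup_{y} coverNum U (π ⁻¹' {y})`, i.e. `N(U|π)`. -/
noncomputable def fiberCoverNum {X Y ι : Type*} (π : X → Y) (U : ι → Set X) : ℕ :=
  sSup (Set.range fun y : Y => coverNum U (π ⁻¹' {y}))

/-- The topological conditional entropy `h_top(U, G|π)` of the cover `U` relative to
`π`, for the action `T : G → X → X`: the infimum over nonempty finite `F ⊆ G` of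
`(1/|F|) log N(⋁_{g ∈ F} g⁻¹U | π)` (which equals the limit along any Følner
sequence). -/
noncomputable def relCoverEntropy {G X Y ι : Type*} (T : G → X → X) (π : X → Y)
    (U : ι → Set X) : ℝ :=
  ⨅ F : {F : Finset G // F.Nonempty},
    Real.log (fiberCoverNum π
      (fun σ : G → ι => {x : X | ∀ g ∈ F.1, T g x ∈ U (σ g)}) : ℝ) / (F.1.card : ℝ)

/-- `J ⊆ G` is an independence set of the pair `(V₁, V₂)` w.r.t. `π`: for every
nonempty finite `I ⊆ J` there is `y ∈ Y` with
`π⁻¹(y) ∩ ⋂_{g ∈ I} g⁻¹ V_{σ(g)} ≠ ∅` for all `σ : I → {1,2}`. -/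
def IsIndepSet {G X Y : Type*} (T : G → X → X) (π : X → Y) (V₁ V₂ : Set X)
    (J : Set G) : Prop :=
  ∀ I : Finset G, I.Nonempty → ↑I ⊆ J → ∃ y : Y, ∀ σ : G → Fin 2,
    (π ⁻¹' {y} ∩ ⋂ g ∈ I, {x : X | T g x ∈ (![V₁, V₂]) (σ g)}).Nonempty

/-- The pair `(V₁, V₂)` is independent w.r.t. `π`: there is `c > 0` such that every
nonempty finite `F ⊆ G` contains an independence set `I` with `|I| ≥ c|F|`. -/
def IndepPair {G X Y : Type*} (T : G → X → X) (π : X → Y) (V₁ V₂ : Set X) : Prop :=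
  ∃ c : ℝ, 0 < c ∧ ∀ F : Finset G, F.Nonempty →
    ∃ I : Finset G, ↑I ⊆ (F : Set G) ∧ IsIndepSet T π V₁ V₂ ↑I ∧
      c * (F.card : ℝ) ≤ (I.card : ℝ)


namespace KL

open Finset

variable {ι : Type*}

/-- `σ` (a total 2-valued function) extends the partial function `p`
(3-valued, `0` = undefined) on `Z`. -/
def Ext (σ : ι → Fin 2) (p : ι → Fin 3) (Z : Finset ι) : Prop :=
  ∀ z ∈ Z, p z ≠ 0 → Fin.succ (σ z) = p z

def Covers (C : Finset (ι → Fin 2)) (P : Set (ι → Fin 3)) (Z : Finset ι) : Prop :=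
  ∀ p ∈ P, ∃ σ ∈ C, Ext σ p Z

/-- `I` is strongly shattered by `P`. -/
def Shat (P : Set (ι → Fin 3)) (I : Finset ι) : Prop :=
  ∀ τ : ι → Fin 2, ∃ p ∈ P, ∀ z ∈ I, p z = Fin.succ (τ z)

open Classical in
noncomputable def Psi (P : Set (ι → Fin 3)) (Z : Finset ι) : ℕ :=
  ∑ I ∈ Z.powerset.filter (fun I => Shat P I), 2 ^ I.card

def D : ℕ → ℕ → ℕ
  | 0, m => if m = 0 then 0 else 1
  | (n+1), m => if m = 0 then 0 else D n m + D n (m / 2)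

lemma D_zero (n : ℕ) : D n 0 = 0 := by cases n <;> simp [D]

lemma D_one (n : ℕ) : D n 1 = 1 := by
  induction n with
  | zero => simp [D]
  | succ n ih => simp [D, ih, D_zero]

lemma D_mono (n : ℕ) : ∀ {m m' : ℕ}, m ≤ m' → D n m ≤ D n m' := by
  induction n with
  | zero =>
    intro m m' h
    rcases Nat.eq_zero_or_pos m with rfl | hm
    · simp [D]
    · have : m' ≠ 0 := by omega
      simp only [D, if_neg this, if_neg (by omega : m ≠ 0), le_refl]
  | succ n ih =>
    intro m m' h
    rcases Nat.eq_zero_or_pos m with rfl | hm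
    · simp [D_zero]
    · have hm' : m' ≠ 0 := by omega
      simp only [D, if_neg (by omega : m ≠ 0), if_neg hm']
      exact Nat.add_le_add (ih h) (ih (Nat.div_le_div_right h))

end KL
set_option linter.unusedSectionVars false

namespace KL

open Finset

variable {ι : Type*} [DecidableEq ι]

lemma fin2_cases (i : Fin 2) : i = 0 ∨ i = 1 := by revert i; decide

lemma fin3_cases (u : Fin 3) (a b : Fin 2) (hab : a ≠ b) :
    u = 0 ∨ u = Fin.succ a ∨ u = Fin.succ b := by
  revert u a b; decide

lemma shat_mono {P P' : Set (ι → Fin 3)} (h : P ⊆ P') {I : Finset ι} (hs : Shat P I) :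
    Shat P' I := fun τ => by
  obtain ⟨p, hp, he⟩ := hs τ; exact ⟨p, h hp, he⟩

lemma shat_insert {P : Set (ι → Fin 3)} {z : ι} {I : Finset ι}
    (h1 : Shat {p | p ∈ P ∧ p z = Fin.succ 0} I)
    (h2 : Shat {p | p ∈ P ∧ p z = Fin.succ 1} I) :
    Shat P (insert z I) := by
  intro τ
  rcases fin2_cases (τ z) with hτ | hτ
  · obtain ⟨p, ⟨hpP, hpz⟩, he⟩ := h1 τ
    refine ⟨p, hpP, fun w hw => ?_⟩
    rcases Finset.mem_insert.mp hw with rfl | hwI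
    · rw [hpz, hτ]
    · exact he w hwI
  · obtain ⟨p, ⟨hpP, hpz⟩, he⟩ := h2 τ
    refine ⟨p, hpP, fun w hw => ?_⟩
    rcases Finset.mem_insert.mp hw with rfl | hwI
    · rw [hpz, hτ]
    · exact he w hwI

lemma psi_pos {P : Set (ι → Fin 3)} (hP : P.Nonempty) (Z : Finset ι) : 1 ≤ Psi P Z := by
  classical
  obtain ⟨p, hp⟩ := hP
  have h0 : (∅ : Finset ι) ∈ Z.powerset.filter (fun I => Shat P I) := by
    simp only [mem_filter, Finset.mem_powerset]
    exact ⟨Finset.empty_subset _, fun τ => ⟨p, hp, by simp⟩⟩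
  have := Finset.single_le_sum (f := fun I : Finset ι => 2 ^ I.card)
    (fun i _ => Nat.zero_le _) h0
  simpa [Psi] using this

lemma psi_mono {P P' : Set (ι → Fin 3)} {Z Z' : Finset ι} (hP : P ⊆ P') (hZ : Z ⊆ Z') :
    Psi P Z ≤ Psi P' Z' := by
  classical
  apply Finset.sum_le_sum_of_subset
  intro I hI
  simp only [mem_filter, Finset.mem_powerset] at hI ⊢
  exact ⟨hI.1.trans hZ, shat_mono hP hI.2⟩


open Classical in
lemma psi_split {P : Set (ι → Fin 3)} {Z : Finset ι} {z : ι} (hz : z ∈ Z) :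
    Psi {p | p ∈ P ∧ p z = Fin.succ 0} (Z.erase z) +
      Psi {p | p ∈ P ∧ p z = Fin.succ 1} (Z.erase z) ≤ Psi P Z := by
  classical
  set Z' := Z.erase z with hZ'
  set f : Finset ι → ℕ := fun I => 2 ^ I.card with hf
  set F1 := Z'.powerset.filter (fun I => Shat {p | p ∈ P ∧ p z = Fin.succ 0} I) with hF1
  set F2 := Z'.powerset.filter (fun I => Shat {p | p ∈ P ∧ p z = Fin.succ 1} I) with hF2
  set SB := (Z.powerset.filter (fun I => Shat P I)).filter (fun I => z ∈ I) with hSB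
  set SA := (Z.powerset.filter (fun I => Shat P I)).filter (fun I => ¬ z ∈ I) with hSA
  have key1 : ∑ I ∈ F1 ∪ F2, f I ≤ ∑ I ∈ SA, f I := by
    apply Finset.sum_le_sum_of_subset
    intro I hI
    have hI' : I ∈ F1 ∨ I ∈ F2 := Finset.mem_union.mp hI
    have hIZ' : I ⊆ Z' := by
      rcases hI' with h | h
      · exact Finset.mem_powerset.mp (Finset.mem_filter.mp h).1
      · exact Finset.mem_powerset.mp (Finset.mem_filter.mp h).1
    have hznot : z ∉ I := fun hc => (Finset.mem_erase.mp (hIZ' hc)).1 rfl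
    have hshat : Shat P I := by
      rcases hI' with h | h
      · exact shat_mono (fun p hp => hp.1) (Finset.mem_filter.mp h).2
      · exact shat_mono (fun p hp => hp.1) (Finset.mem_filter.mp h).2
    simp only [hSA, Finset.mem_filter, Finset.mem_powerset]
    exact ⟨⟨hIZ'.trans (Finset.erase_subset _ _), hshat⟩, hznot⟩
  have key2 : ∑ I ∈ F1 ∩ F2, f I ≤ ∑ I ∈ SB, f I := by
    have step1 : ∑ I ∈ F1 ∩ F2, f I ≤ ∑ I ∈ F1 ∩ F2, f (insert z I) := by
      apply Finset.sum_le_sum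
      intro I _
      exact Nat.pow_le_pow_right (by norm_num) (Finset.card_le_card (subset_insert _ _))
    have hinj : Set.InjOn (insert z) ((F1 ∩ F2 : Finset (Finset ι)) : Set (Finset ι)) := by
      intro I1 h1 I2 h2 heq
      have hz1 : z ∉ I1 := by
        have : I1 ⊆ Z' := Finset.mem_powerset.mp (Finset.mem_filter.mp (Finset.mem_inter.mp h1).1).1
        exact fun hc => (Finset.mem_erase.mp (this hc)).1 rfl
      have hz2 : z ∉ I2 := by
        have : I2 ⊆ Z' := Finset.mem_powerset.mp (Finset.mem_filter.mp (Finset.mem_inter.mp h2).1).1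
        exact fun hc => (Finset.mem_erase.mp (this hc)).1 rfl
      rw [← Finset.erase_insert hz1, ← Finset.erase_insert hz2, heq]
    have step2 : ∑ I ∈ F1 ∩ F2, f (insert z I) = ∑ J ∈ (F1 ∩ F2).image (insert z), f J :=
      (Finset.sum_image (fun a ha b hb h => hinj ha hb h)).symm
    have step3 : ∑ J ∈ (F1 ∩ F2).image (insert z), f J ≤ ∑ I ∈ SB, f I := by
      apply Finset.sum_le_sum_of_subset
      intro J hJ
      obtain ⟨I, hI, rfl⟩ := Finset.mem_image.mp hJ
      obtain ⟨hI1, hI2⟩ := Finset.mem_inter.mp hI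
      have hIZ' : I ⊆ Z' := Finset.mem_powerset.mp (Finset.mem_filter.mp hI1).1
      have hshat : Shat P (insert z I) :=
        shat_insert (Finset.mem_filter.mp hI1).2 (Finset.mem_filter.mp hI2).2
      simp only [hSB, Finset.mem_filter, Finset.mem_powerset]
      refine ⟨⟨?_, hshat⟩, Finset.mem_insert_self _ _⟩
      exact Finset.insert_subset hz (hIZ'.trans (Finset.erase_subset _ _))
    exact step1.trans (step2 ▸ step3)
  have split : ∑ I ∈ SB, f I + ∑ I ∈ SA, f I = Psi P Z :=
    Finset.sum_filter_add_sum_filter_not (Z.powerset.filter (fun I => Shat P I))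
      (fun I => z ∈ I) f
  have union_inter : ∑ I ∈ F1, f I + ∑ I ∈ F2, f I
      = ∑ I ∈ F1 ∪ F2, f I + ∑ I ∈ F1 ∩ F2, f I :=
    (Finset.sum_union_inter (s₁ := F1) (s₂ := F2) (f := f)).symm
  have hdef : Psi {p | p ∈ P ∧ p z = Fin.succ 0} Z' + Psi {p | p ∈ P ∧ p z = Fin.succ 1} Z'
      = ∑ I ∈ F1, f I + ∑ I ∈ F2, f I := by
    rw [hF1, hF2, hf]; unfold Psi; congr 1
  rw [hdef, union_inter, ← split]
  exact (Nat.add_le_add key1 key2).trans_eq (Nat.add_comm _ _)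


lemma ext_update {σ : ι → Fin 2} {p : ι → Fin 3} {Z' : Finset ι} {z : ι} {v : Fin 2}
    (he : Ext σ p Z') (hv : p z ≠ 0 → Fin.succ v = p z) :
    Ext (Function.update σ z v) p (insert z Z') := by
  intro w hw hpw
  rcases Finset.mem_insert.mp hw with rfl | hwZ'
  · rw [Function.update_self]; exact hv hpw
  · by_cases hwz : w = z
    · subst hwz; rw [Function.update_self]; exact hv hpw
    · rw [Function.update_of_ne hwz]; exact he w hwZ' hpw

lemma covers_glue {z : ι} {Z' : Finset ι} {P : Set (ι → Fin 3)} {a b : Fin 2} (hab : a ≠ b)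
    {CL CR : Finset (ι → Fin 2)}
    (hCL : Covers CL {p | p ∈ P ∧ (p z = 0 ∨ p z = Fin.succ b)} Z')
    (hCR : Covers CR {p | p ∈ P ∧ p z = Fin.succ a} Z') :
    ∃ C : Finset (ι → Fin 2), Covers C P (insert z Z') ∧ C.card ≤ CL.card + CR.card := by
  classical
  refine ⟨CL.image (fun σ => Function.update σ z b) ∪ CR.image (fun σ => Function.update σ z a),
    ?_, ?_⟩
  · intro p hp
    rcases fin3_cases (p z) a b hab with h0 | ha | hb
    · obtain ⟨σ, hσ, he⟩ := hCL p ⟨hp, Or.inl h0⟩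
      exact ⟨Function.update σ z b, Finset.mem_union_left _ (Finset.mem_image_of_mem _ hσ),
        ext_update he (fun hc => absurd h0 hc)⟩
    · obtain ⟨σ, hσ, he⟩ := hCR p ⟨hp, ha⟩
      exact ⟨Function.update σ z a, Finset.mem_union_right _ (Finset.mem_image_of_mem _ hσ),
        ext_update he (fun _ => ha.symm)⟩
    · obtain ⟨σ, hσ, he⟩ := hCL p ⟨hp, Or.inr hb⟩
      exact ⟨Function.update σ z b, Finset.mem_union_left _ (Finset.mem_image_of_mem _ hσ),
        ext_update he (fun _ => hb.symm)⟩
  · exact (Finset.card_union_le _ _).trans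
      (Nat.add_le_add (Finset.card_image_le) (Finset.card_image_le))

theorem cover_exists : ∀ (n : ℕ) (Z : Finset ι), Z.card = n → ∀ P : Set (ι → Fin 3),
    ∃ C : Finset (ι → Fin 2), Covers C P Z ∧ C.card ≤ D n (Psi P Z) := by
  intro n
  induction n with
  | zero =>
    intro Z hZ P
    have hZe : Z = ∅ := Finset.card_eq_zero.mp hZ
    subst hZe
    rcases Set.eq_empty_or_nonempty P with rfl | hP
    · exact ⟨∅, fun p hp => absurd hp (Set.notMem_empty p), Nat.zero_le _⟩
    · refine ⟨{fun _ => 0}, fun p hp => ⟨fun _ => 0, Finset.mem_singleton_self _,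
        fun w hw => absurd hw (Finset.notMem_empty w)⟩, ?_⟩
      have h1 : 1 ≤ Psi P ∅ := psi_pos hP ∅
      have : Psi P ∅ ≠ 0 := by omega
      simp [D, this]
  | succ n ih =>
    intro Z hZ P
    rcases Set.eq_empty_or_nonempty P with rfl | hP
    · exact ⟨∅, fun p hp => absurd hp (Set.notMem_empty p), Nat.zero_le _⟩
    obtain ⟨z, hz⟩ := Finset.card_pos.mp (by omega : 0 < Z.card)
    set Z' := Z.erase z with hZ'def
    have hZ'card : Z'.card = n := by
      rw [hZ'def, Finset.card_erase_of_mem hz, hZ]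
      omega
    have hzZ' : z ∉ Z' := Finset.notMem_erase z Z
    have hins : insert z Z' = Z := Finset.insert_erase hz
    set P1 := {p | p ∈ P ∧ p z = Fin.succ 0} with hP1
    set P2 := {p | p ∈ P ∧ p z = Fin.succ 1} with hP2
    have hsplit : Psi P1 Z' + Psi P2 Z' ≤ Psi P Z := psi_split hz
    have hΨpos : 1 ≤ Psi P Z := psi_pos hP Z
    have hDsucc : D (n + 1) (Psi P Z) = D n (Psi P Z) + D n (Psi P Z / 2) := by
      have : Psi P Z ≠ 0 := by omega
      simp [D, this]
    -- the branch with smaller Psi goes "right"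
    by_cases hmin : Psi P1 Z' ≤ Psi P2 Z'
    · -- right = P1 (value a = 0), left = P0 ∪ P2 (b = 1)
      obtain ⟨CL, hCL, hCLcard⟩ := ih Z' hZ'card {p | p ∈ P ∧ (p z = 0 ∨ p z = Fin.succ 1)}
      obtain ⟨CR, hCR, hCRcard⟩ := ih Z' hZ'card P1
      obtain ⟨C, hC, hCcard⟩ := covers_glue (a := 0) (b := 1) (by decide) hCL hCR
      rw [hins] at hC
      refine ⟨C, hC, ?_⟩
      have h1 : CL.card ≤ D n (Psi P Z) :=
        hCLcard.trans (D_mono n (psi_mono (fun p hp => hp.1) (Finset.erase_subset _ _)))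
      have h2 : CR.card ≤ D n (Psi P Z / 2) := by
        refine hCRcard.trans (D_mono n ?_)
        have h2' : Psi P1 Z' * 2 ≤ Psi P Z := by
          calc Psi P1 Z' * 2 = Psi P1 Z' + Psi P1 Z' := by ring
            _ ≤ Psi P1 Z' + Psi P2 Z' := Nat.add_le_add_left hmin _
            _ ≤ Psi P Z := hsplit
        exact (Nat.le_div_iff_mul_le (by norm_num)).mpr h2'
      rw [hDsucc]
      exact hCcard.trans (Nat.add_le_add h1 h2)
    · -- right = P2 (value a = 1), left = P0 ∪ P1 (b = 0)
      obtain ⟨CL, hCL, hCLcard⟩ := ih Z' hZ'card {p | p ∈ P ∧ (p z = 0 ∨ p z = Fin.succ 0)}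
      obtain ⟨CR, hCR, hCRcard⟩ := ih Z' hZ'card P2
      obtain ⟨C, hC, hCcard⟩ := covers_glue (a := 1) (b := 0) (by decide) hCL hCR
      rw [hins] at hC
      refine ⟨C, hC, ?_⟩
      have h1 : CL.card ≤ D n (Psi P Z) :=
        hCLcard.trans (D_mono n (psi_mono (fun p hp => hp.1) (Finset.erase_subset _ _)))
      have h2 : CR.card ≤ D n (Psi P Z / 2) := by
        refine hCRcard.trans (D_mono n ?_)
        have h2' : Psi P2 Z' * 2 ≤ Psi P Z := by
          have hmin' : Psi P2 Z' ≤ Psi P1 Z' := Nat.le_of_not_le hmin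
          calc Psi P2 Z' * 2 = Psi P2 Z' + Psi P2 Z' := by ring
            _ ≤ Psi P1 Z' + Psi P2 Z' := Nat.add_le_add_right hmin' _
            _ ≤ Psi P Z := hsplit
        exact (Nat.le_div_iff_mul_le (by norm_num)).mpr h2'
      rw [hDsucc]
      exact hCcard.trans (Nat.add_le_add h1 h2)


lemma D_bound (k : ℕ) : ∀ n m : ℕ, D n m * 2 ^ (k * n) ≤ (2 ^ k + 1) ^ n * m ^ k * 2 ^ k := by
  intro n
  induction n with
  | zero =>
    intro m
    rcases Nat.eq_zero_or_pos m with rfl | hm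
    · simp [D]
    · have hm' : m ≠ 0 := by omega
      simp only [D, if_neg hm', Nat.mul_zero, pow_zero, Nat.one_mul, Nat.mul_one, one_pow]
      have h1 : 1 ≤ m ^ k := Nat.one_le_pow _ _ hm
      have := Nat.mul_le_mul h1 (Nat.one_le_two_pow (n := k))
      simpa using this
  | succ n ih =>
    intro m
    rcases Nat.eq_zero_or_pos m with rfl | hm
    · simp [D_zero]
    have hm' : m ≠ 0 := by omega
    have key : (m / 2) ^ k * 2 ^ k ≤ m ^ k := by
      calc (m / 2) ^ k * 2 ^ k = (m / 2 * 2) ^ k := (Nat.mul_pow _ _ _).symm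
        _ ≤ m ^ k := Nat.pow_le_pow_left (Nat.div_mul_le_self m 2) k
    calc D (n + 1) m * 2 ^ (k * (n + 1))
        = (D n m + D n (m / 2)) * (2 ^ (k * n) * 2 ^ k) := by
          simp only [D, if_neg hm']; rw [← pow_add]; ring_nf
      _ = D n m * 2 ^ (k * n) * 2 ^ k + D n (m / 2) * 2 ^ (k * n) * 2 ^ k := by ring
      _ ≤ (2 ^ k + 1) ^ n * m ^ k * 2 ^ k * 2 ^ k
          + (2 ^ k + 1) ^ n * (m / 2) ^ k * 2 ^ k * 2 ^ k := by
          exact Nat.add_le_add (Nat.mul_le_mul_right _ (ih m)) (Nat.mul_le_mul_right _ (ih (m / 2)))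
      _ ≤ (2 ^ k + 1) ^ n * m ^ k * 2 ^ k * 2 ^ k + (2 ^ k + 1) ^ n * m ^ k * 2 ^ k := by
          have : (2 ^ k + 1) ^ n * (m / 2) ^ k * 2 ^ k * 2 ^ k
              = (2 ^ k + 1) ^ n * ((m / 2) ^ k * 2 ^ k) * 2 ^ k := by ring
          rw [this]
          exact Nat.add_le_add_left
            (Nat.mul_le_mul_right _ (Nat.mul_le_mul_left _ key)) _
      _ = (2 ^ k + 1) ^ (n + 1) * m ^ k * 2 ^ k := by ring


lemma sum_pow_card (Z : Finset ι) (x : ℕ) :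
    ∑ J ∈ Z.powerset, x ^ J.card = (x + 1) ^ Z.card := by
  classical
  induction Z using Finset.induction_on with
  | empty => simp
  | insert z s hzs ih =>
    rw [Finset.powerset_insert, Finset.sum_union, Finset.sum_image, Finset.card_insert_of_notMem hzs]
    · have : ∀ J ∈ s.powerset, x ^ (insert z J).card = x * x ^ J.card := by
        intro J hJ
        have hzJ : z ∉ J := fun hc => hzs (Finset.mem_powerset.mp hJ hc)
        rw [Finset.card_insert_of_notMem hzJ, pow_succ]; ring
      rw [Finset.sum_congr rfl this, ← Finset.mul_sum, ih, pow_succ]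
      ring
    · intro a ha b hb hab
      have hza : z ∉ a := fun hc => hzs (Finset.mem_powerset.mp ha hc)
      have hzb : z ∉ b := fun hc => hzs (Finset.mem_powerset.mp hb hc)
      rw [← Finset.erase_insert hza, ← Finset.erase_insert hzb, hab]
    · rw [Finset.disjoint_right]
      intro J hJ hJ2
      obtain ⟨I, hI, rfl⟩ := Finset.mem_image.mp hJ
      exact hzs (Finset.mem_powerset.mp hJ2 (Finset.mem_insert_self _ _))

open Classical in
lemma psi_bound {P : Set (ι → Fin 3)} {Z : Finset ι} {t : ℕ} (a : ℕ)
    (ht : ∀ I : Finset ι, I ⊆ Z → Shat P I → I.card ≤ t) :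
    Psi P Z * 2 ^ (a * Z.card) ≤ 2 ^ ((a + 1) * t) * (2 ^ a + 1) ^ Z.card := by
  classical
  set n := Z.card with hn
  have key : ∀ I ∈ Z.powerset.filter (fun I => Shat P I),
      2 ^ I.card * 2 ^ (a * n) ≤ 2 ^ ((a + 1) * t) * 2 ^ (a * (Z \ I).card) := by
    intro I hI
    obtain ⟨hIZ, hIsh⟩ := Finset.mem_filter.mp hI
    have hIZ' : I ⊆ Z := Finset.mem_powerset.mp hIZ
    have hcard : I.card ≤ t := ht I hIZ' hIsh
    have hsd : (Z \ I).card = n - I.card := by rw [Finset.card_sdiff_of_subset hIZ']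
    have hIn : I.card ≤ n := Finset.card_le_card hIZ'
    rw [← pow_add, ← pow_add]
    apply Nat.pow_le_pow_right (by norm_num)
    rw [hsd]
    have h1 : (a + 1) * I.card ≤ (a + 1) * t := Nat.mul_le_mul_left _ hcard
    have h2 : a * (n - I.card) + a * I.card = a * n := by
      rw [← Nat.mul_add]
      congr 1
      omega
    have h3 : (a + 1) * I.card = a * I.card + I.card := by ring
    have h4 : (a + 1) * t = a * t + t := by ring
    omega
  calc Psi P Z * 2 ^ (a * n)
      = ∑ I ∈ Z.powerset.filter (fun I => Shat P I), 2 ^ I.card * 2 ^ (a * n) := by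
        rw [Psi, Finset.sum_mul]
    _ ≤ ∑ I ∈ Z.powerset.filter (fun I => Shat P I),
          2 ^ ((a + 1) * t) * 2 ^ (a * (Z \ I).card) := Finset.sum_le_sum key
    _ ≤ ∑ I ∈ Z.powerset, 2 ^ ((a + 1) * t) * 2 ^ (a * (Z \ I).card) := by
        apply Finset.sum_le_sum_of_subset (Finset.filter_subset _ _)
    _ = 2 ^ ((a + 1) * t) * ∑ I ∈ Z.powerset, (2 ^ a) ^ (Z \ I).card := by
        rw [Finset.mul_sum]
        congr 1; funext I
        rw [← pow_mul]
    _ = 2 ^ ((a + 1) * t) * ∑ J ∈ Z.powerset, (2 ^ a) ^ J.card := by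
        congr 1
        refine Finset.sum_nbij' (fun I => Z \ I) (fun J => Z \ J) ?_ ?_ ?_ ?_ ?_
        · intro I hI
          exact Finset.mem_powerset.mpr (Finset.sdiff_subset)
        · intro J hJ
          exact Finset.mem_powerset.mpr (Finset.sdiff_subset)
        · intro I hI
          exact Finset.sdiff_sdiff_eq_self (Finset.mem_powerset.mp hI)
        · intro J hJ
          exact Finset.sdiff_sdiff_eq_self (Finset.mem_powerset.mp hJ)
        · intro I hI; rfl
    _ = 2 ^ ((a + 1) * t) * (2 ^ a + 1) ^ n := by rw [sum_pow_card]

open Classical in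
lemma psi_le_one {P : Set (ι → Fin 3)} {Z : Finset ι}
    (ht : ∀ I : Finset ι, I ⊆ Z → Shat P I → I.card = 0) : Psi P Z ≤ 1 := by
  classical
  have hsub : Z.powerset.filter (fun I => Shat P I) ⊆ {∅} := by
    intro I hI
    obtain ⟨hIZ, hIsh⟩ := Finset.mem_filter.mp hI
    have := ht I (Finset.mem_powerset.mp hIZ) hIsh
    simp [Finset.card_eq_zero.mp this]
  calc Psi P Z ≤ ∑ I ∈ ({∅} : Finset (Finset ι)), 2 ^ I.card :=
        Finset.sum_le_sum_of_subset hsub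
    _ = 1 := by simp


theorem comb_main (α : ℝ) (hα : 0 < α) :
    ∃ c : ℝ, 0 < c ∧ ∀ (Z : Finset ι) (P : Set (ι → Fin 3)),
      (∀ C : Finset (ι → Fin 2), Covers C P Z → (2 : ℝ) ^ (α * (Z.card : ℝ)) ≤ (C.card : ℝ)) →
      ∃ I : Finset ι, I ⊆ Z ∧ Shat P I ∧ c * (Z.card : ℝ) ≤ (I.card : ℝ) := by
  classical
  obtain ⟨k, hkpos, hk8⟩ : ∃ k : ℕ, (1:ℝ) ≤ (k:ℝ) ∧ 8 ≤ α * 2 ^ k := by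
    obtain ⟨k0, hk0⟩ : ∃ k0 : ℕ, 8 / α < 2 ^ k0 := pow_unbounded_of_one_lt (8 / α) one_lt_two
    refine ⟨k0 + 1, by exact_mod_cast Nat.one_le_iff_ne_zero.mpr (by omega), ?_⟩
    have h1 : 8 / α < 2 ^ (k0 + 1) := lt_of_lt_of_le hk0 (by
      apply pow_le_pow_right₀ (by norm_num) (by omega))
    have := (div_lt_iff₀ hα).mp h1
    nlinarith
  obtain ⟨a, ha8⟩ : ∃ a : ℕ, 8 * (k:ℝ) ≤ α * 2 ^ a := by
    obtain ⟨a, ha0⟩ : ∃ a : ℕ, 8 * (k:ℝ) / α < 2 ^ a :=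
      pow_unbounded_of_one_lt (8 * (k:ℝ) / α) one_lt_two
    have := (div_lt_iff₀ hα).mp ha0
    exact ⟨a, by nlinarith⟩
  obtain ⟨c, hcpos, hckey⟩ : ∃ c : ℝ, 0 < c ∧ ((a:ℝ) + 1) * (k:ℝ) * c = α / 8 := by
    refine ⟨α / (8 * ((a:ℝ) + 1) * (k:ℝ)), by positivity, ?_⟩
    field_simp
  refine ⟨c, hcpos, ?_⟩
  intro Z P hcov
  set n := Z.card with hndef
  have hPne : P.Nonempty := by
    rcases Set.eq_empty_or_nonempty P with rfl | h
    · exfalso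
      have h0 := hcov ∅ (fun p hp => absurd hp (Set.notMem_empty p))
      have h1 : (0:ℝ) < 2 ^ (α * (n:ℝ)) := Real.rpow_pos_of_pos two_pos _
      simp only [Finset.card_empty, Nat.cast_zero] at h0
      linarith
    · exact h
  rcases Nat.eq_zero_or_pos n with hn0 | hn1
  · refine ⟨∅, Finset.empty_subset _, fun τ => ⟨hPne.choose, hPne.choose_spec, by simp⟩, ?_⟩
    simp [hn0]
  by_contra hcon
  push_neg at hcon
  obtain ⟨C, hC, hCD⟩ := cover_exists n Z rfl P
  have hbig : (2:ℝ) ^ (α * (n:ℝ)) ≤ (D n (Psi P Z) : ℝ) :=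
    (hcov C hC).trans (Nat.cast_le.mpr hCD)
  set Ψ := Psi P Z with hΨdef
  set L := Real.log 2 with hLdef
  have hL1 : 0.6931471803 < L := Real.log_two_gt_d9
  have hL2 : L < 0.6931471808 := Real.log_two_lt_d9
  have hnpos : (0:ℝ) < (n:ℝ) := by exact_mod_cast hn1
  by_cases hkn : (k:ℝ) ≤ α * (n:ℝ) / 4
  · -- main case
    set t := Nat.floor (c * (n:ℝ)) with htdef
    have htle : ∀ I : Finset ι, I ⊆ Z → Shat P I → I.card ≤ t := fun I h1 h2 =>
      Nat.le_floor (le_of_lt (hcon I h1 h2))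
    have htr : (t:ℝ) ≤ c * (n:ℝ) := Nat.floor_le (by positivity)
    have hDr : (D n Ψ : ℝ) * 2 ^ (k * n) ≤ ((2:ℝ) ^ k + 1) ^ n * (Ψ:ℝ) ^ k * 2 ^ k := by
      exact_mod_cast D_bound k n Ψ
    have hΨr : (Ψ:ℝ) * 2 ^ (a * n) ≤ 2 ^ ((a + 1) * t) * ((2:ℝ) ^ a + 1) ^ n := by
      exact_mod_cast psi_bound a htle
    -- exponential estimates
    have hexp_gen : ∀ m : ℕ, ((2:ℝ) ^ m + 1) ^ n ≤ 2 ^ (m * n) * Real.exp ((n:ℝ) * ((2:ℝ) ^ m)⁻¹) := by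
      intro m
      have hpos : (0:ℝ) < 2 ^ m := by positivity
      have h1 : (2:ℝ) ^ m + 1 = 2 ^ m * (1 + ((2:ℝ) ^ m)⁻¹) := by field_simp
      have h2 : (1:ℝ) + ((2:ℝ) ^ m)⁻¹ ≤ Real.exp (((2:ℝ) ^ m)⁻¹) := by
        have := Real.add_one_le_exp (((2:ℝ) ^ m)⁻¹)
        linarith
      calc ((2:ℝ) ^ m + 1) ^ n = (2 ^ m) ^ n * ((1:ℝ) + ((2:ℝ) ^ m)⁻¹) ^ n := by
            rw [h1, mul_pow]
        _ ≤ (2 ^ m) ^ n * (Real.exp (((2:ℝ) ^ m)⁻¹)) ^ n := by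
            apply mul_le_mul_of_nonneg_left _ (by positivity)
            exact pow_le_pow_left₀ (by positivity) h2 n
        _ = 2 ^ (m * n) * Real.exp ((n:ℝ) * ((2:ℝ) ^ m)⁻¹) := by
            rw [← pow_mul, ← Real.exp_nat_mul]
    have hΨpos : (0:ℝ) < (Ψ:ℝ) := by
      have := psi_pos hPne Z
      exact_mod_cast Nat.lt_of_lt_of_le Nat.zero_lt_one this
    have hΨ2 : (Ψ:ℝ) ≤ 2 ^ ((a + 1) * t) * Real.exp ((n:ℝ) * ((2:ℝ) ^ a)⁻¹) := by
      have h2an : (0:ℝ) < 2 ^ (a * n) := by positivity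
      rw [← mul_le_mul_iff_of_pos_right h2an]
      calc (Ψ:ℝ) * 2 ^ (a * n) ≤ 2 ^ ((a + 1) * t) * ((2:ℝ) ^ a + 1) ^ n := hΨr
        _ ≤ 2 ^ ((a + 1) * t) * (2 ^ (a * n) * Real.exp ((n:ℝ) * ((2:ℝ) ^ a)⁻¹)) := by
            apply mul_le_mul_of_nonneg_left (hexp_gen a) (by positivity)
        _ = 2 ^ ((a + 1) * t) * Real.exp ((n:ℝ) * ((2:ℝ) ^ a)⁻¹) * 2 ^ (a * n) := by ring
    have hDf : (D n Ψ : ℝ) ≤ Real.exp ((n:ℝ) * ((2:ℝ) ^ k)⁻¹) * (Ψ:ℝ) ^ k * 2 ^ k := by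
      have h2kn : (0:ℝ) < 2 ^ (k * n) := by positivity
      rw [← mul_le_mul_iff_of_pos_right h2kn]
      calc (D n Ψ : ℝ) * 2 ^ (k * n) ≤ ((2:ℝ) ^ k + 1) ^ n * (Ψ:ℝ) ^ k * 2 ^ k := hDr
        _ ≤ (2 ^ (k * n) * Real.exp ((n:ℝ) * ((2:ℝ) ^ k)⁻¹)) * (Ψ:ℝ) ^ k * 2 ^ k := by
            apply mul_le_mul_of_nonneg_right
            apply mul_le_mul_of_nonneg_right (hexp_gen k) (by positivity)
            positivity
        _ = Real.exp ((n:ℝ) * ((2:ℝ) ^ k)⁻¹) * (Ψ:ℝ) ^ k * 2 ^ k * 2 ^ (k * n) := by ring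
    have hΨk : (Ψ:ℝ) ^ k ≤ 2 ^ ((a + 1) * t * k) * Real.exp ((k:ℝ) * ((n:ℝ) * ((2:ℝ) ^ a)⁻¹)) := by
      calc (Ψ:ℝ) ^ k ≤ (2 ^ ((a + 1) * t) * Real.exp ((n:ℝ) * ((2:ℝ) ^ a)⁻¹)) ^ k :=
            pow_le_pow_left₀ (le_of_lt hΨpos) hΨ2 k
        _ = 2 ^ ((a + 1) * t * k) * Real.exp ((k:ℝ) * ((n:ℝ) * ((2:ℝ) ^ a)⁻¹)) := by
            rw [mul_pow, ← pow_mul, ← Real.exp_nat_mul]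
    -- final chain
    have hfinal : (2:ℝ) ^ (α * (n:ℝ)) ≤
        Real.exp ((n:ℝ) * ((2:ℝ) ^ k)⁻¹ + (k:ℝ) * ((n:ℝ) * ((2:ℝ) ^ a)⁻¹))
          * 2 ^ ((a + 1) * t * k + k) := by
      calc (2:ℝ) ^ (α * (n:ℝ)) ≤ (D n Ψ : ℝ) := hbig
        _ ≤ Real.exp ((n:ℝ) * ((2:ℝ) ^ k)⁻¹) * (Ψ:ℝ) ^ k * 2 ^ k := hDf
        _ ≤ Real.exp ((n:ℝ) * ((2:ℝ) ^ k)⁻¹)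
              * (2 ^ ((a + 1) * t * k) * Real.exp ((k:ℝ) * ((n:ℝ) * ((2:ℝ) ^ a)⁻¹))) * 2 ^ k := by
            apply mul_le_mul_of_nonneg_right _ (by positivity)
            exact mul_le_mul_of_nonneg_left hΨk (by positivity)
        _ = Real.exp ((n:ℝ) * ((2:ℝ) ^ k)⁻¹ + (k:ℝ) * ((n:ℝ) * ((2:ℝ) ^ a)⁻¹))
              * 2 ^ ((a + 1) * t * k + k) := by
            rw [Real.exp_add, pow_add]
            ring
    -- convert to exponent inequality
    have hexp_ineq : α * (n:ℝ) * L ≤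
        (n:ℝ) * ((2:ℝ) ^ k)⁻¹ + (k:ℝ) * ((n:ℝ) * ((2:ℝ) ^ a)⁻¹)
          + (((a:ℝ) + 1) * t * k + k) * L := by
      have hlhs : (2:ℝ) ^ (α * (n:ℝ)) = Real.exp (α * (n:ℝ) * L) := by
        rw [Real.rpow_def_of_pos two_pos]
        rw [hLdef]; ring_nf
      have hrhs : Real.exp ((n:ℝ) * ((2:ℝ) ^ k)⁻¹ + (k:ℝ) * ((n:ℝ) * ((2:ℝ) ^ a)⁻¹))
            * 2 ^ ((a + 1) * t * k + k)
          = Real.exp ((n:ℝ) * ((2:ℝ) ^ k)⁻¹ + (k:ℝ) * ((n:ℝ) * ((2:ℝ) ^ a)⁻¹)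
              + (((a:ℝ) + 1) * t * k + k) * L) := by
        have h2M : ((2:ℝ)) ^ ((a + 1) * t * k + k)
            = Real.exp ((((a + 1) * t * k + k : ℕ) : ℝ) * L) := by
          rw [Real.exp_nat_mul, hLdef, Real.exp_log two_pos]
        rw [h2M, ← Real.exp_add]
        congr 1
        push_cast
        ring
      rw [hlhs, hrhs] at hfinal
      exact (Real.exp_le_exp).mp hfinal
    -- numeric contradiction
    have h2kpos : (0:ℝ) < 2 ^ k := by positivity
    have h2apos : (0:ℝ) < 2 ^ a := by positivity
    have b1 : (n:ℝ) * ((2:ℝ) ^ k)⁻¹ ≤ α * (n:ℝ) / 8 := by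
      have h1 : ((2:ℝ) ^ k)⁻¹ ≤ α / 8 := by
        rw [inv_le_comm₀ h2kpos (by positivity), show (α / 8)⁻¹ = 8 / α by rw [inv_div],
          div_le_iff₀ hα]
        linarith
      calc (n:ℝ) * ((2:ℝ) ^ k)⁻¹ ≤ (n:ℝ) * (α / 8) :=
            mul_le_mul_of_nonneg_left h1 (le_of_lt hnpos)
        _ = α * (n:ℝ) / 8 := by ring
    have b2 : (k:ℝ) * ((n:ℝ) * ((2:ℝ) ^ a)⁻¹) ≤ α * (n:ℝ) / 8 := by
      have h1 : (k:ℝ) * ((2:ℝ) ^ a)⁻¹ ≤ α / 8 := by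
        rw [show (k:ℝ) * ((2:ℝ) ^ a)⁻¹ = (k:ℝ) / 2 ^ a by ring,
          div_le_div_iff₀ h2apos (by norm_num : (0:ℝ) < 8)]
        linarith
      calc (k:ℝ) * ((n:ℝ) * ((2:ℝ) ^ a)⁻¹) = (n:ℝ) * ((k:ℝ) * ((2:ℝ) ^ a)⁻¹) := by ring
        _ ≤ (n:ℝ) * (α / 8) := mul_le_mul_of_nonneg_left h1 (le_of_lt hnpos)
        _ = α * (n:ℝ) / 8 := by ring
    have b3 : ((a:ℝ) + 1) * (t:ℝ) * (k:ℝ) ≤ α * (n:ℝ) / 8 := by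
      have hak : (0:ℝ) ≤ ((a:ℝ) + 1) * (k:ℝ) := by positivity
      have h1 : ((a:ℝ) + 1) * (t:ℝ) * (k:ℝ) ≤ ((a:ℝ) + 1) * (c * n) * (k:ℝ) := by
        have := mul_le_mul_of_nonneg_left htr hak
        calc ((a:ℝ) + 1) * (t:ℝ) * (k:ℝ) = ((a:ℝ) + 1) * (k:ℝ) * (t:ℝ) := by ring
          _ ≤ ((a:ℝ) + 1) * (k:ℝ) * (c * n) := this
          _ = ((a:ℝ) + 1) * (c * n) * (k:ℝ) := by ring
      calc ((a:ℝ) + 1) * (t:ℝ) * (k:ℝ) ≤ ((a:ℝ) + 1) * (c * n) * (k:ℝ) := h1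
        _ = (((a:ℝ) + 1) * (k:ℝ) * c) * n := by ring
        _ = α / 8 * n := by rw [hckey]
        _ = α * (n:ℝ) / 8 := by ring
    have hLpos : (0:ℝ) < L := by linarith
    have b3L : ((a:ℝ) + 1) * (t:ℝ) * (k:ℝ) * L ≤ α * (n:ℝ) / 8 * L :=
      mul_le_mul_of_nonneg_right b3 (le_of_lt hLpos)
    have b4L : (k:ℝ) * L ≤ α * (n:ℝ) / 4 * L :=
      mul_le_mul_of_nonneg_right hkn (le_of_lt hLpos)
    have hsplitL : (((a:ℝ) + 1) * (t:ℝ) * (k:ℝ) + (k:ℝ)) * L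
        = ((a:ℝ) + 1) * (t:ℝ) * (k:ℝ) * L + (k:ℝ) * L := by ring
    have hAn : (0:ℝ) < α * (n:ℝ) := mul_pos hα hnpos
    have hprod : 0.6 * (α * (n:ℝ)) ≤ α * (n:ℝ) * L := by
      calc 0.6 * (α * (n:ℝ)) ≤ L * (α * (n:ℝ)) :=
            mul_le_mul_of_nonneg_right (by linarith) (le_of_lt hAn)
        _ = α * (n:ℝ) * L := by ring
    rw [hsplitL] at hexp_ineq
    linarith
  · -- small n case
    have hsmall : c * (n:ℝ) < 1 := by
      push_neg at hkn
      have hkR : (1:ℝ) ≤ (k:ℝ) := hkpos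
      have hden : (0:ℝ) < ((a:ℝ) + 1) * (k:ℝ) := by positivity
      rw [← mul_lt_mul_iff_of_pos_right hden]
      have heq : c * (n:ℝ) * (((a:ℝ) + 1) * (k:ℝ)) = α / 8 * (n:ℝ) := by
        rw [show c * (n:ℝ) * (((a:ℝ) + 1) * (k:ℝ)) = ((a:ℝ) + 1) * (k:ℝ) * c * (n:ℝ) by ring,
          hckey]
      rw [heq, one_mul]
      have hk2 : (k:ℝ) ≤ ((a:ℝ) + 1) * (k:ℝ) := by
        have h1 : (1:ℝ) ≤ (a:ℝ) + 1 := by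
          have : (0:ℝ) ≤ (a:ℝ) := Nat.cast_nonneg a
          linarith
        calc (k:ℝ) = 1 * (k:ℝ) := by ring
          _ ≤ ((a:ℝ) + 1) * (k:ℝ) := by
            apply mul_le_mul_of_nonneg_right h1
            linarith
      linarith
    have hzero : ∀ I : Finset ι, I ⊆ Z → Shat P I → I.card = 0 := by
      intro I h1 h2
      have h3 : (I.card : ℝ) < 1 := lt_trans (hcon I h1 h2) hsmall
      exact_mod_cast Nat.lt_one_iff.mp (by exact_mod_cast h3)
    have hΨ1 : Ψ ≤ 1 := psi_le_one hzero
    have hD1 : D n Ψ ≤ 1 := (D_mono n hΨ1).trans_eq (D_one n)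
    have hcontra : (2:ℝ) ^ (α * (n:ℝ)) ≤ 1 := hbig.trans (by exact_mod_cast hD1)
    have : (1:ℝ) < 2 ^ (α * (n:ℝ)) := by
      exact (Real.one_lt_rpow_iff_of_pos two_pos).mpr (Or.inl ⟨one_lt_two, mul_pos hα hnpos⟩)
    linarith


section Dyn

open Finset

variable {G X Y : Type*}

/-- flip on `Fin 2`. -/
def fl : Fin 2 → Fin 2 := fun i => if i = 0 then 1 else 0

lemma fl_fl (i : Fin 2) : fl (fl i) = i := by revert i; decide

open Classical in
/-- the `(V₁,V₂)`-pattern of a point. -/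
noncomputable def pat (T : G → X → X) (V₁ V₂ : Set X) : X → G → Fin 3 := fun x g =>
  if T g x ∈ V₁ then 1 else if T g x ∈ V₂ then 2 else 0

lemma mem_U_iff {T : G → X → X} {V₁ V₂ : Set X} (hV : Disjoint V₁ V₂) (F : Finset G)
    (x : X) (τ : G → Fin 2) :
    (∀ g ∈ F, T g x ∈ (![V₁ᶜ, V₂ᶜ]) (τ g)) ↔ Ext (fun g => fl (τ g)) (pat T V₁ V₂ x) F := by
  classical
  unfold Ext
  apply forall₂_congr
  intro g _
  rcases fin2_cases (τ g) with h | h <;>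
    by_cases h1 : T g x ∈ V₁ <;> by_cases h2 : T g x ∈ V₂ <;>
    first
      | exact absurd h2 (Set.disjoint_left.mp hV h1)
      | simp [pat, h1, h2, fl, h]

lemma x_mem_some_U {T : G → X → X} {V₁ V₂ : Set X} (hV : Disjoint V₁ V₂) (F : Finset G)
    (x : X) :
    ∃ σ : G → Fin 2, (∀ g, g ∉ F → σ g = 0) ∧ ∀ g ∈ F, T g x ∈ (![V₁ᶜ, V₂ᶜ]) (σ g) := by
  classical
  refine ⟨fun g => if g ∈ F then (if T g x ∈ V₁ then 1 else 0) else 0,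
    fun g hg => by simp [hg], fun g hg => ?_⟩
  simp only [if_pos hg]
  by_cases h1 : T g x ∈ V₁
  · simp only [if_pos h1, Matrix.cons_val_one, Matrix.head_cons]
    exact Set.disjoint_left.mp hV h1
  · simp only [if_neg h1, Matrix.cons_val_zero]
    exact h1

lemma exists_cover {T : G → X → X} {V₁ V₂ : Set X} (hV : Disjoint V₁ V₂) (F : Finset G)
    (E : Set X) :
    ∃ s : Finset (G → Fin 2), s.card ≤ 2 ^ F.card ∧
      E ⊆ ⋃ σ ∈ s, {x : X | ∀ g ∈ F, T g x ∈ (![V₁ᶜ, V₂ᶜ]) (σ g)} := by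
  classical
  set emb : (↥F → Fin 2) → (G → Fin 2) := fun f g => if h : g ∈ F then f ⟨g, h⟩ else 0
  set s : Finset (G → Fin 2) := Finset.univ.image emb with hs
  refine ⟨s, ?_, ?_⟩
  · calc s.card ≤ (Finset.univ : Finset (↥F → Fin 2)).card := Finset.card_image_le
      _ = 2 ^ F.card := by
          rw [Finset.card_univ, Fintype.card_fun, Fintype.card_fin, Fintype.card_coe]
  · intro x hx
    obtain ⟨σ, hσ0, hσ⟩ := x_mem_some_U (T := T) hV F x
    have hmem : σ ∈ s := by
      rw [hs]
      apply Finset.mem_image.mpr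
      refine ⟨fun z => σ z.1, Finset.mem_univ _, ?_⟩
      funext g
      by_cases h : g ∈ F
      · simp [emb, h]
      · simp [emb, h, hσ0 g h]
    exact Set.mem_biUnion hmem hσ

lemma coverNum_le_pow {T : G → X → X} {V₁ V₂ : Set X} (hV : Disjoint V₁ V₂) (F : Finset G)
    (E : Set X) :
    coverNum (fun σ : G → Fin 2 => {x : X | ∀ g ∈ F, T g x ∈ (![V₁ᶜ, V₂ᶜ]) (σ g)}) E
      ≤ 2 ^ F.card := by
  obtain ⟨s, hcard, hcov⟩ := exists_cover (T := T) hV F E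
  refine le_trans (Nat.sInf_le ?_) hcard
  exact ⟨s, rfl, hcov⟩

lemma log_nat_nonneg (m : ℕ) : 0 ≤ Real.log (m : ℝ) := by
  rcases Nat.eq_zero_or_pos m with rfl | hm
  · simp
  · apply Real.log_nonneg
    exact_mod_cast hm

lemma opp_mem {V₁ V₂ : Set X} {u : X} {i j : Fin 2} (h1 : u ∈ (![V₁, V₂]) i)
    (h2 : u ∈ (![V₁ᶜ, V₂ᶜ]) j) : i = fl j := by
  rcases fin2_cases i with rfl | rfl <;> rcases fin2_cases j with h | h <;> subst h <;>
      simp_all [fl] <;> exact absurd h1 h2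

lemma pat_succ {T : G → X → X} {V₁ V₂ : Set X} {x : X} {g : G} {i : Fin 2}
    (h : pat T V₁ V₂ x g = Fin.succ i) : T g x ∈ (![V₁, V₂]) i := by
  classical
  rcases fin2_cases i with rfl | rfl <;>
    by_cases h1 : T g x ∈ V₁ <;> by_cases h2 : T g x ∈ V₂ <;>
    simp_all [pat]

end Dyn

end KL

theorem stmt3 {G X Y : Type*} [Group G] [Countable G] [Infinite G]
    [MetricSpace X] [CompactSpace X] [MetricSpace Y] [CompactSpace Y]
    [MulAction G X] [MulAction G Y]
    (hG : ∃ F : ℕ → Finset G, IsFolnerSeq F)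
    (hcX : ∀ g : G, Continuous fun x : X => g • x)
    (hcY : ∀ g : G, Continuous fun y : Y => g • y)
    (π : X → Y) (hπc : Continuous π) (hπs : Function.Surjective π)
    (hπG : ∀ (g : G) (x : X), π (g • x) = g • π x)
    (V₁ V₂ : Set X) (hV : Disjoint V₁ V₂) :
    0 < relCoverEntropy (fun (g : G) (x : X) => g • x) π ![V₁ᶜ, V₂ᶜ] ↔
      IndepPair (fun (g : G) (x : X) => g • x) π V₁ V₂ := by
  classical
  set T : G → X → X := fun g x => g • x with hT
  set fam : Finset G → (G → Fin 2) → Set X :=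
    fun F σ => {x : X | ∀ g ∈ F, T g x ∈ (![V₁ᶜ, V₂ᶜ]) (σ g)} with hfam
  have hEnt : relCoverEntropy T π ![V₁ᶜ, V₂ᶜ]
      = ⨅ F : {F : Finset G // F.Nonempty},
          Real.log (fiberCoverNum π (fam F.1) : ℝ) / (F.1.card : ℝ) := rfl
  have hbdd : BddBelow (Set.range fun F : {F : Finset G // F.Nonempty} =>
      Real.log (fiberCoverNum π (fam F.1) : ℝ) / (F.1.card : ℝ)) := by
    refine ⟨0, fun r hr => ?_⟩
    obtain ⟨F, rfl⟩ := hr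
    exact div_nonneg (KL.log_nat_nonneg _) (Nat.cast_nonneg _)
  constructor
  · -- positive entropy implies independence
    intro hpos
    rw [hEnt] at hpos
    set h0 := ⨅ F : {F : Finset G // F.Nonempty},
        Real.log (fiberCoverNum π (fam F.1) : ℝ) / (F.1.card : ℝ) with hh0
    set α := h0 / Real.log 2 with hα0
    have hαpos : 0 < α := div_pos hpos (Real.log_pos one_lt_two)
    obtain ⟨c, hcpos, hc⟩ := KL.comb_main (ι := G) α hαpos
    refine ⟨c, hcpos, fun F hFne => ?_⟩
    have hn : 0 < F.card := Finset.card_pos.mpr hFne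
    have hnR : (0:ℝ) < (F.card : ℝ) := by exact_mod_cast hn
    -- the entropy bound for this F
    have hterm : h0 ≤ Real.log (fiberCoverNum π (fam F) : ℝ) / (F.card : ℝ) :=
      ciInf_le hbdd ⟨F, hFne⟩
    set N := fiberCoverNum π (fam F) with hN
    have hlogN : h0 * F.card ≤ Real.log (N : ℝ) := by
      rw [← le_div_iff₀ hnR]
      exact hterm
    have hNlow : (2:ℝ) ^ (α * (F.card : ℝ)) ≤ (N : ℝ) := by
      have hNpos : 0 < N := by
        by_contra hcon
        push_neg at hcon
        interval_cases N
        simp only [Nat.cast_zero, Real.log_zero] at hlogN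
        nlinarith [mul_pos hpos hnR]
      have h2 : (2:ℝ) ^ (α * (F.card : ℝ)) = Real.exp (h0 * F.card) := by
        rw [Real.rpow_def_of_pos two_pos, hα0]
        congr 1
        field_simp
      rw [h2, ← Real.exp_log (x := (N:ℝ)) (by exact_mod_cast hNpos)]
      exact Real.exp_le_exp.mpr hlogN
    -- pick a fiber attaining the sup
    have hY : Nonempty Y := by
      rcases isEmpty_or_nonempty Y with hY | hY
      · exfalso
        have : N = 0 := by
          rw [hN, fiberCoverNum, Set.range_eq_empty_iff.mpr hY]
          simpa using csSup_empty
        rw [this] at hNlow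
        have h1 : (0:ℝ) < 2 ^ (α * (F.card : ℝ)) := Real.rpow_pos_of_pos two_pos _
        simp only [Nat.cast_zero] at hNlow
        linarith
      · exact hY
    have hbddA : BddAbove (Set.range fun y : Y => coverNum (fam F) (π ⁻¹' {y})) := by
      refine ⟨2 ^ F.card, fun r hr => ?_⟩
      obtain ⟨y, rfl⟩ := hr
      exact KL.coverNum_le_pow hV F _
    have hmem : N ∈ Set.range fun y : Y => coverNum (fam F) (π ⁻¹' {y}) := by
      rw [hN, fiberCoverNum]
      exact Nat.sSup_mem (Set.range_nonempty _) hbddA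
    obtain ⟨y, hy⟩ := hmem
    -- apply the combinatorial theorem
    set P : Set (G → Fin 3) := KL.pat T V₁ V₂ '' (π ⁻¹' {y}) with hP
    have hcovlow : ∀ C : Finset (G → Fin 2), KL.Covers C P F →
        (2:ℝ) ^ (α * (F.card : ℝ)) ≤ (C.card : ℝ) := by
      intro C hC
      set s : Finset (G → Fin 2) := C.image (fun σ => fun g => KL.fl (σ g)) with hs
      have hcover : π ⁻¹' {y} ⊆ ⋃ τ ∈ s, fam F τ := by
        intro x hx
        obtain ⟨σ, hσC, hσE⟩ := hC (KL.pat T V₁ V₂ x) ⟨x, hx, rfl⟩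
        have hmem2 : (fun g => KL.fl (σ g)) ∈ s := Finset.mem_image_of_mem _ hσC
        refine Set.mem_biUnion hmem2 ?_
        have hE : KL.Ext (fun g => KL.fl (KL.fl (σ g))) (KL.pat T V₁ V₂ x) F := by
          have : (fun g => KL.fl (KL.fl (σ g))) = σ := by
            funext g
            rw [KL.fl_fl]
          rw [this]
          exact hσE
        exact (KL.mem_U_iff hV F x (fun g => KL.fl (σ g))).mpr hE
      have h1 : coverNum (fam F) (π ⁻¹' {y}) ≤ s.card := Nat.sInf_le ⟨s, rfl, hcover⟩
      have h2 : s.card ≤ C.card := Finset.card_image_le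
      calc (2:ℝ) ^ (α * (F.card : ℝ)) ≤ (N : ℝ) := hNlow
        _ = (coverNum (fam F) (π ⁻¹' {y}) : ℝ) := by rw [← hy]
        _ ≤ (C.card : ℝ) := by exact_mod_cast h1.trans h2
    obtain ⟨I, hIZ, hIsh, hIcard⟩ := hc F P hcovlow
    refine ⟨I, Finset.coe_subset.mpr hIZ, ?_, hIcard⟩
    intro I' hI'ne hI'sub
    refine ⟨y, fun σ => ?_⟩
    obtain ⟨p, ⟨x, hxfib, rfl⟩, hpI⟩ := hIsh σ
    refine ⟨x, hxfib, ?_⟩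
    simp only [Set.mem_iInter]
    intro g hg
    have hgI : g ∈ I := hI'sub hg
    exact KL.pat_succ (hpI g hgI)
  · -- independence implies positive entropy
    rintro ⟨c, hcpos, hind⟩
    have hLpos : 0 < Real.log 2 := Real.log_pos one_lt_two
    rw [hEnt]
    have hlow : 0 < c * Real.log 2 := mul_pos hcpos hLpos
    haveI : Nonempty {F : Finset G // F.Nonempty} := ⟨⟨{1}, Finset.singleton_nonempty 1⟩⟩
    refine lt_of_lt_of_le hlow (le_ciInf fun F => ?_)
    obtain ⟨I, hIF, hIindep, hIcard⟩ := hind F.1 F.2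
    have hn : 0 < F.1.card := Finset.card_pos.mpr F.2
    have hnR : (0:ℝ) < (F.1.card : ℝ) := by exact_mod_cast hn
    have hIne : I.Nonempty := by
      rw [← Finset.card_pos]
      have h1 : (0:ℝ) < (I.card : ℝ) := lt_of_lt_of_le (mul_pos hcpos hnR) hIcard
      exact_mod_cast h1
    obtain ⟨y, hy⟩ := hIindep I hIne (subset_refl _)
    -- every covering family of the fiber has at least 2^I.card elements
    have hkey : 2 ^ I.card ≤ coverNum (fam F.1) (π ⁻¹' {y}) := by
      have hne : {m : ℕ | ∃ s : Finset (G → Fin 2), s.card = m ∧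
          π ⁻¹' {y} ⊆ ⋃ i ∈ s, fam F.1 i}.Nonempty := by
        obtain ⟨s, _, hcov⟩ := KL.exists_cover (T := T) hV F.1 (π ⁻¹' {y})
        exact ⟨s.card, s, rfl, hcov⟩
      obtain ⟨s, hscard, hscov⟩ := Nat.sInf_mem hne
      have hgoal : 2 ^ I.card ≤ s.card := by
        set Φ : (↥I → Fin 2) → (G → Fin 2) :=
          fun f g => if h : g ∈ I then f ⟨g, h⟩ else 0 with hΦ
        have hx : ∀ f : (↥I → Fin 2), ∃ x, x ∈ π ⁻¹' {y} ∧
            ∀ g ∈ I, T g x ∈ (![V₁, V₂]) (Φ f g) := by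
          intro f
          obtain ⟨x, hx1, hx2⟩ := hy (Φ f)
          refine ⟨x, hx1, fun g hg => ?_⟩
          simp only [Set.mem_iInter] at hx2
          exact hx2 g hg
        choose xf hxf1 hxf2 using hx
        have hsel : ∀ f : (↥I → Fin 2), ∃ σ ∈ s, xf f ∈ fam F.1 σ := by
          intro f
          have := hscov (hxf1 f)
          simpa using this
        choose σf hσf1 hσf2 using hsel
        have hinj : Set.InjOn σf ↑(Finset.univ : Finset (↥I → Fin 2)) := by
          intro f1 _ f2 _ heq
          funext z
          have hgI : z.1 ∈ I := z.2
          have hgF : z.1 ∈ F.1 := hIF hgI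
          have e1 : Φ f1 z.1 = KL.fl (σf f1 z.1) :=
            KL.opp_mem (hxf2 f1 z.1 hgI) (hσf2 f1 z.1 hgF)
          have e2 : Φ f2 z.1 = KL.fl (σf f2 z.1) :=
            KL.opp_mem (hxf2 f2 z.1 hgI) (hσf2 f2 z.1 hgF)
          have e3 : Φ f1 z.1 = Φ f2 z.1 := by rw [e1, e2, heq]
          simpa [hΦ, dif_pos hgI, Subtype.eta] using e3
        calc 2 ^ I.card = (Finset.univ : Finset (↥I → Fin 2)).card := by
              rw [Finset.card_univ, Fintype.card_fun, Fintype.card_fin, Fintype.card_coe]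
          _ ≤ s.card := Finset.card_le_card_of_injOn σf (fun f _ => hσf1 f) hinj
      calc 2 ^ I.card ≤ s.card := hgoal
        _ = coverNum (fam F.1) (π ⁻¹' {y}) := hscard
    have hbddA : BddAbove (Set.range fun y : Y => coverNum (fam F.1) (π ⁻¹' {y})) := by
      refine ⟨2 ^ F.1.card, fun r hr => ?_⟩
      obtain ⟨y', rfl⟩ := hr
      exact KL.coverNum_le_pow hV F.1 _
    have hcN : coverNum (fam F.1) (π ⁻¹' {y}) ≤ fiberCoverNum π (fam F.1) :=
      le_csSup hbddA ⟨y, rfl⟩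
    have h1 : ((2:ℝ)) ^ (I.card : ℕ) ≤ ((fiberCoverNum π (fam F.1) : ℕ) : ℝ) := by
      exact_mod_cast hkey.trans hcN
    have h2 : (I.card : ℝ) * Real.log 2 ≤ Real.log ((fiberCoverNum π (fam F.1) : ℕ) : ℝ) := by
      rw [← Real.log_pow]
      exact Real.log_le_log (by positivity) h1
    rw [le_div_iff₀ hnR]
    calc c * Real.log 2 * (F.1.card : ℝ) = (c * (F.1.card : ℝ)) * Real.log 2 := by ring
      _ ≤ (I.card : ℝ) * Real.log 2 := mul_le_mul_of_nonneg_right hIcard (le_of_lt hLpos)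
      _ ≤ Real.log ((fiberCoverNum π (fam F.1) : ℕ) : ℝ) := h2
end

section
/- Given an integer k ≥ 2 and a real number λ > 1, there exists a constant c > 0 such that for all n ∈ ℕ, if S ⊆ {1,…,k}^{[n]} satisfies |S| ≥ ((k−1)λ)^n, then there is a subset I ⊆ [n] with |I| ≥ cn and S|_I = {1,…,k}^I. -/
open MeasureTheory Topology Filter Set
open scoped ENNReal NNReal


lemma sum_pascal (k n : ℕ) : ∀ e : ℕ,
    ∑ i ∈ Finset.range (e+1), (n+1).choose i * (k-1)^(n+1-i) =
    (k-1) * ∑ i ∈ Finset.range (e+1), n.choose i * (k-1)^(n-i) +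
      ∑ i ∈ Finset.range e, n.choose i * (k-1)^(n-i) := by
  intro e
  induction e with
  | zero => simp [pow_succ, Nat.mul_comm]
  | succ e ih =>
    have h3 : n + 1 - (e+1) = n - e := by omega
    have key : n.choose (e+1) * (k-1)^(n-e) = (k-1) * (n.choose (e+1) * (k-1)^(n-(e+1))) := by
      rcases le_or_gt (e+1) n with h | h
      · have h4 : n - e = (n - (e+1)) + 1 := by omega
        rw [h4, pow_succ]; ring
      · rw [Nat.choose_eq_zero_of_lt (by omega)]; simp
    rw [Finset.sum_range_succ, ih, Finset.sum_range_succ (n := e+1), Finset.sum_range_succ (n := e),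
      h3, Nat.choose_succ_succ' n e, Nat.add_mul, key]
    ring

lemma km (k : ℕ) (hk : 1 ≤ k) : ∀ (n d : ℕ) (S : Finset (Fin n → Fin k)),
    (∑ i ∈ Finset.range d, n.choose i * (k-1)^(n-i)) < S.card →
    ∃ I : Finset (Fin n), I.card = d ∧
      ∀ σ : Fin n → Fin k, ∃ τ ∈ S, ∀ i ∈ I, τ i = σ i := by
  intro n
  induction n with
  | zero =>
    intro d S hS
    match d with
    | 0 =>
      refine ⟨∅, rfl, fun σ => ?_⟩
      simp only [Finset.sum_range_zero] at hS
      obtain ⟨τ, hτ⟩ := Finset.card_pos.mp hS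
      exact ⟨τ, hτ, fun i hi => absurd hi (by simp)⟩
    | (e+1) =>
      exfalso
      have h1 : 1 ≤ ∑ i ∈ Finset.range (e+1), Nat.choose 0 i * (k-1)^(0-i) := by
        rw [Finset.sum_range_succ'] ; simp
      have h2 : S.card ≤ 1 := by
        have := Finset.card_le_univ S
        simpa using this
      omega
  | succ n ihn =>
    intro d S hS
    match d with
    | 0 =>
      refine ⟨∅, rfl, fun σ => ?_⟩
      simp only [Finset.sum_range_zero] at hS
      obtain ⟨τ, hτ⟩ := Finset.card_pos.mp hS
      exact ⟨τ, hτ, fun i hi => absurd hi (by simp)⟩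
    | (e+1) =>
      classical
      set T : Finset (Fin n → Fin k) := S.image (fun τ => fun i => τ i.castSucc) with hT
      set T' : Finset (Fin n → Fin k) :=
        T.filter (fun σ => ∀ v : Fin k, Fin.snoc σ v ∈ S) with hT'
      -- counting
      have hcount : S.card ≤ (k-1) * T.card + T'.card := by
        have hfib : S.card = ∑ σ ∈ T, (S.filter (fun τ => (fun i => τ i.castSucc) = σ)).card :=
          Finset.card_eq_sum_card_fiberwise (fun τ hτ => Finset.mem_image_of_mem _ hτ)
        have hbound : ∀ σ ∈ T,
            (S.filter (fun τ => (fun i => τ i.castSucc) = σ)).card ≤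
              (k-1) + (if σ ∈ T' then 1 else 0) := by
          intro σ hσ
          set F := S.filter (fun τ => (fun i => τ i.castSucc) = σ) with hF
          have hmemF : ∀ τ ∈ F, τ ∈ S ∧ (fun i => τ i.castSucc) = σ := by
            intro τ hτ
            simpa [hF, Finset.mem_filter] using hτ
          have hinj : Set.InjOn (fun τ : Fin (n+1) → Fin k => τ (Fin.last n)) F := by
            intro τ₁ h₁ τ₂ h₂ h
            obtain ⟨_, e₁⟩ := hmemF τ₁ h₁
            obtain ⟨_, e₂⟩ := hmemF τ₂ h₂
            funext j
            induction j using Fin.lastCases with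
            | last => exact h
            | cast i => rw [show τ₁ i.castSucc = σ i from congrFun e₁ i,
                show τ₂ i.castSucc = σ i from congrFun e₂ i]
          have himg : F.card = (F.image (fun τ => τ (Fin.last n))).card :=
            (Finset.card_image_of_injOn hinj).symm
          by_cases hσ' : σ ∈ T'
          · have : (F.image (fun τ => τ (Fin.last n))).card ≤ k := by
              simpa using Finset.card_le_univ (F.image (fun τ => τ (Fin.last n)))
            rw [if_pos hσ']
            rw [himg]
            exact this.trans (le_of_eq (Nat.succ_pred_eq_of_pos hk).symm)
          · -- there exists v with snoc σ v ∉ S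
            have hv : ∃ v : Fin k, Fin.snoc σ v ∉ S := by
              by_contra hc
              push_neg at hc
              exact hσ' (Finset.mem_filter.mpr ⟨hσ, hc⟩)
            obtain ⟨v, hv⟩ := hv
            have hsub : F.image (fun τ => τ (Fin.last n)) ⊆ Finset.univ.erase v := by
              intro w hw
              obtain ⟨τ, hτF, hτw⟩ := Finset.mem_image.mp hw
              obtain ⟨hτS, eτ⟩ := hmemF τ hτF
              refine Finset.mem_erase.mpr ⟨?_, Finset.mem_univ _⟩
              rintro rfl
              have : τ = Fin.snoc σ (τ (Fin.last n)) := by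
                funext j
                induction j using Fin.lastCases with
                | last => rw [Fin.snoc_last]
                | cast i => rw [Fin.snoc_castSucc, show τ i.castSucc = σ i from congrFun eτ i]
              rw [hτw] at this
              exact hv (this ▸ hτS)
            have : (F.image (fun τ => τ (Fin.last n))).card ≤ k - 1 := by
              have := Finset.card_le_card hsub
              rwa [Finset.card_erase_of_mem (Finset.mem_univ v), Finset.card_univ,
                Fintype.card_fin] at this
            rw [if_neg hσ']
            rw [himg]
            exact this.trans (Nat.le_add_right _ 0)
        calc S.card = ∑ σ ∈ T, (S.filter (fun τ => (fun i => τ i.castSucc) = σ)).card := hfib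
          _ ≤ ∑ σ ∈ T, ((k-1) + (if σ ∈ T' then 1 else 0)) := Finset.sum_le_sum hbound
          _ = (k-1) * T.card + T'.card := by
              rw [Finset.sum_add_distrib, Finset.sum_const, Finset.sum_ite_mem,
                Finset.sum_const]
              have : T ∩ T' = T' := Finset.inter_eq_right.mpr (Finset.filter_subset _ _)
              rw [this]
              simp [Nat.mul_comm]
            -- split
      have hsplit : (∑ i ∈ Finset.range (e+1), n.choose i * (k-1)^(n-i)) < T.card ∨
          (∑ i ∈ Finset.range e, n.choose i * (k-1)^(n-i)) < T'.card := by
        by_contra hc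
        push_neg at hc
        obtain ⟨h1, h2⟩ := hc
        have := sum_pascal k n e
        have hle : S.card ≤ (k-1) * (∑ i ∈ Finset.range (e+1), n.choose i * (k-1)^(n-i)) +
            (∑ i ∈ Finset.range e, n.choose i * (k-1)^(n-i)) :=
          hcount.trans (Nat.add_le_add (Nat.mul_le_mul_left _ h1) h2) |>.trans (le_of_eq rfl)
        rw [← this] at hle
        exact absurd hle (not_le.mpr hS)
      rcases hsplit with h | h
      · obtain ⟨I, hIcard, hIsh⟩ := ihn (e+1) T h
        refine ⟨I.map Fin.castSuccEmb, by rw [Finset.card_map, hIcard], fun σ => ?_⟩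
        obtain ⟨σ', hσ'T, hσ'⟩ := hIsh (fun i => σ i.castSucc)
        obtain ⟨τ, hτS, hτ⟩ := Finset.mem_image.mp hσ'T
        refine ⟨τ, hτS, fun j hj => ?_⟩
        obtain ⟨i, hiI, rfl⟩ := Finset.mem_map.mp hj
        have h5 : τ (Fin.castSuccEmb i) = σ' i := congrFun hτ i
        have h6 : (Fin.castSuccEmb i : Fin (n+1)) = i.castSucc := rfl
        rw [h5, hσ' i hiI, h6]
      · obtain ⟨I, hIcard, hIsh⟩ := ihn e T' h
        have hlast : Fin.last n ∉ I.map Fin.castSuccEmb := by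
          intro hmem
          obtain ⟨i, _, hi⟩ := Finset.mem_map.mp hmem
          exact absurd hi (Fin.castSucc_lt_last i).ne
        refine ⟨insert (Fin.last n) (I.map Fin.castSuccEmb), ?_, fun σ => ?_⟩
        · rw [Finset.card_insert_of_notMem hlast, Finset.card_map, hIcard]
        · obtain ⟨σ', hσ'T', hσ'⟩ := hIsh (fun i => σ i.castSucc)
          have hall : ∀ v : Fin k, Fin.snoc σ' v ∈ S :=
            (Finset.mem_filter.mp hσ'T').2
          refine ⟨Fin.snoc σ' (σ (Fin.last n)), hall _, fun j hj => ?_⟩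
          rcases Finset.mem_insert.mp hj with rfl | hj
          · rw [Fin.snoc_last]
          · obtain ⟨i, hiI, rfl⟩ := Finset.mem_map.mp hj
            have h6 : (Fin.castSuccEmb i : Fin (n+1)) = i.castSucc := rfl
            rw [h6, Fin.snoc_castSucc, hσ' i hiI]


lemma chern (K x : ℝ) (hK : 0 ≤ K) (hx0 : 0 < x) (hx1 : x ≤ 1) (n d : ℕ) (hd : d ≤ n+1) :
    (∑ i ∈ Finset.range d, (n.choose i : ℝ) * K^(n-i)) ≤ x⁻¹^d * (K + x)^n := by
  have hterm : ∀ i ∈ Finset.range d,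
      (n.choose i : ℝ) * K^(n-i) ≤ x⁻¹^d * (x^i * K^(n-i) * (n.choose i : ℝ)) := by
    intro i hi
    have hid : i ≤ d := le_of_lt (Finset.mem_range.mp hi)
    have h1 : x^d ≤ x^i := pow_le_pow_of_le_one hx0.le hx1 hid
    have h2 : (1:ℝ) ≤ x⁻¹^d * x^i := by
      rw [inv_pow]
      rw [← one_le_div (by positivity : (0:ℝ) < x^d)] at h1
      calc (1:ℝ) ≤ x^i / x^d := h1
        _ = (x^d)⁻¹ * x^i := by ring
    calc (n.choose i : ℝ) * K^(n-i) = 1 * ((n.choose i : ℝ) * K^(n-i)) := by ring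
      _ ≤ (x⁻¹^d * x^i) * ((n.choose i : ℝ) * K^(n-i)) := by
          apply mul_le_mul_of_nonneg_right h2 (by positivity)
      _ = x⁻¹^d * (x^i * K^(n-i) * (n.choose i : ℝ)) := by ring
  calc (∑ i ∈ Finset.range d, (n.choose i : ℝ) * K^(n-i))
      ≤ ∑ i ∈ Finset.range d, x⁻¹^d * (x^i * K^(n-i) * (n.choose i : ℝ)) :=
        Finset.sum_le_sum hterm
    _ = x⁻¹^d * ∑ i ∈ Finset.range d, (x^i * K^(n-i) * (n.choose i : ℝ)) := by
        rw [Finset.mul_sum]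
    _ ≤ x⁻¹^d * ∑ i ∈ Finset.range (n+1), (x^i * K^(n-i) * (n.choose i : ℝ)) := by
        apply mul_le_mul_of_nonneg_left _ (by positivity)
        apply Finset.sum_le_sum_of_subset_of_nonneg
        · exact Finset.range_subset_range.mpr hd
        · intro i _ _
          positivity
    _ = x⁻¹^d * (K + x)^n := by rw [add_comm K x, add_pow]

set_option maxHeartbeats 1000000 in
theorem stmt5 (k : ℕ) (hk : 2 ≤ k) (lam : ℝ) (hlam : 1 < lam) :
    ∃ c : ℝ, 0 < c ∧ ∀ n : ℕ, ∀ S : Finset (Fin n → Fin k),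
      (((k : ℝ) - 1) * lam) ^ n ≤ (S.card : ℝ) →
      ∃ I : Finset (Fin n), c * (n : ℝ) ≤ (I.card : ℝ) ∧
        ∀ σ : Fin n → Fin k, ∃ τ ∈ S, ∀ i ∈ I, τ i = σ i := by
  have hk1 : 1 ≤ k := by omega
  set K : ℝ := (k : ℝ) - 1 with hKdef
  have hK1 : 1 ≤ K := by
    have : (2:ℝ) ≤ (k:ℝ) := by exact_mod_cast hk
    simp [hKdef]; linarith
  have hK0 : 0 < K := lt_of_lt_of_le one_pos hK1
  have hlam0 : 0 < lam := lt_trans one_pos hlam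
  set s1 : ℝ := Real.sqrt lam with hs1def
  have hs1 : 1 < s1 := by
    rw [hs1def, show (1:ℝ) = Real.sqrt 1 by simp]
    exact Real.sqrt_lt_sqrt (by norm_num) hlam
  have hs1sq : s1 * s1 = lam := Real.mul_self_sqrt hlam0.le
  set s2 : ℝ := Real.sqrt s1 with hs2def
  have hs2 : 1 < s2 := by
    rw [hs2def, show (1:ℝ) = Real.sqrt 1 by simp]
    exact Real.sqrt_lt_sqrt (by norm_num) hs1
  have hs2sq : s2 * s2 = s1 := Real.mul_self_sqrt (by linarith)
  set x : ℝ := min 1 (K * (s1 - 1)) with hxdef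
  have hx0 : 0 < x := lt_min one_pos (mul_pos hK0 (by linarith))
  have hx1 : x ≤ 1 := min_le_left _ _
  have hKx : K + x ≤ K * s1 := by
    have h1 : x ≤ K * (s1 - 1) := min_le_right _ _
    have : K * s1 = K + K * (s1 - 1) := by ring
    linarith
  set y : ℝ := x⁻¹ with hydef
  have hy1 : 1 ≤ y := (one_le_inv_iff₀).mpr ⟨hx0, hx1⟩
  have hy0 : 0 < y := lt_of_lt_of_le one_pos hy1
  set L : ℝ := Real.log y with hLdef
  have hL0 : 0 ≤ L := Real.log_nonneg hy1
  set c0 : ℝ := Real.log s2 / (L + 1) with hc0def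
  have hlogs2 : 0 < Real.log s2 := Real.log_pos hs2
  have hc0 : 0 < c0 := div_pos hlogs2 (by linarith)
  set E : ℝ := Real.exp (c0 * L) with hEdef
  have hE0 : 0 < E := Real.exp_pos _
  have hEs2 : E ≤ s2 := by
    have h1 : c0 * L ≤ Real.log s2 := by
      rw [hc0def]
      rw [div_mul_eq_mul_div, div_le_iff₀ (by linarith : (0:ℝ) < L + 1)]
      nlinarith [hlogs2]
    calc E = Real.exp (c0 * L) := rfl
      _ ≤ Real.exp (Real.log s2) := Real.exp_le_exp.mpr h1
      _ = s2 := Real.exp_log (by linarith)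
  obtain ⟨N1, hN1⟩ := pow_unbounded_of_one_lt y hs2
  set c : ℝ := min c0 (1 / (N1 + 1)) with hcdef
  have hc : 0 < c := lt_min hc0 (by positivity)
  have hcc0 : c ≤ c0 := min_le_left _ _
  have hcN1 : c ≤ 1 / (N1 + 1) := min_le_right _ _
  have hc1 : c ≤ 1 := hcN1.trans (by
    rw [div_le_one (by positivity)]
    have : (0:ℝ) ≤ (N1:ℝ) := Nat.cast_nonneg _
    linarith)
  refine ⟨c, hc, fun n S hcard => ?_⟩
  -- general helper: apply km for a given d with the real bound
  have key : ∀ d : ℕ, ((∑ i ∈ Finset.range d, n.choose i * (k-1)^(n-i) : ℕ) : ℝ) < ((K * lam))^n →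
      ∃ I : Finset (Fin n), I.card = d ∧ ∀ σ : Fin n → Fin k, ∃ τ ∈ S, ∀ i ∈ I, τ i = σ i := by
    intro d hd
    apply km k hk1 n d S
    have : ((∑ i ∈ Finset.range d, n.choose i * (k-1)^(n-i) : ℕ) : ℝ) < (S.card : ℝ) :=
      lt_of_lt_of_le hd hcard
    exact_mod_cast this
  have hcast : ∀ d : ℕ, d ≤ n →
      ((∑ i ∈ Finset.range d, n.choose i * (k-1)^(n-i) : ℕ) : ℝ)
        = ∑ i ∈ Finset.range d, (n.choose i : ℝ) * K^(n-i) := by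
    intro d hd
    push_cast [Nat.cast_sub hk1]
    rfl
  rcases Nat.eq_zero_or_pos n with rfl | hn
  · -- n = 0
    obtain ⟨I, hI, hsh⟩ := key 0 (by norm_num)
    exact ⟨I, by simp [hI], hsh⟩
  rcases le_or_gt n N1 with hsmall | hbig
  · -- small n : use d = 1
    have hb : ((∑ i ∈ Finset.range 1, n.choose i * (k-1)^(n-i) : ℕ) : ℝ) < ((K * lam))^n := by
      rw [hcast 1 hn]
      simp only [Finset.sum_range_one, Nat.choose_zero_right, Nat.cast_one, one_mul, Nat.sub_zero]
      rw [mul_pow]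
      have h2 : (1:ℝ) < lam^n := one_lt_pow₀ hlam (by omega)
      have h3 : (0:ℝ) < K^n := by positivity
      nlinarith
    obtain ⟨I, hI, hsh⟩ := key 1 hb
    refine ⟨I, ?_, hsh⟩
    rw [hI]
    push_cast
    calc c * (n:ℝ) ≤ (1 / (N1+1)) * n := by
          apply mul_le_mul_of_nonneg_right hcN1 (Nat.cast_nonneg _)
      _ ≤ 1 := by
          rw [div_mul_eq_mul_div, div_le_one (by positivity)]
          have : (n:ℝ) ≤ (N1:ℝ) := Nat.cast_le.mpr hsmall
          linarith
  · -- large n : Chernoff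
    set d : ℕ := ⌈c * (n:ℝ)⌉₊ with hddef
    have hdge : c * (n:ℝ) ≤ (d:ℝ) := Nat.le_ceil _
    have hdle : (d:ℝ) ≤ c * n + 1 := le_of_lt (Nat.ceil_lt_add_one (by positivity))
    have hdn : d ≤ n := by
      rw [hddef]
      apply Nat.ceil_le.mpr
      calc c * (n:ℝ) ≤ 1 * n := mul_le_mul_of_nonneg_right hc1 (Nat.cast_nonneg _)
        _ = (n:ℝ) := one_mul _
    have hb : ((∑ i ∈ Finset.range d, n.choose i * (k-1)^(n-i) : ℕ) : ℝ) < ((K * lam))^n := by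
      rw [hcast d hdn]
      have hyd : y^d ≤ y * E^n := by
        have h1 : y = Real.exp L := (Real.exp_log hy0).symm
        have h2 : y^d = Real.exp ((d:ℝ) * L) := by
          rw [h1, ← Real.exp_nat_mul]
        have h3 : (d:ℝ) * L ≤ (c * n + 1) * L := mul_le_mul_of_nonneg_right hdle hL0
        have h4 : (c * n + 1) * L ≤ c0 * (n:ℝ) * L + L := by
          have : c * (n:ℝ) ≤ c0 * n := mul_le_mul_of_nonneg_right hcc0 (Nat.cast_nonneg _)
          nlinarith
        calc y^d = Real.exp ((d:ℝ) * L) := h2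
          _ ≤ Real.exp (c0 * (n:ℝ) * L + L) := Real.exp_le_exp.mpr (h3.trans h4)
          _ = Real.exp L * Real.exp ((n:ℝ) * (c0 * L)) := by rw [← Real.exp_add]; ring_nf
          _ = y * E^n := by rw [← h1, Real.exp_nat_mul]
      have hys2 : y < s2^n := lt_of_lt_of_le hN1 (pow_le_pow_right₀ (by linarith) hbig.le)
      calc ∑ i ∈ Finset.range d, (n.choose i : ℝ) * K^(n-i)
          ≤ y^d * (K + x)^n := chern K x hK0.le hx0 hx1 n d (by omega)
        _ ≤ (y * E^n) * (K * s1)^n := by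
            apply mul_le_mul hyd (pow_le_pow_left₀ (by linarith) hKx n) (by positivity) (by positivity)
        _ ≤ (y * s2^n) * (K * s1)^n := by
            have : E^n ≤ s2^n := pow_le_pow_left₀ hE0.le hEs2 n
            have h0 : (0:ℝ) ≤ (K*s1)^n := by positivity
            nlinarith [mul_le_mul_of_nonneg_left this hy0.le]
        _ < (s2^n * s2^n) * (K * s1)^n := by
            have h0 : (0:ℝ) < (K*s1)^n := by positivity
            have h1 : (0:ℝ) < s2^n := by positivity
            have := mul_lt_mul_of_pos_right (mul_lt_mul_of_pos_right hys2 h1) h0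
            linarith
        _ = (K * lam)^n := by
            rw [← hs1sq, ← hs2sq]
            rw [← mul_pow, ← mul_pow]
            ring_nf
    obtain ⟨I, hI, hsh⟩ := key d hb
    exact ⟨I, by rw [hI]; exact hdge, hsh⟩
end

section
/- Let π: X → Y be a continuous surjective map between two compact metric spaces, let π̃: M(X) → M(Y) be the induced map, and for each n ∈ ℕ let π̃_n: M_n(X) → M_n(Y) be the restriction of π̃ to M_n(X). Then the union over all n ∈ ℕ of R_{π̃_n} = {(μ_1,μ_2) ∈ M_n(X) × M_n(X) : π̃_n(μ_1) = π̃_n(μ_2)} is dense in R_{π̃} = {(μ_1,μ_2) ∈ M(X) × M(X) : π̃(μ_1) = π̃(μ_2)}. -/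
open MeasureTheory Topology Filter Set
open scoped ENNReal NNReal
open ProbabilityTheory

/-- `Mn X n` : the subset `M_n(X) = {(1/n) ∑_{i=1}^n δ_{x i}}` of `M(X)`. -/
def Mn (X : Type*) [MeasurableSpace X] (n : ℕ) : Set (ProbabilityMeasure X) :=
  {μ | ∃ x : Fin n → X, μ.toMeasure = (n : ℝ≥0∞)⁻¹ • ∑ i : Fin n, Measure.dirac (x i)}

lemma map_avgDirac {X Y : Type*} [MeasurableSpace X] [MeasurableSpace Y]
    (f : X → Y) (hf : Measurable f) (n : ℕ) (x : Fin n → X) :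
    Measure.map f ((n : ℝ≥0∞)⁻¹ • ∑ i : Fin n, Measure.dirac (x i))
      = (n : ℝ≥0∞)⁻¹ • ∑ i : Fin n, Measure.dirac (f (x i)) := by
  rw [Measure.map_smul]
  congr 1
  have h : ∀ s : Finset (Fin n),
      Measure.map f (∑ i ∈ s, Measure.dirac (x i)) = ∑ i ∈ s, Measure.dirac (f (x i)) := by
    intro s
    induction s using Finset.cons_induction with
    | empty => simp
    | cons a s ha ih =>
        rw [Finset.sum_cons, Finset.sum_cons, Measure.map_add _ _ hf, ih,
          Measure.map_dirac' hf]
  exact h Finset.univ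

/-- The restriction `M_n(X) → M_n(Y)` of the induced map `M(X) → M(Y)` of a
measurable map `f : X → Y`. -/
noncomputable def pushMn {X Y : Type*} [MeasurableSpace X] [MeasurableSpace Y]
    (f : X → Y) (hf : Measurable f) (n : ℕ) (μ : Mn X n) : Mn Y n := by
  refine ⟨pushPM f hf μ.1, ?_⟩
  obtain ⟨x, hx⟩ := μ.2
  refine ⟨fun i => f (x i), ?_⟩
  show (μ.1.toMeasure).map f = _
  rw [hx, map_avgDirac f hf]



lemma rat_approx {E : Type*} [NormedAddCommGroup E] [NormedSpace ℝ E]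
    {ι : Type} [Fintype ι] (w : ι → ℝ) (v : ι → E) (hw₀ : ∀ i, 0 ≤ w i)
    (hw₁ : ∑ i, w i = 1) {δ : ℝ} (hδ : 0 < δ) :
    ∃ n : ℕ, 0 < n ∧ ∃ c : ι → ℕ, ∑ i, c i = n ∧
      ‖(n : ℝ)⁻¹ • ∑ i, (c i : ℝ) • v i - ∑ i, w i • v i‖ < δ := by
  have hι : Nonempty ι := by
    by_contra h
    have : IsEmpty ι := not_nonempty_iff.mp h
    simp at hw₁
  classical
  set i₀ := Classical.arbitrary ι with hi₀
  set B : ℝ := (∑ i, ‖v i‖) + 1 with hB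
  have hsnn : 0 ≤ ∑ i, ‖v i‖ := Finset.sum_nonneg fun i _ => norm_nonneg _
  have hBpos : 0 < B := by rw [hB]; linarith
  have hvB : ∀ i, ‖v i‖ ≤ B := by
    intro i
    have : ‖v i‖ ≤ ∑ j, ‖v j‖ :=
      Finset.single_le_sum (fun j _ => norm_nonneg (v j)) (Finset.mem_univ i)
    rw [hB]; linarith
  set K : ℕ := Fintype.card ι with hK
  have hKpos : 0 < K := Fintype.card_pos
  have hKR : (0:ℝ) < K := by exact_mod_cast hKpos
  obtain ⟨n, hn⟩ := exists_nat_gt (2 * K * B / δ)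
  have h2KB : (0:ℝ) < 2 * K * B := by positivity
  have hnpos : 0 < n := by
    have h0 : (0:ℝ) ≤ 2 * K * B / δ := le_of_lt (div_pos h2KB hδ)
    exact_mod_cast Nat.pos_of_ne_zero (by rintro rfl; simp at hn; linarith)
  have hnR : (0:ℝ) < n := by exact_mod_cast hnpos
  set d : ℕ := n - ∑ j, ⌊(n:ℝ) * w j⌋₊ with hd
  have hfl : ∀ i, (⌊(n:ℝ) * w i⌋₊ : ℝ) ≤ n * w i := fun i =>
    Nat.floor_le (mul_nonneg hnR.le (hw₀ i))
  have hfl' : ∀ i, (n:ℝ) * w i - 1 < ⌊(n:ℝ) * w i⌋₊ := fun i =>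
    sub_lt_iff_lt_add.mpr (by simpa using (Nat.lt_floor_add_one ((n:ℝ) * w i)))
  have hsumfl : (∑ j, ⌊(n:ℝ) * w j⌋₊) ≤ n := by
    have : ((∑ j, ⌊(n:ℝ) * w j⌋₊ : ℕ) : ℝ) ≤ (n:ℝ) := by
      push_cast
      calc ∑ j, (⌊(n:ℝ) * w j⌋₊ : ℝ) ≤ ∑ j, (n:ℝ) * w j := Finset.sum_le_sum fun j _ => hfl j
        _ = n := by rw [← Finset.mul_sum, hw₁, mul_one]
    exact_mod_cast this
  have hdr : (d:ℝ) = (n:ℝ) - ∑ j, (⌊(n:ℝ) * w j⌋₊ : ℝ) := by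
    rw [hd, Nat.cast_sub hsumfl]; push_cast; ring
  have hdK : (d : ℝ) ≤ K := by
    have h1 : ∑ j, ((n:ℝ) * w j - 1) ≤ ∑ j, (⌊(n:ℝ) * w j⌋₊ : ℝ) :=
      Finset.sum_le_sum fun j _ => (hfl' j).le
    have hsum1 : ∑ j, ((n:ℝ) * w j - 1) = (n:ℝ) - K := by
      rw [Finset.sum_sub_distrib, ← Finset.mul_sum, hw₁, mul_one]
      simp [hK]
    linarith [hdr]
  have hdnn : (0:ℝ) ≤ d := Nat.cast_nonneg d
  set c : ι → ℕ := fun i => ⌊(n:ℝ) * w i⌋₊ + (if i = i₀ then d else 0) with hc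
  have hsc : ∑ i, c i = n := by
    rw [hc]
    rw [Finset.sum_add_distrib, Finset.sum_ite_eq' Finset.univ i₀ (fun _ => d)]
    simp [hd, Nat.add_sub_cancel' hsumfl]
  refine ⟨n, hnpos, c, hsc, ?_⟩
  have key : (n : ℝ)⁻¹ • ∑ i, (c i : ℝ) • v i - ∑ i, w i • v i
      = ∑ i, (((c i : ℝ)/n) - w i) • v i := by
    rw [Finset.smul_sum, ← Finset.sum_sub_distrib]
    congr 1; funext i
    rw [smul_smul, ← sub_smul]
    congr 1
    rw [div_eq_inv_mul]
  rw [key]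
  have hΔ : ∀ i, |((c i : ℝ)/n) - w i| ≤ (1 + (if i = i₀ then (d:ℝ) else 0))/n := by
    intro i
    have hci : (c i : ℝ) = (⌊(n:ℝ) * w i⌋₊ : ℝ) + (if i = i₀ then (d:ℝ) else 0) := by
      rw [hc]; push_cast; simp
    have habs : |(c i : ℝ) - n * w i| ≤ 1 + (if i = i₀ then (d:ℝ) else 0) := by
      set t : ℝ := if i = i₀ then (d:ℝ) else 0 with ht
      have htnn : 0 ≤ t := by rw [ht]; split <;> simp [hdnn]
      rw [abs_le]
      constructor
      · have := hfl' i; rw [hci]; linarith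
      · have := hfl i; rw [hci]; linarith
    have heq : ((c i : ℝ)/n) - w i = ((c i : ℝ) - n * w i)/n := by
      field_simp
    rw [heq, abs_div, abs_of_pos hnR]
    gcongr
  calc ‖∑ i, (((c i : ℝ)/n) - w i) • v i‖
      ≤ ∑ i, ‖(((c i : ℝ)/n) - w i) • v i‖ := norm_sum_le _ _
    _ = ∑ i, |((c i : ℝ)/n) - w i| * ‖v i‖ := by
        simp [norm_smul, Real.norm_eq_abs]
    _ ≤ ∑ i, ((1 + (if i = i₀ then (d:ℝ) else 0))/n) * B := by
        refine Finset.sum_le_sum fun i _ => ?_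
        exact mul_le_mul (hΔ i) (hvB i) (norm_nonneg _)
          (by positivity)
    _ = ((K + d)/n) * B := by
        rw [← Finset.sum_mul, ← Finset.sum_div, Finset.sum_add_distrib,
          Finset.sum_ite_eq' Finset.univ i₀ (fun _ => (d:ℝ))]
        simp [hK]
    _ ≤ (2 * K * B)/n := by
        rw [div_mul_eq_mul_div]
        gcongr
        nlinarith
    _ < δ := by
        rw [div_lt_iff₀ hnR]
        calc 2 * K * B < n * δ := by
              rw [div_lt_iff₀ hδ] at hn; linarith
          _ = δ * n := by ring

/-- Empirical approximation: the average of `F` at finitely many points of `C` can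
approximate `∫ F` arbitrarily well. -/
lemma empirical_approx {Z : Type*} [MeasurableSpace Z] {E : Type*} [NormedAddCommGroup E]
    [NormedSpace ℝ E] [CompleteSpace E]
    (lam : Measure Z) [IsProbabilityMeasure lam] {C : Set Z} (hC : ∀ᵐ z ∂lam, z ∈ C)
    {F : Z → E} (hF : Integrable F lam) {ε : ℝ} (hε : 0 < ε) :
    ∃ n : ℕ, 0 < n ∧ ∃ z : Fin n → Z, (∀ r, z r ∈ C) ∧
      ‖(n : ℝ)⁻¹ • ∑ r, F (z r) - ∫ z, F z ∂lam‖ < ε := by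
  classical
  set s : Set E := closure (convexHull ℝ (F '' C)) with hs
  have hsc : Convex ℝ s := (convex_convexHull ℝ _).closure
  have hmem : ∫ z, F z ∂lam ∈ s :=
    hsc.integral_mem isClosed_closure
      (hC.mono fun z hz => subset_closure (subset_convexHull ℝ _ ⟨z, hz, rfl⟩)) hF
  obtain ⟨b, hb, hbd⟩ := Metric.mem_closure_iff.mp hmem (ε/2) (by linarith)
  obtain ⟨ι, hιF, w, v, hw₀, hw₁, hvC, hsum⟩ := mem_convexHull_iff_exists_fintype.mp hb
  obtain ⟨n, hnpos, c, hsc', herr⟩ := rat_approx w v hw₀ hw₁ (show (0:ℝ) < ε/2 by linarith)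
  -- choose preimages
  choose p hpC hpF using fun i => (hvC i : v i ∈ F '' C)
  -- build the point family
  have hcard : Fintype.card (Σ i : ι, Fin (c i)) = n := by
    simp [Fintype.card_sigma, hsc']
  let e : (Σ i : ι, Fin (c i)) ≃ Fin n := Fintype.equivFinOfCardEq hcard
  refine ⟨n, hnpos, fun r => p (e.symm r).1, fun r => hpC _, ?_⟩
  have hsum' : ∑ r : Fin n, F (p (e.symm r).1) = ∑ i, (c i : ℝ) • v i := by
    rw [← Equiv.sum_comp e (fun r => F (p (e.symm r).1))]
    simp only [Equiv.symm_apply_apply]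
    rw [← Finset.univ_sigma_univ, Finset.sum_sigma]
    simp [Finset.sum_const, hpF, Nat.cast_smul_eq_nsmul]
  rw [hsum']
  calc ‖(n : ℝ)⁻¹ • ∑ i, (c i : ℝ) • v i - ∫ z, F z ∂lam‖
      ≤ ‖(n : ℝ)⁻¹ • ∑ i, (c i : ℝ) • v i - ∑ i, w i • v i‖
        + ‖∑ i, w i • v i - ∫ z, F z ∂lam‖ := by
        have := norm_sub_le_norm_sub_add_norm_sub
          ((n : ℝ)⁻¹ • ∑ i, (c i : ℝ) • v i) (∑ i, w i • v i) (∫ z, F z ∂lam)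
        exact this
    _ < ε/2 + ε/2 := by
        apply add_lt_add herr
        rw [← dist_eq_norm, dist_comm]
        rw [hsum]
        exact hbd
    _ = ε := by ring


lemma exists_fiber_kernel {X Y : Type*}
    [MetricSpace X] [CompactSpace X] [MeasurableSpace X] [BorelSpace X] [Nonempty X]
    [MetricSpace Y] [CompactSpace Y] [MeasurableSpace Y] [BorelSpace Y]
    (π : X → Y) (hπc : Continuous π) (μ : Measure X) [IsProbabilityMeasure μ] :
    ∃ κ : Kernel Y X, IsMarkovKernel κ ∧
      (∀ᵐ y ∂(μ.map π), (κ y) (π ⁻¹' {y}) = 1) ∧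
      (∀ f : BoundedContinuousFunction X ℝ,
        ∫ y, (∫ x, f x ∂(κ y)) ∂(μ.map π) = ∫ x, f x ∂μ) := by
  have φm : Measurable fun x => (π x, x) := hπc.measurable.prodMk measurable_id
  set ρ : Measure (Y × X) := μ.map (fun x => (π x, x)) with hρ
  haveI : IsProbabilityMeasure ρ := Measure.isProbabilityMeasure_map φm.aemeasurable
  set ν : Measure Y := μ.map π with hν
  haveI : IsProbabilityMeasure ν := Measure.isProbabilityMeasure_map hπc.measurable.aemeasurable
  have hfst : ρ.fst = ν := by
    rw [Measure.fst, hρ, Measure.map_map measurable_fst φm]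
    rfl
  set κ : Kernel Y X := ρ.condKernel with hκ
  haveI hMk : IsMarkovKernel κ := by rw [hκ]; infer_instance
  have hdis : ν ⊗ₘ κ = ρ := by rw [← hfst, hκ]; exact ρ.disintegrate _
  refine ⟨κ, hMk, ?_, ?_⟩
  · -- a.e. fiber fullness
    set G : Set (Y × X) := {q | π q.2 = q.1} with hG
    have hGm : MeasurableSet G :=
      (isClosed_eq (hπc.comp continuous_snd) continuous_fst).measurableSet
    have hρG : ρ G = 1 := by
      rw [hρ, Measure.map_apply φm hGm]
      have : (fun x => (π x, x)) ⁻¹' G = Set.univ := by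
        ext x; simp [hG]
      rw [this, measure_univ]
    have hsec : ∀ y, Prod.mk y ⁻¹' G = π ⁻¹' {y} := by
      intro y; ext x; simp [hG, eq_comm]
    have hcp : ∫⁻ y, (κ y) (Prod.mk y ⁻¹' G) ∂ν = 1 := by
      rw [← Measure.compProd_apply hGm, hdis, hρG]
    have hm : Measurable fun y => (κ y) (Prod.mk y ⁻¹' G) :=
      Kernel.measurable_kernel_prodMk_left hGm
    have hle : ∀ y, (κ y) (Prod.mk y ⁻¹' G) ≤ 1 := fun y => prob_le_one
    have hz : ∫⁻ y, (1 - (κ y) (Prod.mk y ⁻¹' G)) ∂ν = 0 := by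
      rw [lintegral_sub hm (by rw [hcp]; exact ENNReal.one_ne_top) (ae_of_all _ hle),
        lintegral_one, measure_univ, hcp, tsub_self]
    have := (lintegral_eq_zero_iff (measurable_const.sub hm)).mp hz
    filter_upwards [this] with y hy
    rw [← hsec y]
    have : (1 : ℝ≥0∞) ≤ (κ y) (Prod.mk y ⁻¹' G) := by
      rw [Pi.zero_apply] at hy
      exact tsub_eq_zero_iff_le.mp hy
    exact le_antisymm (hle y) this
  · intro f
    set F2 : BoundedContinuousFunction (Y × X) ℝ :=
      f.compContinuous ⟨Prod.snd, continuous_snd⟩ with hF2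
    have hint : Integrable (fun p : Y × X => f p.2) (ν ⊗ₘ κ) := by
      rw [hdis]
      exact F2.integrable ρ
    have h1 : ∫ p : Y × X, f p.2 ∂(ν ⊗ₘ κ) = ∫ y, ∫ x, f x ∂(κ y) ∂ν :=
      Measure.integral_compProd hint
    have h2 : ∫ p : Y × X, f p.2 ∂ρ = ∫ x, f x ∂μ := by
      rw [hρ, integral_map φm.aemeasurable]
      exact (F2.continuous.aestronglyMeasurable)
    rw [← h1, hdis, h2]


lemma avgDirac_prob {Z : Type*} [MeasurableSpace Z] {n : ℕ} (hn : 0 < n) (x : Fin n → Z) :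
    IsProbabilityMeasure ((n : ℝ≥0∞)⁻¹ • ∑ i : Fin n, Measure.dirac (x i)) := by
  constructor
  rw [Measure.smul_apply, Measure.finset_sum_apply]
  simp only [Measure.dirac_apply_of_mem (Set.mem_univ _), Finset.sum_const, Finset.card_univ,
    Fintype.card_fin, nsmul_eq_mul, mul_one, smul_eq_mul]
  exact ENNReal.inv_mul_cancel (by exact_mod_cast hn.ne') (ENNReal.natCast_ne_top n)

lemma integral_avgDirac {Z : Type*} [MeasurableSpace Z] [MeasurableSingletonClass Z]
    {n : ℕ} (x : Fin n → Z) {g : Z → ℝ} (hg : StronglyMeasurable g) :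
    ∫ z, g z ∂((n : ℝ≥0∞)⁻¹ • ∑ i : Fin n, Measure.dirac (x i))
      = (n : ℝ)⁻¹ * ∑ i, g (x i) := by
  rw [integral_smul_measure, integral_finset_sum_measure]
  · simp only [integral_dirac, smul_eq_mul]
    congr 1
    simp [ENNReal.toReal_inv]
  · intro i _
    refine ⟨hg.aestronglyMeasurable, ?_⟩
    rw [HasFiniteIntegral, lintegral_dirac]
    exact ENNReal.coe_lt_top

lemma blowup {Z : Type*} {m M : ℕ} (hm : 0 < m) (hM : 0 < M) (hdvd : m ∣ M) (x : Fin m → Z) :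
    ∃ x' : Fin M → Z, (∀ j, ∃ r, x' j = x r) ∧
      ∀ g : Z → ℝ, (M : ℝ)⁻¹ * ∑ j, g (x' j) = (m : ℝ)⁻¹ * ∑ r, g (x r) := by
  obtain ⟨t, ht⟩ := hdvd
  have htpos : 0 < t := by
    rcases Nat.eq_zero_or_pos t with h | h
    · subst h; simp [ht] at hM
    · exact h
  let e : Fin m × Fin t ≃ Fin M := finProdFinEquiv.trans (finCongr ht.symm)
  refine ⟨fun j => x (e.symm j).1, fun j => ⟨(e.symm j).1, rfl⟩, fun g => ?_⟩
  have hsum : ∑ j : Fin M, g (x (e.symm j).1) = t • ∑ r, g (x r) := by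
    rw [← Equiv.sum_comp e (fun j => g (x (e.symm j).1))]
    simp only [Equiv.symm_apply_apply]
    rw [Fintype.sum_prod_type]
    simp [Finset.sum_const, Finset.smul_sum]
  rw [hsum, nsmul_eq_mul]
  have hMr : (M : ℝ) = (m : ℝ) * t := by exact_mod_cast congrArg Nat.cast ht
  have hmne : (m : ℝ) ≠ 0 := by positivity
  have htne : (t : ℝ) ≠ 0 := by positivity
  rw [hMr]
  field_simp

lemma key_approx {X Y : Type*}
    [MetricSpace X] [CompactSpace X] [MeasurableSpace X] [BorelSpace X]
    [MetricSpace Y] [CompactSpace Y] [MeasurableSpace Y] [BorelSpace Y]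
    (π : X → Y) (hπc : Continuous π)
    (μ₁ μ₂ : ProbabilityMeasure X)
    (hp : (μ₁ : Measure X).map π = (μ₂ : Measure X).map π)
    {k : ℕ} (f : Fin k → BoundedContinuousFunction X ℝ) {ε : ℝ} (hε : 0 < ε) :
    ∃ (N : ℕ), 0 < N ∧ ∃ (q₁ q₂ : ProbabilityMeasure X),
      q₁ ∈ Mn X N ∧ q₂ ∈ Mn X N ∧ pushPM π hπc.measurable q₁ = pushPM π hπc.measurable q₂ ∧
      (∀ i, |∫ x, f i x ∂(q₁ : Measure X) - ∫ x, f i x ∂(μ₁ : Measure X)| < ε) ∧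
      (∀ i, |∫ x, f i x ∂(q₂ : Measure X) - ∫ x, f i x ∂(μ₂ : Measure X)| < ε) := by
  classical
  have hXne : Nonempty X := by
    by_contra h
    have hIE : IsEmpty X := not_nonempty_iff.mp h
    have h1 : (μ₁ : Measure X) Set.univ = 1 := measure_univ
    rw [Set.univ_eq_empty_iff.mpr hIE, measure_empty] at h1
    exact zero_ne_one h1
  set ν : Measure Y := (μ₁ : Measure X).map π with hν
  haveI : IsProbabilityMeasure ν := Measure.isProbabilityMeasure_map hπc.measurable.aemeasurable
  obtain ⟨κ₁, hM₁, hae₁, hint₁⟩ := exists_fiber_kernel π hπc (μ₁ : Measure X)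
  obtain ⟨κ₂, hM₂, hae₂, hint₂⟩ := exists_fiber_kernel π hπc (μ₂ : Measure X)
  rw [← hp] at hae₂ hint₂
  -- the function to integrate over Y
  set g : Y → ((Fin k → ℝ) × (Fin k → ℝ)) :=
    fun y => (fun i => ∫ x, f i x ∂(κ₁ y), fun i => ∫ x, f i x ∂(κ₂ y)) with hg
  have hsm : ∀ (κ : Kernel Y X) (_ : IsMarkovKernel κ) (i : Fin k),
      StronglyMeasurable fun y => ∫ x, f i x ∂(κ y) := by
    intro κ hκ i
    exact StronglyMeasurable.integral_kernel_prod_right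
      (f := fun (_ : Y) x => f i x) ((f i).continuous.comp continuous_snd).stronglyMeasurable
  have hbd : ∀ (κ : Kernel Y X) (_ : IsMarkovKernel κ) (i : Fin k) (y : Y),
      ‖∫ x, f i x ∂(κ y)‖ ≤ ‖f i‖ := by
    intro κ hκ i y
    exact BoundedContinuousFunction.norm_integral_le_norm (κ y) (f i)
  have hintco : ∀ (κ : Kernel Y X) (_ : IsMarkovKernel κ) (i : Fin k),
      Integrable (fun y => ∫ x, f i x ∂(κ y)) ν := by
    intro κ hκ i
    refine Integrable.mono' (integrable_const ‖f i‖) (hsm κ hκ i).aestronglyMeasurable ?_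
    exact ae_of_all _ (hbd κ hκ i)
  have hB0 : ∀ i, ‖f i‖ ≤ ∑ j, ‖f j‖ := fun i =>
    Finset.single_le_sum (fun j _ => norm_nonneg _) (Finset.mem_univ i)
  have hB0nn : (0:ℝ) ≤ ∑ j, ‖f j‖ := Finset.sum_nonneg fun j _ => norm_nonneg _
  have hgsm : StronglyMeasurable g := by
    apply Measurable.stronglyMeasurable
    refine Measurable.prodMk ?_ ?_ <;>
      · apply measurable_pi_iff.mpr
        intro i
        first
        | exact (hsm κ₁ hM₁ i).measurable
        | exact (hsm κ₂ hM₂ i).measurable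
  have hgb : ∀ y, ‖g y‖ ≤ ∑ j, ‖f j‖ := by
    intro y
    rw [Prod.norm_def]
    apply max_le <;>
      · rw [pi_norm_le_iff_of_nonneg hB0nn]
        intro i
        first
        | exact (hbd κ₁ hM₁ i y).trans (hB0 i)
        | exact (hbd κ₂ hM₂ i y).trans (hB0 i)
  have hgint : Integrable g ν :=
    Integrable.mono' (integrable_const _) hgsm.aestronglyMeasurable (ae_of_all _ hgb)
  -- identify the coordinates of ∫ g
  have hg1 : ∀ i, (∫ y, g y ∂ν).1 i = ∫ x, f i x ∂(μ₁ : Measure X) := by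
    intro i
    have e1 : (∫ y, g y ∂ν).1 = ∫ y, (g y).1 ∂ν :=
      ((ContinuousLinearMap.fst ℝ (Fin k → ℝ) (Fin k → ℝ)).integral_comp_comm hgint).symm
    have e2 : (∫ y, (g y).1 ∂ν) i = ∫ y, (g y).1 i ∂ν :=
      ((ContinuousLinearMap.proj (R := ℝ) (φ := fun _ : Fin k => ℝ) i).integral_comp_comm
        (hgint.fst)).symm
    rw [e1, e2]
    exact hint₁ (f i)
  have hg2 : ∀ i, (∫ y, g y ∂ν).2 i = ∫ x, f i x ∂(μ₂ : Measure X) := by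
    intro i
    have e1 : (∫ y, g y ∂ν).2 = ∫ y, (g y).2 ∂ν :=
      ((ContinuousLinearMap.snd ℝ (Fin k → ℝ) (Fin k → ℝ)).integral_comp_comm hgint).symm
    have e2 : (∫ y, (g y).2 ∂ν) i = ∫ y, (g y).2 i ∂ν :=
      ((ContinuousLinearMap.proj (R := ℝ) (φ := fun _ : Fin k => ℝ) i).integral_comp_comm
        (hgint.snd)).symm
    rw [e1, e2]
    exact hint₂ (f i)
  -- empirical approximation on Y
  set C : Set Y := {y | (κ₁ y) (π ⁻¹' {y}) = 1} ∩ {y | (κ₂ y) (π ⁻¹' {y}) = 1} with hC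
  have hCae : ∀ᵐ y ∂ν, y ∈ C := by
    filter_upwards [hae₁, hae₂] with y h1 h2
    exact ⟨h1, h2⟩
  obtain ⟨n, hnpos, y, hyC, hyerr⟩ := empirical_approx ν hCae hgint (half_pos hε)
  have hnR : (0:ℝ) < n := by exact_mod_cast hnpos
  -- coordinatewise consequences
  have hyerr1 : ∀ i, |(n:ℝ)⁻¹ * ∑ r, ∫ x, f i x ∂(κ₁ (y r))
      - ∫ x, f i x ∂(μ₁ : Measure X)| < ε/2 := by
    intro i
    have h1 : ((n : ℝ)⁻¹ • ∑ r, g (y r) - ∫ z, g z ∂ν).1 i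
        = (n:ℝ)⁻¹ * ∑ r, ∫ x, f i x ∂(κ₁ (y r)) - ∫ x, f i x ∂(μ₁ : Measure X) := by
      rw [← hg1 i]
      simp [hg, Finset.sum_apply, Prod.fst_sum, Prod.snd_sum]
    calc |(n:ℝ)⁻¹ * ∑ r, ∫ x, f i x ∂(κ₁ (y r)) - ∫ x, f i x ∂(μ₁ : Measure X)|
        = ‖((n : ℝ)⁻¹ • ∑ r, g (y r) - ∫ z, g z ∂ν).1 i‖ := by rw [h1]; rfl
      _ ≤ ‖((n : ℝ)⁻¹ • ∑ r, g (y r) - ∫ z, g z ∂ν).1‖ :=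
          norm_le_pi_norm _ i
      _ ≤ ‖(n : ℝ)⁻¹ • ∑ r, g (y r) - ∫ z, g z ∂ν‖ := norm_fst_le _
      _ < ε/2 := hyerr
  have hyerr2 : ∀ i, |(n:ℝ)⁻¹ * ∑ r, ∫ x, f i x ∂(κ₂ (y r))
      - ∫ x, f i x ∂(μ₂ : Measure X)| < ε/2 := by
    intro i
    have h1 : ((n : ℝ)⁻¹ • ∑ r, g (y r) - ∫ z, g z ∂ν).2 i
        = (n:ℝ)⁻¹ * ∑ r, ∫ x, f i x ∂(κ₂ (y r)) - ∫ x, f i x ∂(μ₂ : Measure X) := by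
      rw [← hg2 i]
      simp [hg, Finset.sum_apply, Prod.fst_sum, Prod.snd_sum]
    calc |(n:ℝ)⁻¹ * ∑ r, ∫ x, f i x ∂(κ₂ (y r)) - ∫ x, f i x ∂(μ₂ : Measure X)|
        = ‖((n : ℝ)⁻¹ • ∑ r, g (y r) - ∫ z, g z ∂ν).2 i‖ := by rw [h1]; rfl
      _ ≤ ‖((n : ℝ)⁻¹ • ∑ r, g (y r) - ∫ z, g z ∂ν).2‖ :=
          norm_le_pi_norm _ i
      _ ≤ ‖(n : ℝ)⁻¹ • ∑ r, g (y r) - ∫ z, g z ∂ν‖ := norm_snd_le _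
      _ < ε/2 := hyerr
  -- fiber approximations
  set FX : X → (Fin k → ℝ) := fun x i => f i x with hFX
  have hFXsm : StronglyMeasurable FX :=
    (continuous_pi fun i => (f i).continuous).stronglyMeasurable
  have hFXb : ∀ x, ‖FX x‖ ≤ ∑ j, ‖f j‖ := by
    intro x
    rw [pi_norm_le_iff_of_nonneg hB0nn]
    intro i
    exact ((f i).norm_coe_le_norm x).trans (hB0 i)
  have hFXint : ∀ (μ : Measure X), IsProbabilityMeasure μ → Integrable FX μ := by
    intro μ hμ
    exact Integrable.mono' (integrable_const _) hFXsm.aestronglyMeasurable (ae_of_all _ hFXb)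
  have fiber : ∀ (κ : Kernel Y X) (_ : IsMarkovKernel κ) (r : Fin n)
      (_ : (κ (y r)) (π ⁻¹' {y r}) = 1),
      ∃ (m : ℕ) (x : Fin m → X), 0 < m ∧ (∀ j, π (x j) = y r) ∧
        ∀ i, |(m:ℝ)⁻¹ * ∑ j, f i (x j) - ∫ x, f i x ∂(κ (y r))| < ε/2 := by
    intro κ hκ r h1
    haveI : IsProbabilityMeasure (κ (y r)) := hκ.isProbabilityMeasure _
    have hms : MeasurableSet (π ⁻¹' {y r}) := hπc.measurable (measurableSet_singleton _)
    have hae : ∀ᵐ x ∂(κ (y r)), x ∈ π ⁻¹' {y r} := by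
      rw [ae_iff]
      have := (prob_compl_eq_zero_iff hms).mpr h1
      exact this
    obtain ⟨m, hm, x, hxC, herr⟩ :=
      empirical_approx (κ (y r)) hae (hFXint _ inferInstance) (half_pos hε)
    refine ⟨m, x, hm, fun j => hxC j, ?_⟩
    intro i
    have hco : (∫ x, FX x ∂(κ (y r))) i = ∫ x, f i x ∂(κ (y r)) :=
      ((ContinuousLinearMap.proj (R := ℝ) (φ := fun _ : Fin k => ℝ) i).integral_comp_comm
        (hFXint _ inferInstance)).symm
    have h2 : ((m : ℝ)⁻¹ • ∑ j, FX (x j) - ∫ x, FX x ∂(κ (y r))) i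
        = (m:ℝ)⁻¹ * ∑ j, f i (x j) - ∫ x, f i x ∂(κ (y r)) := by
      rw [← hco]
      simp [hFX, Finset.sum_apply]
    calc |(m:ℝ)⁻¹ * ∑ j, f i (x j) - ∫ x, f i x ∂(κ (y r))|
        = ‖((m : ℝ)⁻¹ • ∑ j, FX (x j) - ∫ x, FX x ∂(κ (y r))) i‖ := by rw [h2]; rfl
      _ ≤ ‖(m : ℝ)⁻¹ • ∑ j, FX (x j) - ∫ x, FX x ∂(κ (y r))‖ := norm_le_pi_norm _ i
      _ < ε/2 := herr
  choose m₁ x₁ hm₁ hx₁π hx₁e using fun r => fiber κ₁ hM₁ r (hyC r).1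
  choose m₂ x₂ hm₂ hx₂π hx₂e using fun r => fiber κ₂ hM₂ r (hyC r).2
  set M : ℕ := ∏ r : Fin n, (m₁ r * m₂ r) with hMdef
  have hMpos : 0 < M := Finset.prod_pos fun r _ => Nat.mul_pos (hm₁ r) (hm₂ r)
  have hdvd1 : ∀ r, m₁ r ∣ M := fun r =>
    dvd_trans (Dvd.intro _ rfl) (Finset.dvd_prod_of_mem _ (Finset.mem_univ r))
  have hdvd2 : ∀ r, m₂ r ∣ M := fun r =>
    dvd_trans (Dvd.intro_left _ rfl) (Finset.dvd_prod_of_mem _ (Finset.mem_univ r))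
  choose X₁ hX₁mem hX₁avg using fun r => blowup (hm₁ r) hMpos (hdvd1 r) (x₁ r)
  choose X₂ hX₂mem hX₂avg using fun r => blowup (hm₂ r) hMpos (hdvd2 r) (x₂ r)
  set N : ℕ := n * M with hNdef
  have hNpos : 0 < N := Nat.mul_pos hnpos hMpos
  have hNR : (0:ℝ) < N := by exact_mod_cast hNpos
  let e : Fin n × Fin M ≃ Fin N := finProdFinEquiv
  set z₁ : Fin N → X := fun i => X₁ (e.symm i).1 (e.symm i).2 with hz₁
  set z₂ : Fin N → X := fun i => X₂ (e.symm i).1 (e.symm i).2 with hz₂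
  set q₁m : Measure X := ((N : ℕ) : ℝ≥0∞)⁻¹ • ∑ i : Fin N, Measure.dirac (z₁ i) with hq₁m
  set q₂m : Measure X := ((N : ℕ) : ℝ≥0∞)⁻¹ • ∑ i : Fin N, Measure.dirac (z₂ i) with hq₂m
  set q₁ : ProbabilityMeasure X := ⟨q₁m, avgDirac_prob hNpos z₁⟩ with hq₁
  set q₂ : ProbabilityMeasure X := ⟨q₂m, avgDirac_prob hNpos z₂⟩ with hq₂
  have hπz : ∀ i : Fin N, π (z₁ i) = y (e.symm i).1 ∧ π (z₂ i) = y (e.symm i).1 := by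
    intro i
    constructor
    · obtain ⟨s, hs⟩ := hX₁mem (e.symm i).1 (e.symm i).2
      rw [hz₁]; simp only []
      rw [hs]; exact hx₁π _ s
    · obtain ⟨s, hs⟩ := hX₂mem (e.symm i).1 (e.symm i).2
      rw [hz₂]; simp only []
      rw [hs]; exact hx₂π _ s
  have hpush : pushPM π hπc.measurable q₁ = pushPM π hπc.measurable q₂ := by
    apply Subtype.ext
    show (q₁m).map π = (q₂m).map π
    rw [hq₁m, hq₂m, map_avgDirac _ hπc.measurable, map_avgDirac _ hπc.measurable]
    congr 1
    apply Finset.sum_congr rfl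
    intro i _
    rw [(hπz i).1, (hπz i).2]
  -- integral computations
  have havg : ∀ (z : Fin N → X) (XX : ∀ r : Fin n, Fin M → X),
      (∀ i, z i = XX (e.symm i).1 (e.symm i).2) →
      ∀ i, ∫ x, f i x ∂(((N : ℕ) : ℝ≥0∞)⁻¹ • ∑ i' : Fin N, Measure.dirac (z i'))
        = (n:ℝ)⁻¹ * ∑ r, ((M:ℝ)⁻¹ * ∑ j, f i (XX r j)) := by
    intro z XX hzX i
    rw [integral_avgDirac z (f i).continuous.stronglyMeasurable]
    have hsum : ∑ i' : Fin N, f i (z i') = ∑ r : Fin n, ∑ j : Fin M, f i (XX r j) := by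
      rw [← Equiv.sum_comp e (fun i' => f i (z i'))]
      rw [Fintype.sum_prod_type]
      apply Finset.sum_congr rfl
      intro r _
      apply Finset.sum_congr rfl
      intro j _
      rw [hzX]
      simp
    rw [hsum, Finset.mul_sum, Finset.mul_sum]
    apply Finset.sum_congr rfl
    intro r _
    have hnM : ((N : ℕ) : ℝ) = (n : ℝ) * (M : ℝ) := by rw [hNdef]; push_cast; ring
    rw [hnM, mul_inv, mul_assoc]
  have hq₁int : ∀ i, ∫ x, f i x ∂(q₁ : Measure X)
      = (n:ℝ)⁻¹ * ∑ r, ((m₁ r : ℝ)⁻¹ * ∑ s, f i (x₁ r s)) := by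
    intro i
    have := havg z₁ X₁ (fun i' => rfl) i
    rw [show ((q₁ : Measure X)) = q₁m from rfl, hq₁m, this]
    congr 1
    exact Finset.sum_congr rfl fun r _ => hX₁avg r (f i)
  have hq₂int : ∀ i, ∫ x, f i x ∂(q₂ : Measure X)
      = (n:ℝ)⁻¹ * ∑ r, ((m₂ r : ℝ)⁻¹ * ∑ s, f i (x₂ r s)) := by
    intro i
    have := havg z₂ X₂ (fun i' => rfl) i
    rw [show ((q₂ : Measure X)) = q₂m from rfl, hq₂m, this]
    congr 1
    exact Finset.sum_congr rfl fun r _ => hX₂avg r (f i)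
  refine ⟨N, hNpos, q₁, q₂, ⟨z₁, rfl⟩, ⟨z₂, rfl⟩, hpush, ?_, ?_⟩
  · intro i
    rw [hq₁int i]
    have hstep : |(n:ℝ)⁻¹ * ∑ r, ((m₁ r : ℝ)⁻¹ * ∑ s, f i (x₁ r s))
        - (n:ℝ)⁻¹ * ∑ r, ∫ x, f i x ∂(κ₁ (y r))| < ε/2 := by
      rw [← mul_sub, ← Finset.sum_sub_distrib, abs_mul, abs_of_pos (inv_pos.mpr hnR)]
      have h1 : |∑ r, ((m₁ r : ℝ)⁻¹ * ∑ s, f i (x₁ r s) - ∫ x, f i x ∂(κ₁ (y r)))|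
          ≤ ∑ r, |(m₁ r : ℝ)⁻¹ * ∑ s, f i (x₁ r s) - ∫ x, f i x ∂(κ₁ (y r))| :=
        Finset.abs_sum_le_sum_abs _ _
      have h2 : ∑ r, |(m₁ r : ℝ)⁻¹ * ∑ s, f i (x₁ r s) - ∫ x, f i x ∂(κ₁ (y r))|
          < ∑ _r : Fin n, (ε/2) :=
        Finset.sum_lt_sum_of_nonempty (Finset.univ_nonempty_iff.mpr
          ⟨⟨0, hnpos⟩⟩) fun r _ => hx₁e r i
      have h3 : ∑ _r : Fin n, (ε/2) = (n:ℝ) * (ε/2) := by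
        rw [Finset.sum_const, Finset.card_univ, Fintype.card_fin, nsmul_eq_mul]
      calc (n:ℝ)⁻¹ * |∑ r, ((m₁ r : ℝ)⁻¹ * ∑ s, f i (x₁ r s) - ∫ x, f i x ∂(κ₁ (y r)))|
          ≤ (n:ℝ)⁻¹ * ∑ r, |(m₁ r : ℝ)⁻¹ * ∑ s, f i (x₁ r s) - ∫ x, f i x ∂(κ₁ (y r))| :=
            mul_le_mul_of_nonneg_left h1 (inv_pos.mpr hnR).le
        _ < (n:ℝ)⁻¹ * ((n:ℝ) * (ε/2)) := by
            apply mul_lt_mul_of_pos_left _ (inv_pos.mpr hnR)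
            rw [← h3]; exact h2
        _ = ε/2 := by field_simp
    calc |(n:ℝ)⁻¹ * ∑ r, ((m₁ r : ℝ)⁻¹ * ∑ s, f i (x₁ r s)) - ∫ x, f i x ∂(μ₁ : Measure X)|
        ≤ |(n:ℝ)⁻¹ * ∑ r, ((m₁ r : ℝ)⁻¹ * ∑ s, f i (x₁ r s))
            - (n:ℝ)⁻¹ * ∑ r, ∫ x, f i x ∂(κ₁ (y r))|
          + |(n:ℝ)⁻¹ * ∑ r, ∫ x, f i x ∂(κ₁ (y r)) - ∫ x, f i x ∂(μ₁ : Measure X)| :=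
          abs_sub_le _ _ _
      _ < ε/2 + ε/2 := add_lt_add hstep (hyerr1 i)
      _ = ε := by ring
  · intro i
    rw [hq₂int i]
    have hstep : |(n:ℝ)⁻¹ * ∑ r, ((m₂ r : ℝ)⁻¹ * ∑ s, f i (x₂ r s))
        - (n:ℝ)⁻¹ * ∑ r, ∫ x, f i x ∂(κ₂ (y r))| < ε/2 := by
      rw [← mul_sub, ← Finset.sum_sub_distrib, abs_mul, abs_of_pos (inv_pos.mpr hnR)]
      have h1 : |∑ r, ((m₂ r : ℝ)⁻¹ * ∑ s, f i (x₂ r s) - ∫ x, f i x ∂(κ₂ (y r)))|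
          ≤ ∑ r, |(m₂ r : ℝ)⁻¹ * ∑ s, f i (x₂ r s) - ∫ x, f i x ∂(κ₂ (y r))| :=
        Finset.abs_sum_le_sum_abs _ _
      have h2 : ∑ r, |(m₂ r : ℝ)⁻¹ * ∑ s, f i (x₂ r s) - ∫ x, f i x ∂(κ₂ (y r))|
          < ∑ _r : Fin n, (ε/2) :=
        Finset.sum_lt_sum_of_nonempty (Finset.univ_nonempty_iff.mpr
          ⟨⟨0, hnpos⟩⟩) fun r _ => hx₂e r i
      have h3 : ∑ _r : Fin n, (ε/2) = (n:ℝ) * (ε/2) := by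
        rw [Finset.sum_const, Finset.card_univ, Fintype.card_fin, nsmul_eq_mul]
      calc (n:ℝ)⁻¹ * |∑ r, ((m₂ r : ℝ)⁻¹ * ∑ s, f i (x₂ r s) - ∫ x, f i x ∂(κ₂ (y r)))|
          ≤ (n:ℝ)⁻¹ * ∑ r, |(m₂ r : ℝ)⁻¹ * ∑ s, f i (x₂ r s) - ∫ x, f i x ∂(κ₂ (y r))| :=
            mul_le_mul_of_nonneg_left h1 (inv_pos.mpr hnR).le
        _ < (n:ℝ)⁻¹ * ((n:ℝ) * (ε/2)) := by
            apply mul_lt_mul_of_pos_left _ (inv_pos.mpr hnR)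
            rw [← h3]; exact h2
        _ = ε/2 := by field_simp
    calc |(n:ℝ)⁻¹ * ∑ r, ((m₂ r : ℝ)⁻¹ * ∑ s, f i (x₂ r s)) - ∫ x, f i x ∂(μ₂ : Measure X)|
        ≤ |(n:ℝ)⁻¹ * ∑ r, ((m₂ r : ℝ)⁻¹ * ∑ s, f i (x₂ r s))
            - (n:ℝ)⁻¹ * ∑ r, ∫ x, f i x ∂(κ₂ (y r))|
          + |(n:ℝ)⁻¹ * ∑ r, ∫ x, f i x ∂(κ₂ (y r)) - ∫ x, f i x ∂(μ₂ : Measure X)| :=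
          abs_sub_le _ _ _
      _ < ε/2 + ε/2 := add_lt_add hstep (hyerr2 i)
      _ = ε := by ring

lemma tendsto_of_testSeq {X : Type*} [MetricSpace X] [CompactSpace X]
    [MeasurableSpace X] [BorelSpace X]
    (u : ℕ → BoundedContinuousFunction X ℝ) (hud : DenseRange u)
    (w : ProbabilityMeasure X) (qq : ℕ → ProbabilityMeasure X)
    (he : ∀ m (j : Fin (m+1)),
      |∫ x, u j x ∂(qq m : Measure X) - ∫ x, u j x ∂(w : Measure X)| < 1/(m+1)) :
    Tendsto qq atTop (𝓝 w) := by
  rw [MeasureTheory.ProbabilityMeasure.tendsto_iff_forall_integral_tendsto]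
  intro fb
  rw [Metric.tendsto_atTop]
  intro δ hδ
  obtain ⟨j, hj⟩ := Metric.denseRange_iff.mp hud fb (δ/4) (by linarith)
  refine ⟨max j ⌈4/δ⌉₊, fun m hm => ?_⟩
  have hjm : j ≤ m := le_trans (le_max_left _ _) hm
  have hcm : ⌈4/δ⌉₊ ≤ m := le_trans (le_max_right _ _) hm
  have hm4 : 4/δ ≤ (m:ℝ) := le_trans (Nat.le_ceil _) (by exact_mod_cast hcm)
  have hminv : 1/((m:ℝ)+1) < δ/4 := by
    rw [div_lt_iff₀ (by positivity : (0:ℝ) < (m:ℝ)+1)]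
    have h4 : δ/4 * (4/δ) = 1 := by field_simp
    nlinarith [hm4, hδ]
  have hdiff : ∀ (ρ : Measure X), IsProbabilityMeasure ρ →
      |∫ x, fb x ∂ρ - ∫ x, u j x ∂ρ| ≤ dist fb (u j) := by
    intro ρ hρ
    rw [← integral_sub (fb.integrable ρ) ((u j).integrable ρ)]
    calc |∫ x, (fb x - u j x) ∂ρ| = ‖∫ x, (fb - u j) x ∂ρ‖ := by norm_num
      _ ≤ ‖fb - u j‖ := BoundedContinuousFunction.norm_integral_le_norm ρ (fb - u j)
      _ = dist fb (u j) := (dist_eq_norm fb (u j)).symm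
  have hkey := he m ⟨j, by omega⟩
  rw [Real.dist_eq]
  calc |∫ x, fb x ∂(qq m : Measure X) - ∫ x, fb x ∂(w : Measure X)|
      ≤ |∫ x, fb x ∂(qq m : Measure X) - ∫ x, u j x ∂(qq m : Measure X)|
        + |∫ x, u j x ∂(qq m : Measure X) - ∫ x, u j x ∂(w : Measure X)|
        + |∫ x, u j x ∂(w : Measure X) - ∫ x, fb x ∂(w : Measure X)| := by
        have := abs_sub_le (∫ x, fb x ∂(qq m : Measure X)) (∫ x, u j x ∂(qq m : Measure X))
          (∫ x, fb x ∂(w : Measure X))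
        have h2 := abs_sub_le (∫ x, u j x ∂(qq m : Measure X)) (∫ x, u j x ∂(w : Measure X))
          (∫ x, fb x ∂(w : Measure X))
        linarith
    _ < δ/4 + δ/4 + δ/4 := by
        apply add_lt_add (add_lt_add_of_le_of_lt ?_ ?_) ?_
        · exact ((hdiff (qq m : Measure X) (qq m).2).trans_lt hj).le
        · exact hkey.trans hminv
        · rw [abs_sub_comm]
          exact (hdiff (w : Measure X) w.2).trans_lt hj
    _ < δ := by linarith

theorem stmt7 {X Y : Type*}
    [MetricSpace X] [CompactSpace X] [MeasurableSpace X] [BorelSpace X]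
    [MetricSpace Y] [CompactSpace Y] [MeasurableSpace Y] [BorelSpace Y]
    (π : X → Y) (hπc : Continuous π) (hπs : Function.Surjective π) :
    {p : ProbabilityMeasure X × ProbabilityMeasure X |
        pushPM π hπc.measurable p.1 = pushPM π hπc.measurable p.2} ⊆
      closure (⋃ (n : ℕ) (_ : 0 < n),
        {p : ProbabilityMeasure X × ProbabilityMeasure X |
          p.1 ∈ Mn X n ∧ p.2 ∈ Mn X n ∧
          pushPM π hπc.measurable p.1 = pushPM π hπc.measurable p.2}) := by
  rintro ⟨μ₁, μ₂⟩ hp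
  simp only [Set.mem_setOf_eq] at hp
  have hpm : (μ₁ : Measure X).map π = (μ₂ : Measure X).map π := congrArg Subtype.val hp
  -- separability of the test function space
  haveI : TopologicalSpace.SeparableSpace (BoundedContinuousFunction X ℝ) := by
    have h : DenseRange (ContinuousMap.isometryEquivBoundedOfCompact X ℝ) :=
      (ContinuousMap.isometryEquivBoundedOfCompact X ℝ).surjective.denseRange
    exact h.separableSpace (ContinuousMap.isometryEquivBoundedOfCompact X ℝ).continuous
  haveI : Nonempty (BoundedContinuousFunction X ℝ) := ⟨0⟩
  set u : ℕ → BoundedContinuousFunction X ℝ :=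
    TopologicalSpace.denseSeq (BoundedContinuousFunction X ℝ) with hu
  have hud : DenseRange u := TopologicalSpace.denseRange_denseSeq _
  have hex : ∀ m : ℕ, ∃ (N : ℕ) (q₁ q₂ : ProbabilityMeasure X), 0 < N ∧
      q₁ ∈ Mn X N ∧ q₂ ∈ Mn X N ∧
      pushPM π hπc.measurable q₁ = pushPM π hπc.measurable q₂ ∧
      (∀ j : Fin (m+1),
        |∫ x, u j x ∂(q₁ : Measure X) - ∫ x, u j x ∂(μ₁ : Measure X)| < 1/(m+1)) ∧
      (∀ j : Fin (m+1),
        |∫ x, u j x ∂(q₂ : Measure X) - ∫ x, u j x ∂(μ₂ : Measure X)| < 1/(m+1)) := by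
    intro m
    have hpos : (0:ℝ) < 1/(m+1) := by positivity
    obtain ⟨N, hN, q₁, q₂, h₁, h₂, hqp, he₁, he₂⟩ :=
      key_approx π hπc μ₁ μ₂ hpm (fun j : Fin (m+1) => u j) hpos
    exact ⟨N, q₁, q₂, hN, h₁, h₂, hqp, he₁, he₂⟩
  choose N q₁ q₂ hN h₁ h₂ hqp hqe₁ hqe₂ using hex
  have hmem : ∀ m, (q₁ m, q₂ m) ∈ ⋃ (n : ℕ) (_ : 0 < n),
      {p : ProbabilityMeasure X × ProbabilityMeasure X |
        p.1 ∈ Mn X n ∧ p.2 ∈ Mn X n ∧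
        pushPM π hπc.measurable p.1 = pushPM π hπc.measurable p.2} := fun m =>
    Set.mem_iUnion.mpr ⟨N m, Set.mem_iUnion.mpr ⟨hN m, ⟨h₁ m, h₂ m, hqp m⟩⟩⟩
  have ht₁ : Tendsto q₁ atTop (𝓝 μ₁) := tendsto_of_testSeq u hud μ₁ q₁ hqe₁
  have ht₂ : Tendsto q₂ atTop (𝓝 μ₂) := tendsto_of_testSeq u hud μ₂ q₂ hqe₂
  exact mem_closure_of_tendsto (ht₁.prodMk_nhds ht₂) (Eventually.of_forall hmem)
end

section
/- Let π: X → Y be a surjective continuous map between two compact metrizable spaces. If the induced map π̃: M(X) → M(Y) is open, then π is open. -/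
open MeasureTheory Topology Filter Set
open scoped ENNReal NNReal

lemma isOpen_gt_measure {X : Type*} [MetricSpace X] [MeasurableSpace X] [BorelSpace X]
    {U : Set X} (hU : IsOpen U) (c : ℝ≥0∞) :
    IsOpen {μ : ProbabilityMeasure X | c < μ.toMeasure U} := by
  rw [isOpen_iff_mem_nhds]
  intro μ hμ
  have h := MeasureTheory.ProbabilityMeasure.le_liminf_measure_open_of_tendsto
    (L := 𝓝 μ) (μs := id) tendsto_id hU
  have hlt : c < (𝓝 μ).liminf fun ν : ProbabilityMeasure X => ν.toMeasure U :=
    lt_of_lt_of_le hμ h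
  exact Filter.eventually_lt_of_lt_liminf hlt

theorem stmt12 {X Y : Type*}
    [MetricSpace X] [CompactSpace X] [MeasurableSpace X] [BorelSpace X]
    [MetricSpace Y] [CompactSpace Y] [MeasurableSpace Y] [BorelSpace Y]
    (π : X → Y) (hπc : Continuous π) (hπs : Function.Surjective π)
    (hopen : IsOpenMap (pushPM π hπc.measurable)) :
    IsOpenMap π := by
  intro U hU
  rw [isOpen_iff_mem_nhds]
  rintro y ⟨x, hxU, rfl⟩
  set V : Set (ProbabilityMeasure X) := {μ | (1/2 : ℝ≥0∞) < μ.toMeasure U} with hV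
  have hVopen : IsOpen V := isOpen_gt_measure hU _
  have hxV : diracProba x ∈ V := by
    simp only [hV, mem_setOf_eq, diracProba_toMeasure_apply_of_mem hxU]
    norm_num
  have himg : IsOpen (pushPM π hπc.measurable '' V) := hopen V hVopen
  have key : pushPM π hπc.measurable (diracProba x) = diracProba (π x) := by
    apply Subtype.ext
    simp [pushPM, diracProba, Measure.map_dirac' hπc.measurable]
  have hmem : diracProba (π x) ∈ pushPM π hπc.measurable '' V :=
    key ▸ mem_image_of_mem _ hxV
  have hnhds : (pushPM π hπc.measurable '' V) ∈ 𝓝 (diracProba (π x)) :=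
    himg.mem_nhds hmem
  filter_upwards [continuous_diracProba.continuousAt.preimage_mem_nhds hnhds] with y' hy'
  obtain ⟨μ, hμV, hμeq⟩ := hy'
  -- μ (π ⁻¹' {y'}) = 1
  have hA : MeasurableSet (π ⁻¹' {y'}) := hπc.measurable (measurableSet_singleton y')
  have hmap : μ.toMeasure.map π = Measure.dirac y' := congrArg Subtype.val hμeq
  have hμA : μ.toMeasure (π ⁻¹' {y'}) = 1 := by
    rw [← Measure.map_apply hπc.measurable (measurableSet_singleton y'), hmap,
      Measure.dirac_apply_of_mem (mem_singleton y')]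
  have hcompl : μ.toMeasure (π ⁻¹' {y'})ᶜ = 0 := by
    rw [measure_compl hA (by simp [hμA]), hμA, measure_univ, tsub_self]
  have hinter : μ.toMeasure (U ∩ π ⁻¹' {y'}) = μ.toMeasure U :=
    measure_inter_conull hcompl
  have hpos : 0 < μ.toMeasure (U ∩ π ⁻¹' {y'}) := by
    rw [hinter]
    exact lt_trans (by norm_num) hμV
  obtain ⟨x', hx'U, hx'⟩ := nonempty_of_measure_ne_zero hpos.ne'
  exact ⟨x', hx'U, hx'⟩
end

section
/- Let π: X → Y be a surjective continuous open map between two compact metrizable spaces. Then for every n ∈ ℕ, the restriction π̃_n: M_n(X) → M_n(Y) of the induced map π̃: M(X) → M(Y) is open. -/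
open MeasureTheory Topology Filter Set
open scoped ENNReal NNReal

lemma perm_get {α : Type*} {l₁ l₂ : List α} (h : l₁.Perm l₂) :
    ∃ σ : Fin l₂.length ≃ Fin l₁.length, ∀ i, l₂.get i = l₁.get (σ i) := by
  induction h with
  | nil => exact ⟨Equiv.refl _, fun i => i.elim0⟩
  | cons a h ih =>
    obtain ⟨σ, hσ⟩ := ih
    refine ⟨(finSuccEquiv _).trans ((σ.optionCongr).trans (finSuccEquiv _).symm), fun i => ?_⟩
    refine Fin.cases ?_ (fun j => ?_) i
    · simp
    · simpa using hσ j
  | swap a b l =>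
    refine ⟨Equiv.swap ⟨0, by simp⟩ ⟨1, by simp⟩, fun i => ?_⟩
    rcases i with ⟨_ | _ | k, hk⟩ <;>
      simp [Equiv.swap_apply_def, Fin.ext_iff]
  | trans h1 h2 ih1 ih2 =>
    obtain ⟨σ1, hσ1⟩ := ih1
    obtain ⟨σ2, hσ2⟩ := ih2
    exact ⟨σ2.trans σ1, fun i => (hσ2 i).trans (hσ1 _)⟩

lemma ofFn_perm {α : Type*} {n : ℕ} {x x' : Fin n → α}
    (h : (List.ofFn x).Perm (List.ofFn x')) :
    ∃ σ : Equiv.Perm (Fin n), x' = x ∘ σ := by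
  obtain ⟨σ, hσ⟩ := perm_get h
  refine ⟨((finCongr (List.length_ofFn (f := x'))).symm.trans σ).trans (finCongr (List.length_ofFn (f := x))),
    funext fun j => ?_⟩
  have := hσ ((finCongr (List.length_ofFn (f := x'))).symm j)
  simp [List.get_ofFn] at this ⊢
  exact this

noncomputable def avgM {X : Type*} [MeasurableSpace X] (n : ℕ) (x : Fin n → X) : Measure X :=
  (n : ℝ≥0∞)⁻¹ • ∑ i : Fin n, Measure.dirac (x i)

lemma avgM_isProb {X : Type*} [MeasurableSpace X] {n : ℕ} (hn : 0 < n) (x : Fin n → X) :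
    IsProbabilityMeasure (avgM n x) := by
  constructor
  simp only [avgM, Measure.smul_apply, smul_eq_mul, Measure.coe_finset_sum, Finset.sum_apply,
    measure_univ, Finset.sum_const, Finset.card_univ, Fintype.card_fin, nsmul_eq_mul, mul_one]
  exact ENNReal.inv_mul_cancel (by exact_mod_cast hn.ne') (ENNReal.natCast_ne_top n)

lemma avgM_comp_perm {X : Type*} [MeasurableSpace X] {n : ℕ} (x : Fin n → X)
    (σ : Equiv.Perm (Fin n)) : avgM n (x ∘ σ) = avgM n x := by
  unfold avgM
  congr 1
  exact Equiv.sum_comp σ (fun i => Measure.dirac (x i))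

open scoped Classical in
lemma avgM_singleton {X : Type*} [MeasurableSpace X] [MeasurableSingletonClass X]
    {n : ℕ} (x : Fin n → X) (a : X) :
    avgM n x {a} = (n : ℝ≥0∞)⁻¹ *
      ((Finset.univ.filter (fun i => x i = a)).card : ℝ≥0∞) := by
  simp only [avgM, Measure.smul_apply, smul_eq_mul, Measure.coe_finset_sum, Finset.sum_apply]
  congr 1
  rw [← Finset.sum_boole]
  refine Finset.sum_congr rfl fun i _ => ?_
  rw [Measure.dirac_apply' _ (measurableSet_singleton a)]
  simp [Set.indicator_apply]

open scoped Classical in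
lemma avgM_eq_perm {X : Type*} [MeasurableSpace X] [MeasurableSingletonClass X]
    {n : ℕ} (hn : 0 < n) {x x' : Fin n → X} (h : avgM n x = avgM n x') :
    ∃ σ : Equiv.Perm (Fin n), x' = x ∘ σ := by
  apply ofFn_perm
  have hcard : ∀ a, (Finset.univ.filter (fun i => x i = a)).card
      = (Finset.univ.filter (fun i => x' i = a)).card := by
    intro a
    have h1 : avgM n x {a} = avgM n x' {a} := by rw [h]
    rw [avgM_singleton, avgM_singleton] at h1
    have h2 := (ENNReal.mul_right_inj
      (by simp : (n : ℝ≥0∞)⁻¹ ≠ 0) (by simp [hn.ne'] : (n : ℝ≥0∞)⁻¹ ≠ ∞)).mp h1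
    exact_mod_cast h2
  -- list perm from counts
  rw [← Multiset.coe_eq_coe]
  have hx : ∀ (y : Fin n → X), (↑(List.ofFn y) : Multiset X) = Multiset.map y Finset.univ.val := by
    intro y
    rw [List.ofFn_eq_map, Fin.univ_def]
    rfl
  rw [hx, hx]
  ext a
  rw [Multiset.count_map, Multiset.count_map]
  have hc : ∀ (y : Fin n → X), Multiset.card (Multiset.filter (fun i => a = y i) Finset.univ.val)
      = (Finset.univ.filter (fun i => y i = a)).card := by
    intro y
    rw [Finset.card_def, Finset.filter_val]
    congr 1
    apply Multiset.filter_congr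
    intro b _
    constructor <;> (intro hh; exact hh.symm)
  rw [hc, hc, hcard]

noncomputable def avgPM {X : Type*} [MeasurableSpace X] {n : ℕ} (hn : 0 < n)
    (x : Fin n → X) : ProbabilityMeasure X := ⟨avgM n x, avgM_isProb hn x⟩

lemma continuous_avgPM {X : Type*} [MeasurableSpace X] [TopologicalSpace X]
    [OpensMeasurableSpace X] {n : ℕ} (hn : 0 < n) :
    Continuous (avgPM (X := X) hn) := by
  rw [continuous_iff_continuousAt]
  intro x₀
  unfold ContinuousAt
  rw [ProbabilityMeasure.tendsto_iff_forall_lintegral_tendsto]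
  intro f
  have hlint : ∀ x : Fin n → X, ∫⁻ ω, (f ω : ℝ≥0∞) ∂(avgPM hn x : Measure X)
      = (n : ℝ≥0∞)⁻¹ * ∑ i : Fin n, (f (x i) : ℝ≥0∞) := by
    intro x
    show ∫⁻ ω, (f ω : ℝ≥0∞) ∂(avgM n x) = _
    rw [avgM, lintegral_smul_measure, lintegral_finset_sum_measure]
    congr 1
    refine Finset.sum_congr rfl fun i _ => ?_
    exact lintegral_dirac' _ (ENNReal.continuous_coe.comp f.continuous).measurable
  simp only [hlint]
  refine ENNReal.Tendsto.const_mul ?_ (Or.inr (by simp [hn.ne']))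
  refine tendsto_finset_sum _ fun i _ => ?_
  exact ((ENNReal.continuous_coe.comp (f.continuous.comp (continuous_apply i))).tendsto x₀)

theorem stmt13 {X Y : Type*}
    [MetricSpace X] [CompactSpace X] [MeasurableSpace X] [BorelSpace X]
    [MetricSpace Y] [CompactSpace Y] [MeasurableSpace Y] [BorelSpace Y]
    (π : X → Y) (hπc : Continuous π) (hπs : Function.Surjective π)
    (hopen : IsOpenMap π) :
    ∀ n : ℕ, 0 < n → IsOpenMap (pushMn π hπc.measurable n) := by
  intro n hn U hU
  let QX : (Fin n → X) → ↥(Mn X n) := fun x => ⟨avgPM hn x, x, rfl⟩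
  let QY : (Fin n → Y) → ↥(Mn Y n) := fun y => ⟨avgPM hn y, y, rfl⟩
  have hQXc : Continuous QX := (continuous_avgPM hn).subtype_mk _
  have hQYc : Continuous QY := (continuous_avgPM hn).subtype_mk _
  have hQXsurj : Function.Surjective QX := by
    rintro ⟨μ, x, hx⟩
    exact ⟨x, Subtype.ext (ProbabilityMeasure.toMeasure_injective hx.symm)⟩
  have hQYsurj : Function.Surjective QY := by
    rintro ⟨μ, y, hy⟩
    exact ⟨y, Subtype.ext (ProbabilityMeasure.toMeasure_injective hy.symm)⟩
  have hquot : IsQuotientMap QY := (hQYc.isClosedMap).isQuotientMap hQYc hQYsurj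
  set V : Set (Fin n → Y) := (fun x => π ∘ x) '' (QX ⁻¹' U) with hV
  have hVopen : IsOpen V := by
    have he : (fun x : Fin n → X => π ∘ x) = Pi.map (fun _ : Fin n => π) := rfl
    rw [hV, he]
    exact (IsOpenMap.piMap (fun _ => hopen) (Eventually.of_forall fun _ => hπs)) _
      (hU.preimage hQXc)
  have hpush : ∀ x : Fin n → X, pushMn π hπc.measurable n (QX x) = QY (π ∘ x) := by
    intro x
    apply Subtype.ext
    apply ProbabilityMeasure.toMeasure_injective
    show Measure.map π (avgM n x) = avgM n (π ∘ x)
    exact map_avgDirac π hπc.measurable n x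
  have himg : pushMn π hπc.measurable n '' U = QY '' V := by
    ext ν
    constructor
    · rintro ⟨μ, hμU, rfl⟩
      obtain ⟨x, rfl⟩ := hQXsurj μ
      exact ⟨π ∘ x, ⟨x, hμU, rfl⟩, (hpush x).symm⟩
    · rintro ⟨y, ⟨x, hxU, rfl⟩, rfl⟩
      exact ⟨QX x, hxU, hpush x⟩
  have hsat : QY ⁻¹' (QY '' V) = V := by
    apply Set.Subset.antisymm
    · rintro y' hy'
      obtain ⟨y, ⟨x, hxU, rfl⟩, hQ⟩ := hy'
      have hm : avgM n (π ∘ x) = avgM n y' := by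
        exact congrArg (fun μ : ↥(Mn Y n) => μ.1.toMeasure) hQ
      obtain ⟨σ, hσ⟩ := avgM_eq_perm hn hm
      refine ⟨x ∘ σ, ?_, ?_⟩
      · show QX (x ∘ σ) ∈ U
        have heq : QX (x ∘ σ) = QX x :=
          Subtype.ext (ProbabilityMeasure.toMeasure_injective (avgM_comp_perm x σ))
        rw [heq]; exact hxU
      · rw [hσ]; rfl
    · exact Set.subset_preimage_image _ _
  rw [himg, ← hquot.isOpen_preimage, hsat]
  exact hVopen
end

section
/- Let π: X → Y be a surjective continuous map between two compact metrizable spaces. If there exists n ∈ ℕ such that the restriction π̃_n: M_n(X) → M_n(Y) of the induced map π̃: M(X) → M(Y) is open, then π is open. -/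
open MeasureTheory Topology Filter Set
open scoped ENNReal NNReal

lemma aux_isOpen_pos {X : Type*} [MetricSpace X] [CompactSpace X] [MeasurableSpace X]
    [BorelSpace X] {U : Set X} (hU : IsOpen U) :
    IsOpen {μ : ProbabilityMeasure X | 0 < μ.toMeasure U} := by
  rw [← isClosed_compl_iff]
  have hset : {μ : ProbabilityMeasure X | 0 < μ.toMeasure U}ᶜ
      = {μ : ProbabilityMeasure X | μ.toMeasure U = 0} := by
    ext μ
    simp [pos_iff_ne_zero, not_not]
  rw [hset]
  apply IsSeqClosed.isClosed
  intro μs μ hmem hlim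
  have h := MeasureTheory.ProbabilityMeasure.le_liminf_measure_open_of_tendsto hlim hU
  have hzero : (Filter.atTop.liminf fun i ↦ (μs i).toMeasure U) = 0 := by
    have : (fun i ↦ (μs i).toMeasure U) = fun _ ↦ (0 : ℝ≥0∞) := funext fun i ↦ hmem i
    rw [this, Filter.liminf_const]
  rw [hzero] at h
  exact le_antisymm h zero_le

/-- The map `y ↦ (1/n)∑ δ_y` as an element of `Mn Y n`. -/
noncomputable def avgDiracMn {Y : Type*} [MeasurableSpace Y] (n : ℕ) (hn : 0 < n) (y : Y) :
    Mn Y n := by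
  refine ⟨diracProba y, fun _ => y, ?_⟩
  show Measure.dirac y = _
  have h1 : (∑ _i : Fin n, Measure.dirac y) = (n : ℝ≥0∞) • Measure.dirac y := by
    rw [Finset.sum_const, Finset.card_univ, Fintype.card_fin,
      ← Nat.cast_smul_eq_nsmul ℝ≥0∞]
  rw [h1, smul_smul, ENNReal.inv_mul_cancel (by exact_mod_cast hn.ne') (by simp), one_smul]

theorem stmt14 {X Y : Type*}
    [MetricSpace X] [CompactSpace X] [MeasurableSpace X] [BorelSpace X]
    [MetricSpace Y] [CompactSpace Y] [MeasurableSpace Y] [BorelSpace Y]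
    (π : X → Y) (hπc : Continuous π) (hπs : Function.Surjective π)
    (hopen : ∃ n : ℕ, 0 < n ∧ IsOpenMap (pushMn π hπc.measurable n)) :
    IsOpenMap π := by
  obtain ⟨n, hn, hmap⟩ := hopen
  intro U hU
  rw [isOpen_iff_forall_mem_open]
  rintro y₀ ⟨x, hxU, rfl⟩
  -- the open set V of measures in Mn X n giving positive mass to U
  set V : Set (Mn X n) := Subtype.val ⁻¹' {μ : ProbabilityMeasure X | 0 < μ.toMeasure U}
    with hV
  have hVopen : IsOpen V := (aux_isOpen_pos hU).preimage continuous_subtype_val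
  have hWopen : IsOpen (pushMn π hπc.measurable n '' V) := hmap V hVopen
  -- the continuous embedding of Y into Mn Y n
  have he : Continuous (avgDiracMn n hn : Y → Mn Y n) :=
    Continuous.subtype_mk continuous_diracProba _
  refine ⟨avgDiracMn n hn ⁻¹' (pushMn π hπc.measurable n '' V), ?_, he.isOpen_preimage _ hWopen, ?_⟩
  · -- this preimage is contained in π '' U
    rintro y ⟨ν, hνV, hνy⟩
    obtain ⟨xv, hxv⟩ := ν.2
    have hpos : 0 < ν.1.toMeasure U := hνV
    -- find an atom of ν in U
    have hex : ∃ i : Fin n, xv i ∈ U := by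
      by_contra hcon
      push_neg at hcon
      have : ν.1.toMeasure U = 0 := by
        rw [hxv, Measure.smul_apply, Measure.finset_sum_apply, smul_eq_mul]
        have : ∀ i ∈ Finset.univ, Measure.dirac (xv i) U = 0 := by
          intro i _
          rw [Measure.dirac_apply' _ hU.measurableSet, Set.indicator_of_notMem (hcon i)]
        rw [Finset.sum_eq_zero this, mul_zero]
      rw [this] at hpos; exact lt_irrefl _ hpos
    obtain ⟨i, hi⟩ := hex
    -- the pushforward of ν equals δ_y, so every π (xv j) = y
    have hmeas : Measure.map π ν.1.toMeasure = Measure.dirac y := by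
      have := congrArg (fun μ : Mn Y n => μ.1.toMeasure) hνy
      exact this
    have hsum : ((n : ℝ≥0∞)⁻¹ • ∑ j : Fin n, Measure.dirac (π (xv j))) = Measure.dirac y := by
      rw [← map_avgDirac π hπc.measurable n xv, ← hxv, hmeas]
    have hcompl : ((n : ℝ≥0∞)⁻¹ • ∑ j : Fin n, Measure.dirac (π (xv j))) ({y}ᶜ) = 0 := by
      rw [hsum, Measure.dirac_apply' _ (measurableSet_singleton y).compl,
        Set.indicator_of_notMem (by simp)]
    have hπxy : π (xv i) = y := by
      by_contra hne
      rw [Measure.smul_apply, Measure.finset_sum_apply, smul_eq_mul] at hcompl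
      rcases mul_eq_zero.mp hcompl with h | h
      · exact (ENNReal.inv_ne_zero.mpr (by simp)) h
      · have := (Finset.sum_eq_zero_iff.mp h) i (Finset.mem_univ i)
        rw [Measure.dirac_apply' _ (measurableSet_singleton y).compl,
          Set.indicator_of_mem (by simpa using hne)] at this
        simp at this
    exact ⟨xv i, hi, hπxy⟩
  · -- π x maps into the image
    refine ⟨avgDiracMn n hn x, ?_, ?_⟩
    · show 0 < (diracProba x).toMeasure U
      rw [diracProba_toMeasure_apply_of_mem hxU]
      exact zero_lt_one
    · apply Subtype.ext
      apply Subtype.ext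
      show Measure.map π (Measure.dirac x) = Measure.dirac (π x)
      exact Measure.map_dirac' hπc.measurable x
end
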